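/- arXiv:1602.07751 — 2 statements merged into one kernel-verified Lean document; each statement's English description precedes it below -/
import Mathlib

section
/- 𝒫^fd is a nonempty compact subset of [0,1]^{𝒜×𝒜_ℒ⁰} endowed with the product topology of pointwise convergence. -/
open Set

open scoped Classical

variable {Ω : Type*}

/-- A field of sets on `Ω`: contains `univ`, closed under complements and finite unions. -/
def IsSetField (𝒜 : Set (Set Ω)) : Prop :=
  Set.univ ∈ 𝒜 ∧ (∀ A ∈ 𝒜, Aᶜ ∈ 𝒜) ∧ ∀ A ∈ 𝒜, ∀ B ∈ 𝒜, A ∪ B ∈ 𝒜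

/-- A finitely additive probability on the field `𝒜`. -/
def IsFAP (𝒜 : Set (Set Ω)) (P : Set Ω → ℝ) : Prop :=
  (∀ A ∈ 𝒜, 0 ≤ P A ∧ P A ≤ 1) ∧ P Set.univ = 1 ∧
    ∀ A ∈ 𝒜, ∀ B ∈ 𝒜, Disjoint A B → P (A ∪ B) = P A + P B

/-- A partition of `Ω` into nonempty pairwise disjoint pieces. -/
def IsPartition {ι : Type*} (H : ι → Set Ω) : Prop :=
  (∀ i, (H i).Nonempty) ∧ (Pairwise fun i j => Disjoint (H i) (H j)) ∧
    (⋃ i, H i) = Set.univ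

/-- A field containing every member of the partition `H` and whose members are
unions of members of the partition. -/
def IsFieldOver {ι : Type*} (H : ι → Set Ω) (𝒜L : Set (Set Ω)) : Prop :=
  IsSetField 𝒜L ∧ (∀ i, H i ∈ 𝒜L) ∧ ∀ A ∈ 𝒜L, ∃ S : Set ι, A = ⋃ i ∈ S, H i

/-- A field containing `𝒜L ∪ 𝒜E` whose members are unions of the atoms `H i ∩ E j`. -/
def IsJointField {ι κ : Type*} (H : ι → Set Ω) (E : κ → Set Ω)
    (𝒜L 𝒜E 𝒜 : Set (Set Ω)) : Prop :=
  IsSetField 𝒜 ∧ 𝒜L ⊆ 𝒜 ∧ 𝒜E ⊆ 𝒜 ∧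
    ∀ A ∈ 𝒜, ∃ S : Set (ι × κ), A = ⋃ p ∈ S, H p.1 ∩ E p.2

/-- A strategy on `𝒜 × ℒ`: each `σ (·|H i)` is a finitely additive probability on `𝒜`
equal to `1` on events implied by `H i`. -/
def IsStrategy {ι : Type*} (𝒜 : Set (Set Ω)) (H : ι → Set Ω) (σ : Set Ω → ι → ℝ) : Prop :=
  ∀ i, IsFAP 𝒜 (fun F => σ F i) ∧ ∀ F ∈ 𝒜, H i ⊆ F → σ F i = 1

/-- A full conditional probability on the field `𝒜` (conditions (C1), (C2), (C3)). -/
def IsFCP (𝒜 : Set (Set Ω)) (P : Set Ω → Set Ω → ℝ) : Prop :=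
  (∀ E ∈ 𝒜, ∀ K ∈ 𝒜, K.Nonempty → P E K = P (E ∩ K) K) ∧
  (∀ K ∈ 𝒜, K.Nonempty → IsFAP 𝒜 fun E => P E K) ∧
  ∀ E ∈ 𝒜, ∀ F ∈ 𝒜, ∀ K ∈ 𝒜, K.Nonempty → (E ∩ K).Nonempty →
    P (E ∩ F) K = P E K * P F (E ∩ K)

/-- `P` extends the prior `π` on `𝒜L` and the strategy `σ` on `𝒜 × ℒ`. -/
def ExtendsPriorStrategy {ι : Type*} (𝒜 𝒜L : Set (Set Ω)) (H : ι → Set Ω)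
    (π : Set Ω → ℝ) (σ : Set Ω → ι → ℝ) (P : Set Ω → Set Ω → ℝ) : Prop :=
  (∀ B ∈ 𝒜L, P B Set.univ = π B) ∧ ∀ F ∈ 𝒜, ∀ i, P F (H i) = σ F i

/-- The set `𝒫` of full conditional probabilities on `𝒜` extending `{π, σ}`. -/
def FCPSet {ι : Type*} (𝒜 𝒜L : Set (Set Ω)) (H : ι → Set Ω)
    (π : Set Ω → ℝ) (σ : Set Ω → ι → ℝ) : Set (Set Ω → Set Ω → ℝ) :=
  {P | IsFCP 𝒜 P ∧ ExtendsPriorStrategy 𝒜 𝒜L H π σ P}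

/-- Lower envelope of a set of conditional probabilities at `F|K`. -/
noncomputable def lowEnv (Ps : Set (Set Ω → Set Ω → ℝ)) (F K : Set Ω) : ℝ :=
  sInf ((fun P => P F K) '' Ps)

/-- Upper envelope of a set of conditional probabilities at `F|K`. -/
noncomputable def upEnv (Ps : Set (Set Ω → Set Ω → ℝ)) (F K : Set Ω) : ℝ :=
  sSup ((fun P => P F K) '' Ps)

/-- A finite partition of `Ω` contained in `𝒜L`. -/
def IsFinPart (𝒜L : Set (Set Ω)) (T : Finset (Set Ω)) : Prop :=
  (↑T : Set (Set Ω)) ⊆ 𝒜L ∧ (∀ A ∈ T, (A : Set Ω).Nonempty) ∧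
    (∀ A ∈ T, ∀ B ∈ T, A ≠ B → Disjoint A B) ∧ ⋃₀ (↑T : Set (Set Ω)) = Set.univ

/-- Lower Stieltjes integral of `X : ℒ → ℝ` with respect to `μ` on `𝒜L`. -/
noncomputable def lowerSInt {ι : Type*} (H : ι → Set Ω) (𝒜L : Set (Set Ω))
    (X : ι → ℝ) (μ : Set Ω → ℝ) : ℝ :=
  sSup {x | ∃ T : Finset (Set Ω), IsFinPart 𝒜L T ∧
    x = ∑ A ∈ T, sInf {y | ∃ i, H i ⊆ A ∧ y = X i} * μ A}

/-- Upper Stieltjes integral of `X : ℒ → ℝ` with respect to `μ` on `𝒜L`. -/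
noncomputable def upperSInt {ι : Type*} (H : ι → Set Ω) (𝒜L : Set (Set Ω))
    (X : ι → ℝ) (μ : Set Ω → ℝ) : ℝ :=
  sInf {x | ∃ T : Finset (Set Ω), IsFinPart 𝒜L T ∧
    x = ∑ A ∈ T, sSup {y | ∃ i, H i ⊆ A ∧ y = X i} * μ A}

/-- `𝒜L`-continuity of a bounded function `X : ℒ → ℝ`. -/
def ALContinuous {ι : Type*} (H : ι → Set Ω) (𝒜L : Set (Set Ω)) (X : ι → ℝ) : Prop :=
  (∃ M : ℝ, ∀ i, |X i| ≤ M) ∧ ∀ t : ℝ, ∀ ε > (0 : ℝ), ∃ A ∈ 𝒜L,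
    (⋃ i ∈ {i | t + ε ≤ X i}, H i) ⊆ A ∧ A ⊆ ⋃ i ∈ {i | t ≤ X i}, H i

/-- Countable additivity of `P` on the field `𝒜`. -/
def CountablyAdditiveOn (𝒜 : Set (Set Ω)) (P : Set Ω → ℝ) : Prop :=
  ∀ A : ℕ → Set Ω, (∀ n, A n ∈ 𝒜) → (Pairwise fun m n => Disjoint (A m) (A n)) →
    (⋃ n, A n) ∈ 𝒜 → HasSum (fun n => P (A n)) (P (⋃ n, A n))

/-- A (normalized) capacity on the field `𝒜`. -/
def IsCapacity (𝒜 : Set (Set Ω)) (φ : Set Ω → ℝ) : Prop :=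
  φ ∅ = 0 ∧ φ Set.univ = 1 ∧ (∀ A ∈ 𝒜, 0 ≤ φ A ∧ φ A ≤ 1) ∧
    ∀ A ∈ 𝒜, ∀ B ∈ 𝒜, A ⊆ B → φ A ≤ φ B

/-- Total monotonicity of a capacity `φ` on the field `𝒜`. -/
def TotallyMonotone (𝒜 : Set (Set Ω)) (φ : Set Ω → ℝ) : Prop :=
  ∀ n : ℕ, 2 ≤ n → ∀ A : Fin n → Set Ω, (∀ i, A i ∈ 𝒜) →
    ∑ s ∈ Finset.univ.powerset.filter (fun s : Finset (Fin n) => s.Nonempty),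
      (-1 : ℝ) ^ (s.card - 1) * φ (⋂ i ∈ s, A i) ≤ φ (⋃ i, A i)

/-- Restriction of a conditional probability to the domain `𝒜 × ℬ⁰`, viewed as a point
of the product space `ℝ^(𝒜 × ℬ⁰)`. -/
def restrictPairs (𝒜 ℬ : Set (Set Ω)) (Q : Set Ω → Set Ω → ℝ)
    (p : {p : Set Ω × Set Ω // p.1 ∈ 𝒜 ∧ p.2 ∈ ℬ ∧ p.2.Nonempty}) : ℝ :=
  Q p.val.1 p.val.2

/-- Restriction of a set function to the domain `𝒜`, viewed as a point of `ℝ^𝒜`. -/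
def restrictDom (𝒜 : Set (Set Ω)) (μ : Set Ω → ℝ) (A : {A : Set Ω // A ∈ 𝒜}) : ℝ :=
  μ A.val

/-- The field of all unions of members of the partition `H`, i.e. `⟨ℒ⟩*`. -/
def unionsOf {ι : Type*} (H : ι → Set Ω) : Set (Set Ω) :=
  {A | ∃ S : Set ι, A = ⋃ i ∈ S, H i}

/-- The set `𝒬^fd` of fully ℒ-disintegrable full conditional probabilities on `𝒜`
extending `{π, σ}`. -/
def QfdSet {ι : Type*} (𝒜 𝒜L : Set (Set Ω)) (H : ι → Set Ω)
    (π : Set Ω → ℝ) (σ : Set Ω → ι → ℝ) : Set (Set Ω → Set Ω → ℝ) :=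
  {Q | IsFCP 𝒜 Q ∧ ExtendsPriorStrategy 𝒜 𝒜L H π σ Q ∧
    ∀ F ∈ 𝒜, ∀ K ∈ 𝒜L, K.Nonempty →
      Q F K = lowerSInt H 𝒜L (fun i => σ F i) fun B => Q B K}

/-- The set `𝒬^fsc` of fully strongly ℒ-conglomerable full conditional probabilities
on `𝒜` extending `{π, σ}`. -/
def QfscSet {ι : Type*} (𝒜 𝒜L : Set (Set Ω)) (H : ι → Set Ω)
    (π : Set Ω → ℝ) (σ : Set Ω → ι → ℝ) : Set (Set Ω → Set Ω → ℝ) :=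
  {Q | IsFCP 𝒜 Q ∧ ExtendsPriorStrategy 𝒜 𝒜L H π σ Q ∧
    ∀ F ∈ 𝒜, ∀ K ∈ 𝒜L, K.Nonempty → ∀ B ∈ 𝒜L, B.Nonempty → B ⊆ K →
      Q B K * sInf {x | ∃ i, H i ⊆ B ∧ x = σ F i} ≤ Q (F ∩ B) K ∧
      Q (F ∩ B) K ≤ Q B K * sSup {x | ∃ i, H i ⊆ B ∧ x = σ F i}}

/-- The set `𝒫^sc` of strongly ℒ-conglomerable joint probabilities consistent with `{π, σ}`. -/
def PscSet {ι : Type*} (𝒜 𝒜L : Set (Set Ω)) (H : ι → Set Ω)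
    (π : Set Ω → ℝ) (σ : Set Ω → ι → ℝ) : Set (Set Ω → ℝ) :=
  {μ | (∃ P ∈ FCPSet 𝒜 𝒜L H π σ, μ = fun F => P F Set.univ) ∧
    ∀ F ∈ 𝒜, ∀ B ∈ 𝒜L, B.Nonempty →
      π B * sInf {x | ∃ i, H i ⊆ B ∧ x = σ F i} ≤ μ (F ∩ B) ∧
      μ (F ∩ B) ≤ π B * sSup {x | ∃ i, H i ⊆ B ∧ x = σ F i}}

/-- The set `𝒫^fd` of fully ℒ-disintegrable conditional probabilities on `𝒜 × 𝒜L⁰`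
extending `{π, σ}`. -/
def PfdSet {ι : Type*} (𝒜 𝒜L : Set (Set Ω)) (H : ι → Set Ω)
    (π : Set Ω → ℝ) (σ : Set Ω → ι → ℝ) : Set (Set Ω → Set Ω → ℝ) :=
  {P | (∀ E ∈ 𝒜, ∀ K ∈ 𝒜L, K.Nonempty → P E K = P (E ∩ K) K) ∧
    (∀ K ∈ 𝒜L, K.Nonempty → IsFAP 𝒜 fun E => P E K) ∧
    (∀ E ∈ 𝒜, ∀ F ∈ 𝒜, ∀ K ∈ 𝒜L, K.Nonempty → E ∩ K ∈ 𝒜L → (E ∩ K).Nonempty →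
      P (E ∩ F) K = P E K * P F (E ∩ K)) ∧
    (∀ B ∈ 𝒜L, P B Set.univ = π B) ∧ (∀ F ∈ 𝒜, ∀ i, P F (H i) = σ F i) ∧
    ∀ F ∈ 𝒜, ∀ K ∈ 𝒜L, K.Nonempty →
      P F K = lowerSInt H 𝒜L (fun i => σ F i) fun B => P B K}

/-- The Choquet integral `C∫ X dφ = ∫₀¹ φ₊((X ≥ t)) dt` of a `[0,1]`-valued `X : ℒ → ℝ`
with respect to a capacity `φ` on `𝒜L`, where `φ₊` is the inner extension of `φ`. -/
noncomputable def choquetInt {ι : Type*} (H : ι → Set Ω) (𝒜L : Set (Set Ω))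
    (X : ι → ℝ) (φ : Set Ω → ℝ) : ℝ :=
  ∫ t in (0 : ℝ)..(1 : ℝ),
    sSup {y | ∃ B ∈ 𝒜L, B ⊆ (⋃ i ∈ {i | t ≤ X i}, H i) ∧ y = φ B}

namespace St16

variable {Ω : Type*} {ι : Type*}

/-! ### Basic field and FAP lemmas -/

lemma SF.empty {𝒜 : Set (Set Ω)} (h : IsSetField 𝒜) : (∅ : Set Ω) ∈ 𝒜 := by
  have := h.2.1 _ h.1; simpa using this

lemma SF.inter {𝒜 : Set (Set Ω)} (h : IsSetField 𝒜) {A B : Set Ω}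
    (hA : A ∈ 𝒜) (hB : B ∈ 𝒜) : A ∩ B ∈ 𝒜 := by
  have := h.2.1 _ (h.2.2 _ (h.2.1 _ hA) _ (h.2.1 _ hB))
  simpa [Set.compl_union] using this

lemma SF.diff {𝒜 : Set (Set Ω)} (h : IsSetField 𝒜) {A B : Set Ω}
    (hA : A ∈ 𝒜) (hB : B ∈ 𝒜) : A \ B ∈ 𝒜 := by
  have := SF.inter h hA (h.2.1 _ hB); simpa [Set.diff_eq] using this

lemma FAP.nonneg {𝒜 : Set (Set Ω)} {μ : Set Ω → ℝ} (h : IsFAP 𝒜 μ) {A : Set Ω}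
    (hA : A ∈ 𝒜) : 0 ≤ μ A := (h.1 A hA).1

lemma FAP.le_one {𝒜 : Set (Set Ω)} {μ : Set Ω → ℝ} (h : IsFAP 𝒜 μ) {A : Set Ω}
    (hA : A ∈ 𝒜) : μ A ≤ 1 := (h.1 A hA).2

lemma FAP.empty {𝒜 : Set (Set Ω)} {μ : Set Ω → ℝ} (hF : IsSetField 𝒜) (h : IsFAP 𝒜 μ) :
    μ ∅ = 0 := by
  have := h.2.2 ∅ (SF.empty hF) ∅ (SF.empty hF) (by simp)
  simp at this; linarith

lemma FAP.mono {𝒜 : Set (Set Ω)} {μ : Set Ω → ℝ} (hF : IsSetField 𝒜) (h : IsFAP 𝒜 μ)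
    {A B : Set Ω} (hA : A ∈ 𝒜) (hB : B ∈ 𝒜) (hAB : A ⊆ B) : μ A ≤ μ B := by
  have hd : B \ A ∈ 𝒜 := SF.diff hF hB hA
  have hadd := h.2.2 A hA (B \ A) hd disjoint_sdiff_right
  have hu : A ∪ B \ A = B := Set.union_diff_cancel hAB
  rw [hu] at hadd
  have := FAP.nonneg h hd; linarith

lemma FAP.compl {𝒜 : Set (Set Ω)} {μ : Set Ω → ℝ} (hF : IsSetField 𝒜) (h : IsFAP 𝒜 μ)
    {A : Set Ω} (hA : A ∈ 𝒜) : μ Aᶜ = 1 - μ A := by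
  have hadd := h.2.2 A hA Aᶜ (hF.2.1 _ hA) disjoint_compl_right
  rw [Set.union_compl_self] at hadd
  rw [h.2.1] at hadd; linarith

/-- Finite additivity over a finite family with pairwise disjoint values. -/
lemma FAP.sum_biUnion {𝒜 : Set (Set Ω)} {μ : Set Ω → ℝ} (hF : IsSetField 𝒜) (h : IsFAP 𝒜 μ)
    {β : Type*} [DecidableEq β] (s : Finset β) (f : β → Set Ω)
    (hmem : ∀ b ∈ s, f b ∈ 𝒜)
    (hdisj : ∀ b ∈ s, ∀ c ∈ s, b ≠ c → Disjoint (f b) (f c)) :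
    (⋃ b ∈ s, f b) ∈ 𝒜 ∧ μ (⋃ b ∈ s, f b) = ∑ b ∈ s, μ (f b) := by
  classical
  induction s using Finset.induction_on with
  | empty => exact ⟨by simpa using SF.empty hF, by simpa using FAP.empty hF h⟩
  | @insert a s ha ih =>
    have hmem' : ∀ b ∈ s, f b ∈ 𝒜 := fun b hb => hmem b (Finset.mem_insert_of_mem hb)
    have hdisj' : ∀ b ∈ s, ∀ c ∈ s, b ≠ c → Disjoint (f b) (f c) :=
      fun b hb c hc => hdisj b (Finset.mem_insert_of_mem hb) c (Finset.mem_insert_of_mem hc)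
    obtain ⟨hm, hs⟩ := ih hmem' hdisj'
    have hfa : f a ∈ 𝒜 := hmem a (Finset.mem_insert_self a s)
    have hU : (⋃ b ∈ insert a s, f b) = f a ∪ ⋃ b ∈ s, f b := by
      simp [Finset.set_biUnion_insert]
    have hd : Disjoint (f a) (⋃ b ∈ s, f b) := by
      rw [Set.disjoint_iUnion_right]
      intro b; rw [Set.disjoint_iUnion_right]; intro hb
      exact hdisj a (Finset.mem_insert_self a s) b (Finset.mem_insert_of_mem hb)
        (fun hab => ha (hab ▸ hb))
    constructor
    · rw [hU]; exact hF.2.2 _ hfa _ hm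
    · rw [hU, h.2.2 _ hfa _ hm hd, hs, Finset.sum_insert ha]

/-! ### Partition / field-over lemmas -/

/-- Each atom is either inside or disjoint from a member of the field. -/
lemma atom_subset_or_disjoint {H : ι → Set Ω} {𝒜L : Set (Set Ω)}
    (hH : IsPartition H) (h𝒜L : IsFieldOver H 𝒜L) {A : Set Ω} (hA : A ∈ 𝒜L) (i : ι) :
    H i ⊆ A ∨ Disjoint (H i) A := by
  obtain ⟨S, rfl⟩ := h𝒜L.2.2 A hA
  by_cases hi : i ∈ S
  · left; exact Set.subset_biUnion_of_mem hi
  · right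
    rw [Set.disjoint_iUnion_right]; intro j; rw [Set.disjoint_iUnion_right]; intro hj
    refine hH.2.1 (fun hij : i = j => hi (hij ▸ hj))

lemma exists_atom_subset {H : ι → Set Ω} {𝒜L : Set (Set Ω)}
    (h𝒜L : IsFieldOver H 𝒜L) {A : Set Ω} (hA : A ∈ 𝒜L) (hne : A.Nonempty) :
    ∃ i, H i ⊆ A := by
  obtain ⟨S, rfl⟩ := h𝒜L.2.2 A hA
  obtain ⟨x, hx⟩ := hne
  simp only [Set.mem_iUnion] at hx
  obtain ⟨i, hi, _⟩ := hx
  exact ⟨i, Set.subset_biUnion_of_mem hi⟩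

lemma subset_of_atoms_subset {H : ι → Set Ω} {𝒜L : Set (Set Ω)}
    (h𝒜L : IsFieldOver H 𝒜L) {A B : Set Ω} (hA : A ∈ 𝒜L)
    (h : ∀ i, H i ⊆ A → H i ⊆ B) : A ⊆ B := by
  obtain ⟨S, rfl⟩ := h𝒜L.2.2 A hA
  intro x hx
  simp only [Set.mem_iUnion] at hx
  obtain ⟨i, hi, hxi⟩ := hx
  exact h i (Set.subset_biUnion_of_mem hi) hxi

end St16
namespace St16

variable {Ω : Type*} {ι : Type*}

/-! ### Stieltjes sums -/

def vals (H : ι → Set Ω) (X : ι → ℝ) (A : Set Ω) : Set ℝ := {y | ∃ i, H i ⊆ A ∧ y = X i}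

noncomputable def lowSum (H : ι → Set Ω) (X : ι → ℝ) (μ : Set Ω → ℝ)
    (T : Finset (Set Ω)) : ℝ := ∑ A ∈ T, sInf (vals H X A) * μ A

noncomputable def upSum (H : ι → Set Ω) (X : ι → ℝ) (μ : Set Ω → ℝ)
    (T : Finset (Set Ω)) : ℝ := ∑ A ∈ T, sSup (vals H X A) * μ A

lemma lowerSInt_eq (H : ι → Set Ω) (𝒜L : Set (Set Ω)) (X : ι → ℝ) (μ : Set Ω → ℝ) :
    lowerSInt H 𝒜L X μ = sSup {x | ∃ T, IsFinPart 𝒜L T ∧ x = lowSum H X μ T} := rfl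

lemma upperSInt_eq (H : ι → Set Ω) (𝒜L : Set (Set Ω)) (X : ι → ℝ) (μ : Set Ω → ℝ) :
    upperSInt H 𝒜L X μ = sInf {x | ∃ T, IsFinPart 𝒜L T ∧ x = upSum H X μ T} := rfl

section Main
set_option linter.unusedSectionVars false

variable [Nonempty Ω] {H : ι → Set Ω} {𝒜L : Set (Set Ω)} {X : ι → ℝ} {μ : Set Ω → ℝ}
variable (hH : IsPartition H) (hL : IsFieldOver H 𝒜L)
variable (hX : ∀ i, 0 ≤ X i ∧ X i ≤ 1) (hμ : IsFAP 𝒜L μ)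

lemma vals_mono {A B : Set Ω} (h : A ⊆ B) : vals H X A ⊆ vals H X B :=
  fun _ ⟨i, hi, hy⟩ => ⟨i, hi.trans h, hy⟩

include hL in
lemma vals_nonempty {A : Set Ω} (hA : A ∈ 𝒜L) (hne : A.Nonempty) :
    (vals H X A).Nonempty := by
  obtain ⟨i, hi⟩ := exists_atom_subset hL hA hne
  exact ⟨X i, i, hi, rfl⟩

include hX in
lemma vals_bdd {A : Set Ω} : ∀ y ∈ vals H X A, 0 ≤ y ∧ y ≤ 1 := by
  rintro y ⟨i, _, rfl⟩; exact hX i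

include hX in
lemma vals_bddBelow {A : Set Ω} : BddBelow (vals H X A) :=
  ⟨0, fun y hy => (vals_bdd hX y hy).1⟩

include hX in
lemma vals_bddAbove {A : Set Ω} : BddAbove (vals H X A) :=
  ⟨1, fun y hy => (vals_bdd hX y hy).2⟩

include hL hX in
lemma sInf_vals_mem {A : Set Ω} (hA : A ∈ 𝒜L) (hne : A.Nonempty) :
    0 ≤ sInf (vals H X A) ∧ sInf (vals H X A) ≤ 1 := by
  have h1 := vals_nonempty hL hA hne (X := X)
  constructor
  · exact le_csInf h1 fun y hy => (vals_bdd hX y hy).1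
  · obtain ⟨y, hy⟩ := h1
    exact le_trans (csInf_le (vals_bddBelow hX) hy) (vals_bdd hX y hy).2

include hL hX in
lemma sSup_vals_mem {A : Set Ω} (hA : A ∈ 𝒜L) (hne : A.Nonempty) :
    0 ≤ sSup (vals H X A) ∧ sSup (vals H X A) ≤ 1 := by
  have h1 := vals_nonempty hL hA hne (X := X)
  constructor
  · obtain ⟨y, hy⟩ := h1
    exact le_trans (vals_bdd hX y hy).1 (le_csSup (vals_bddAbove hX) hy)
  · exact csSup_le h1 fun y hy => (vals_bdd hX y hy).2

include hL hX in
lemma sInf_le_sSup_vals {A : Set Ω} (hA : A ∈ 𝒜L) (hne : A.Nonempty) :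
    sInf (vals H X A) ≤ sSup (vals H X A) :=
  csInf_le_csSup (vals_nonempty hL hA hne) (vals_bddBelow hX) (vals_bddAbove hX)

/-! ### Finite partitions -/

lemma finpart_univ (h𝒜L : IsFieldOver H 𝒜L) : IsFinPart 𝒜L ({Set.univ} : Finset (Set Ω)) := by
  refine ⟨by simp [h𝒜L.1.1], by simp [Set.univ_nonempty], ?_, by simp⟩
  intro A hA B hB hAB
  simp only [Finset.mem_singleton] at hA hB
  exact absurd (hA.trans hB.symm) hAB

lemma finpart_mem {T : Finset (Set Ω)} (hT : IsFinPart 𝒜L T) {A : Set Ω} (hA : A ∈ T) :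
    A ∈ 𝒜L := hT.1 hA

lemma finpart_biUnion_eq {T : Finset (Set Ω)} (hT : IsFinPart 𝒜L T) :
    (⋃ A ∈ T, A) = Set.univ := by
  have := hT.2.2.2; rwa [Set.sUnion_eq_biUnion] at this

include hL hμ in
lemma finpart_sum_one {T : Finset (Set Ω)} (hT : IsFinPart 𝒜L T) :
    ∑ A ∈ T, μ A = 1 := by
  classical
  have h := FAP.sum_biUnion hL.1 hμ T id (fun A hA => hT.1 hA)
    (fun A hA B hB hAB => hT.2.2.1 A hA B hB hAB)
  have h2 : (⋃ A ∈ T, (id A : Set Ω)) = Set.univ := finpart_biUnion_eq hT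
  rw [h2, hμ.2.1] at h
  exact h.2.symm

include hL hμ in
lemma finpart_μ_nonneg {T : Finset (Set Ω)} (hT : IsFinPart 𝒜L T) {A : Set Ω} (hA : A ∈ T) :
    0 ≤ μ A := FAP.nonneg hμ (hT.1 hA)

include hL hX hμ in
lemma lowSum_nonneg {T : Finset (Set Ω)} (hT : IsFinPart 𝒜L T) : 0 ≤ lowSum H X μ T := by
  refine Finset.sum_nonneg fun A hA => mul_nonneg ?_ (finpart_μ_nonneg hL hμ hT hA)
  exact (sInf_vals_mem hL hX (hT.1 hA) (hT.2.1 A hA)).1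

include hL hX hμ in
lemma lowSum_le_one {T : Finset (Set Ω)} (hT : IsFinPart 𝒜L T) : lowSum H X μ T ≤ 1 := by
  calc lowSum H X μ T ≤ ∑ A ∈ T, μ A := Finset.sum_le_sum fun A hA => by
        have := (sInf_vals_mem hL hX (hT.1 hA) (hT.2.1 A hA))
        nlinarith [finpart_μ_nonneg hL hμ hT hA]
    _ = 1 := finpart_sum_one hL hμ hT

include hL hX hμ in
lemma upSum_nonneg {T : Finset (Set Ω)} (hT : IsFinPart 𝒜L T) : 0 ≤ upSum H X μ T := by
  refine Finset.sum_nonneg fun A hA => mul_nonneg ?_ (finpart_μ_nonneg hL hμ hT hA)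
  exact (sSup_vals_mem hL hX (hT.1 hA) (hT.2.1 A hA)).1

include hL hX hμ in
lemma upSum_le_one {T : Finset (Set Ω)} (hT : IsFinPart 𝒜L T) : upSum H X μ T ≤ 1 := by
  calc upSum H X μ T ≤ ∑ A ∈ T, μ A := Finset.sum_le_sum fun A hA => by
        have := (sSup_vals_mem hL hX (hT.1 hA) (hT.2.1 A hA))
        nlinarith [finpart_μ_nonneg hL hμ hT hA]
    _ = 1 := finpart_sum_one hL hμ hT

include hL hX hμ in
lemma lowSum_le_upSum {T : Finset (Set Ω)} (hT : IsFinPart 𝒜L T) :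
    lowSum H X μ T ≤ upSum H X μ T :=
  Finset.sum_le_sum fun A hA => mul_le_mul_of_nonneg_right
    (sInf_le_sSup_vals hL hX (hT.1 hA) (hT.2.1 A hA)) (finpart_μ_nonneg hL hμ hT hA)

end Main
end St16
namespace St16
section Refine

variable {Ω : Type*} {ι : Type*}

/-- Like `IsFinPart` but allowing empty members. -/
def IsFinCover (𝒜L : Set (Set Ω)) (T : Finset (Set Ω)) : Prop :=
  (↑T : Set (Set Ω)) ⊆ 𝒜L ∧ (∀ A ∈ T, ∀ B ∈ T, A ≠ B → Disjoint A B) ∧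
    ⋃₀ (↑T : Set (Set Ω)) = Set.univ

lemma finpart_toCover {𝒜L : Set (Set Ω)} {T : Finset (Set Ω)} (h : IsFinPart 𝒜L T) :
    IsFinCover 𝒜L T := ⟨h.1, h.2.2.1, h.2.2.2⟩

lemma fincover_biUnion_eq {𝒜L : Set (Set Ω)} {T : Finset (Set Ω)}
    (hT : IsFinCover 𝒜L T) : (⋃ A ∈ T, A) = Set.univ := by
  have := hT.2.2; rwa [Set.sUnion_eq_biUnion] at this

/-- Common refinement of two finite partitions. -/
noncomputable def refine (T T' : Finset (Set Ω)) : Finset (Set Ω) := by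
  classical
  exact ((T ×ˢ T').filter fun p => (p.1 ∩ p.2).Nonempty).image fun p => p.1 ∩ p.2

variable [Nonempty Ω] {H : ι → Set Ω} {𝒜L : Set (Set Ω)} {X : ι → ℝ} {μ : Set Ω → ℝ}
variable (hH : IsPartition H) (hL : IsFieldOver H 𝒜L)
variable (hX : ∀ i, 0 ≤ X i ∧ X i ≤ 1) (hμ : IsFAP 𝒜L μ)

set_option linter.unusedSectionVars false

include hL in
lemma refine_finpart {T T' : Finset (Set Ω)} (hT : IsFinCover 𝒜L T) (hT' : IsFinCover 𝒜L T') :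
    IsFinPart 𝒜L (refine T T') := by
  classical
  refine ⟨?_, ?_, ?_, ?_⟩
  · intro C hC
    simp only [refine, Finset.coe_image, Set.mem_image, Finset.mem_coe,
      Finset.mem_filter, Finset.mem_product] at hC
    obtain ⟨p, ⟨⟨h1, h2⟩, _⟩, rfl⟩ := hC
    exact SF.inter hL.1 (hT.1 h1) (hT'.1 h2)
  · intro C hC
    simp only [refine, Finset.mem_image, Finset.mem_filter] at hC
    obtain ⟨p, ⟨_, hne⟩, rfl⟩ := hC
    exact hne
  · intro C hC D hD hCD
    simp only [refine, Finset.mem_image, Finset.mem_filter, Finset.mem_product] at hC hD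
    obtain ⟨p, ⟨⟨hp1, hp2⟩, _⟩, rfl⟩ := hC
    obtain ⟨q, ⟨⟨hq1, hq2⟩, _⟩, rfl⟩ := hD
    by_cases h1 : p.1 = q.1
    · have h2 : p.2 ≠ q.2 := fun h => hCD (by rw [h1, h])
      exact Set.disjoint_of_subset Set.inter_subset_right Set.inter_subset_right
        (hT'.2.1 _ hp2 _ hq2 h2)
    · exact Set.disjoint_of_subset Set.inter_subset_left Set.inter_subset_left
        (hT.2.1 _ hp1 _ hq1 h1)
  · apply Set.eq_univ_of_forall
    intro x
    have hx1 : x ∈ ⋃₀ (↑T : Set (Set Ω)) := hT.2.2 ▸ Set.mem_univ x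
    have hx2 : x ∈ ⋃₀ (↑T' : Set (Set Ω)) := hT'.2.2 ▸ Set.mem_univ x
    obtain ⟨A, hA, hxA⟩ := hx1
    obtain ⟨B, hB, hxB⟩ := hx2
    refine Set.mem_sUnion.2 ⟨A ∩ B, ?_, ⟨hxA, hxB⟩⟩
    simp only [refine, Finset.coe_image, Set.mem_image, Finset.mem_coe, Finset.mem_filter,
      Finset.mem_product]
    exact ⟨(A, B), ⟨⟨hA, hB⟩, ⟨x, hxA, hxB⟩⟩, rfl⟩

/-- Sum over refinement equals sum over nonempty-intersection pairs. -/
lemma refine_sum {T T' : Finset (Set Ω)} (hT : IsFinCover 𝒜L T) (hT' : IsFinCover 𝒜L T')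
    (g : Set Ω → ℝ) :
    ∑ C ∈ refine T T', g C
      = ∑ p ∈ (T ×ˢ T').filter fun p => (p.1 ∩ p.2).Nonempty, g (p.1 ∩ p.2) := by
  classical
  refine Finset.sum_image fun p hp q hq hpq => ?_
  simp only [Finset.mem_coe, Finset.mem_filter, Finset.mem_product] at hp hq
  obtain ⟨⟨hp1, hp2⟩, hpne⟩ := hp
  obtain ⟨⟨hq1, hq2⟩, hqne⟩ := hq
  have h1 : p.1 = q.1 := by
    by_contra h
    have hd := hT.2.1 _ hp1 _ hq1 h
    rw [Set.disjoint_iff_inter_eq_empty] at hd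
    obtain ⟨x, hx⟩ := hpne
    have hx' : x ∈ p.1 ∩ q.1 := ⟨hx.1, (hpq ▸ hx).1⟩
    exact absurd hx' (by simp [hd])
  have h2 : p.2 = q.2 := by
    by_contra h
    have hd := hT'.2.1 _ hp2 _ hq2 h
    rw [Set.disjoint_iff_inter_eq_empty] at hd
    obtain ⟨x, hx⟩ := hpne
    have hx' : x ∈ p.2 ∩ q.2 := ⟨hx.2, (hpq ▸ hx).2⟩
    exact absurd hx' (by simp [hd])
  exact Prod.ext h1 h2

include hL hμ in
lemma fap_sum_inter {A : Set Ω} (hA : A ∈ 𝒜L) {T' : Finset (Set Ω)} (hT' : IsFinCover 𝒜L T') :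
    μ A = ∑ B ∈ T', μ (A ∩ B) := by
  classical
  have h := FAP.sum_biUnion hL.1 hμ T' (fun B => A ∩ B)
    (fun B hB => SF.inter hL.1 hA (hT'.1 hB))
    (fun B hB C hC hBC => Set.disjoint_of_subset Set.inter_subset_right
      Set.inter_subset_right (hT'.2.1 _ hB _ hC hBC))
  have hU : (⋃ B ∈ T', A ∩ B) = A := by
    rw [← Set.inter_iUnion₂, fincover_biUnion_eq hT', Set.inter_univ]
  rw [hU] at h
  exact h.2

include hL hX hμ in
lemma lowSum_le_refine {T T' : Finset (Set Ω)} (hT : IsFinCover 𝒜L T) (hT' : IsFinCover 𝒜L T') :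
    lowSum H X μ T ≤ lowSum H X μ (refine T T') := by
  classical
  simp only [lowSum]
  rw [refine_sum hT hT' (g := fun C => sInf (vals H X C) * μ C)]
  have step1 : ∀ A ∈ T, sInf (vals H X A) * μ A
      = ∑ B ∈ T', sInf (vals H X A) * μ (A ∩ B) := by
    intro A hA
    rw [← Finset.mul_sum, ← fap_sum_inter hL hμ (hT.1 hA) hT']
  rw [Finset.sum_congr rfl step1, ← Finset.sum_product']
  rw [← Finset.sum_filter_of_ne (p := fun p => (p.1 ∩ p.2).Nonempty)]
  · refine Finset.sum_le_sum fun p hp => ?_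
    simp only [Finset.mem_filter, Finset.mem_product] at hp
    obtain ⟨⟨hp1, hp2⟩, hpne⟩ := hp
    have hpL : p.1 ∩ p.2 ∈ 𝒜L := SF.inter hL.1 (hT.1 hp1) (hT'.1 hp2)
    refine mul_le_mul_of_nonneg_right ?_ (FAP.nonneg hμ hpL)
    exact csInf_le_csInf (vals_bddBelow hX) (vals_nonempty hL hpL hpne)
      (vals_mono Set.inter_subset_left)
  · intro p hp hne
    by_contra hc
    rw [Set.not_nonempty_iff_eq_empty] at hc
    rw [hc, FAP.empty hL.1 hμ, mul_zero] at hne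
    exact hne rfl

include hL hX hμ in
lemma refine_le_upSum {T T' : Finset (Set Ω)} (hT : IsFinCover 𝒜L T) (hT' : IsFinCover 𝒜L T') :
    upSum H X μ (refine T T') ≤ upSum H X μ T' := by
  classical
  simp only [upSum]
  rw [refine_sum hT hT' (g := fun C => sSup (vals H X C) * μ C)]
  have step1 : ∀ B ∈ T', sSup (vals H X B) * μ B
      = ∑ A ∈ T, sSup (vals H X B) * μ (A ∩ B) := by
    intro B hB
    rw [← Finset.mul_sum]
    congr 1
    rw [fap_sum_inter hL hμ (hT'.1 hB) hT]
    exact Finset.sum_congr rfl fun A _ => by rw [Set.inter_comm]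
  rw [Finset.sum_congr rfl step1, Finset.sum_comm, ← Finset.sum_product']
  rw [← Finset.sum_filter_of_ne (p := fun p : Set Ω × Set Ω => (p.1 ∩ p.2).Nonempty)
    (f := fun p : Set Ω × Set Ω => sSup (vals H X p.2) * μ (p.1 ∩ p.2))]
  · refine Finset.sum_le_sum fun p hp => ?_
    simp only [Finset.mem_filter, Finset.mem_product] at hp
    obtain ⟨⟨hp1, hp2⟩, hpne⟩ := hp
    have hpL : p.1 ∩ p.2 ∈ 𝒜L := SF.inter hL.1 (hT.1 hp1) (hT'.1 hp2)
    refine mul_le_mul_of_nonneg_right ?_ (FAP.nonneg hμ hpL)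
    exact csSup_le_csSup (vals_bddAbove hX) (vals_nonempty hL hpL hpne)
      (vals_mono Set.inter_subset_right)
  · intro p hp hne
    by_contra hc
    rw [Set.not_nonempty_iff_eq_empty] at hc
    rw [hc, FAP.empty hL.1 hμ, mul_zero] at hne
    exact hne rfl

include hL hX hμ in
lemma lowSum_le_upSum_cross {T T' : Finset (Set Ω)} (hT : IsFinPart 𝒜L T)
    (hT' : IsFinPart 𝒜L T') : lowSum H X μ T ≤ upSum H X μ T' := by
  have hR := refine_finpart hL (finpart_toCover hT) (finpart_toCover hT')
  calc lowSum H X μ T ≤ lowSum H X μ (refine T T') :=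
        lowSum_le_refine hL hX hμ (finpart_toCover hT) (finpart_toCover hT')
    _ ≤ upSum H X μ (refine T T') := lowSum_le_upSum hL hX hμ hR
    _ ≤ upSum H X μ T' := refine_le_upSum hL hX hμ (finpart_toCover hT) (finpart_toCover hT')

end Refine
end St16
namespace St16
section SInt

variable {Ω : Type*} {ι : Type*}
variable [Nonempty Ω] {H : ι → Set Ω} {𝒜L : Set (Set Ω)} {X : ι → ℝ} {μ : Set Ω → ℝ}
variable (hH : IsPartition H) (hL : IsFieldOver H 𝒜L)
variable (hX : ∀ i, 0 ≤ X i ∧ X i ≤ 1) (hμ : IsFAP 𝒜L μ)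

set_option linter.unusedSectionVars false

lemma atom_subset_biUnion_iff (hH : IsPartition H) (s : Set ι) (i : ι) :
    H i ⊆ (⋃ j ∈ s, H j) ↔ i ∈ s := by
  constructor
  · intro h
    obtain ⟨x, hx⟩ := hH.1 i
    obtain ⟨j, hj, hxj⟩ := by simpa using h hx
    rcases eq_or_ne i j with rfl | hne
    · exact hj
    · exact absurd (Set.not_disjoint_iff.2 ⟨x, hx, hxj⟩) (not_not.2 (hH.2.1 hne))
  · exact fun h => Set.subset_biUnion_of_mem h

include hL hX hμ in
lemma lowSum_le_lowerSInt {T : Finset (Set Ω)} (hT : IsFinPart 𝒜L T) :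
    lowSum H X μ T ≤ lowerSInt H 𝒜L X μ := by
  refine le_csSup ⟨1, ?_⟩ ⟨T, hT, rfl⟩
  rintro x ⟨T', hT', rfl⟩
  exact lowSum_le_one hL hX hμ hT'

include hL hX hμ in
lemma lowerSInt_le (c : ℝ) (h : ∀ T, IsFinPart 𝒜L T → lowSum H X μ T ≤ c) :
    lowerSInt H 𝒜L X μ ≤ c := by
  refine csSup_le ⟨lowSum H X μ {Set.univ}, {Set.univ}, finpart_univ hL, rfl⟩ ?_
  rintro x ⟨T, hT, rfl⟩; exact h T hT

include hL hX hμ in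
lemma upperSInt_le_upSum {T : Finset (Set Ω)} (hT : IsFinPart 𝒜L T) :
    upperSInt H 𝒜L X μ ≤ upSum H X μ T := by
  refine csInf_le ⟨0, ?_⟩ ⟨T, hT, rfl⟩
  rintro x ⟨T', hT', rfl⟩
  exact upSum_nonneg hL hX hμ hT'

include hL hX hμ in
lemma le_upperSInt (c : ℝ) (h : ∀ T, IsFinPart 𝒜L T → c ≤ upSum H X μ T) :
    c ≤ upperSInt H 𝒜L X μ := by
  refine le_csInf ⟨upSum H X μ {Set.univ}, {Set.univ}, finpart_univ hL, rfl⟩ ?_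
  rintro x ⟨T, hT, rfl⟩; exact h T hT

include hL hX hμ in
lemma lowerSInt_nonneg : 0 ≤ lowerSInt H 𝒜L X μ :=
  le_trans (lowSum_nonneg hL hX hμ (finpart_univ hL)) (lowSum_le_lowerSInt hL hX hμ (finpart_univ hL))

include hL hX hμ in
lemma lowerSInt_le_one : lowerSInt H 𝒜L X μ ≤ 1 :=
  lowerSInt_le hL hX hμ 1 fun T hT => lowSum_le_one hL hX hμ hT

include hL hX hμ in
lemma lowerSInt_le_upperSInt : lowerSInt H 𝒜L X μ ≤ upperSInt H 𝒜L X μ :=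
  le_upperSInt hL hX hμ _ fun T hT => lowerSInt_le hL hX hμ _
    fun T' hT' => lowSum_le_upSum_cross hL hX hμ hT' hT

include hH hL hX hμ in
/-- S-integrability of an `𝒜L`-continuous function: the upper and lower Stieltjes
integrals agree. -/
lemma sintegrable (hc : ALContinuous H 𝒜L X) :
    upperSInt H 𝒜L X μ = lowerSInt H 𝒜L X μ := by
  classical
  refine le_antisymm ?_ (lowerSInt_le_upperSInt hL hX hμ)
  refine le_of_forall_pos_le_add fun ε hε => ?_
  obtain ⟨n₀, hn₀⟩ := exists_nat_ge (3 / ε)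
  set δ : ℝ := ε / 3 with hδdef
  have hδ : 0 < δ := by positivity
  set n : ℕ := n₀ + 1 with hn
  have hnδ : 1 ≤ (n : ℝ) * δ := by
    have h3 : (3:ℝ) ≤ (n₀ : ℝ) * ε := by
      rw [div_le_iff₀ hε] at hn₀; linarith
    have hcast : ((n₀ : ℝ) + 1) = (n : ℝ) := by push_cast [hn]; ring
    have h4 : (1:ℝ) ≤ (n₀ : ℝ) * δ := by rw [hδdef]; linarith
    calc (1:ℝ) ≤ (n₀ : ℝ) * δ := h4
      _ ≤ (n : ℝ) * δ := by
          refine mul_le_mul_of_nonneg_right ?_ hδ.le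
          rw [← hcast]; linarith
  have hAex : ∀ k : ℕ, ∃ A ∈ 𝒜L,
      (⋃ i ∈ {i | (k : ℝ) * δ + δ ≤ X i}, H i) ⊆ A ∧ A ⊆ ⋃ i ∈ {i | (k : ℝ) * δ ≤ X i}, H i :=
    fun k => hc.2 ((k : ℝ) * δ) δ hδ
  choose A hAmem hA1 hA2 using hAex
  -- decreasing chain
  let B : ℕ → Set Ω := fun k => Nat.rec Set.univ (fun m Bm => Bm ∩ A m) k
  have hB0 : B 0 = Set.univ := rfl
  have hBsucc : ∀ k, B (k + 1) = B k ∩ A k := fun k => rfl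
  have hBmem : ∀ k, B k ∈ 𝒜L := by
    intro k; induction k with
    | zero => exact hL.1.1
    | succ m ih => exact SF.inter hL.1 ih (hAmem m)
  have hBmono : ∀ k, B (k + 1) ⊆ B k := fun k => Set.inter_subset_left
  have hBchain : ∀ {k j : ℕ}, k ≤ j → B j ⊆ B k := by
    intro k j h
    induction j with
    | zero => simp_all
    | succ m ih =>
      rcases Nat.lt_or_ge k (m+1) with h' | h'
      · exact (hBmono m).trans (ih (Nat.lt_succ_iff.mp h'))
      · have hkm : k = m + 1 := le_antisymm h h'
        subst hkm; exact fun x hx => hx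
  have hlow : ∀ k, ∀ i, H i ⊆ B k → (k : ℝ) * δ - δ ≤ X i := by
    intro k i hi
    cases k with
    | zero => simpa using le_trans (by linarith) (hX i).1
    | succ m =>
      have h1 : H i ⊆ A m := hi.trans Set.inter_subset_right
      have h2 : H i ⊆ ⋃ j ∈ {j | (m : ℝ) * δ ≤ X j}, H j := h1.trans (hA2 m)
      have h3 := (atom_subset_biUnion_iff hH _ i).1 h2
      simp only [Set.mem_setOf_eq] at h3
      push_cast; linarith
  -- pieces
  let piece : ℕ → Set Ω := fun k => if k = n then B n else B k \ B (k + 1)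
  have hpiece : ∀ k, piece k = if k = n then B n else B k \ B (k + 1) := fun _ => rfl
  have hpmem : ∀ k, piece k ∈ 𝒜L := by
    intro k; rw [hpiece]
    by_cases h : k = n
    · rw [if_pos h]; exact hBmem n
    · rw [if_neg h]; exact SF.diff hL.1 (hBmem k) (hBmem (k+1))
  have hpsub : ∀ k, piece k ⊆ B k := by
    intro k; rw [hpiece]
    by_cases h : k = n
    · subst h; rw [if_pos rfl]
    · rw [if_neg h]; exact Set.diff_subset
  have hpdisj : ∀ k j, k < j → j ≤ n → Disjoint (piece k) (piece j) := by
    intro k j hkj hjn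
    have hk : k ≠ n := by omega
    have h1 : piece k ⊆ B k \ B (k+1) := by rw [hpiece, if_neg hk]
    have h2 : piece j ⊆ B (k+1) := (hpsub j).trans (hBchain hkj)
    exact Set.disjoint_of_subset h1 h2 disjoint_sdiff_left
  have key : ∀ m : ℕ, (⋃ k ∈ Finset.range m, (B k \ B (k+1))) ∪ B m = Set.univ := by
    intro m; induction m with
    | zero => simp [hB0]
    | succ p ih =>
      apply Set.eq_univ_of_univ_subset
      rw [← ih]
      intro x hx
      rcases hx with hx | hx
      · left
        simp only [Set.mem_iUnion, Finset.mem_range] at hx ⊢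
        obtain ⟨k, hk, hxk⟩ := hx
        exact ⟨k, by omega, hxk⟩
      · rcases Classical.em (x ∈ B (p+1)) with hB | hB
        · exact Or.inr hB
        · exact Or.inl (Set.mem_iUnion₂.2 ⟨p, Finset.mem_range.2 (Nat.lt_succ_self p), hx, hB⟩)
  have hcover : (⋃ k ∈ Finset.range (n+1), piece k) = Set.univ := by
    have e1 : (⋃ k ∈ Finset.range (n+1), piece k)
        = piece n ∪ ⋃ k ∈ Finset.range n, piece k := by
      rw [Finset.range_add_one, Finset.set_biUnion_insert]
    have e2 : (⋃ k ∈ Finset.range n, piece k) = ⋃ k ∈ Finset.range n, (B k \ B (k+1)) :=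
      Set.iUnion₂_congr fun k hk => by
        rw [hpiece, if_neg (Finset.mem_range.1 hk).ne]
    rw [e1, e2, hpiece, if_pos rfl, Set.union_comm, key n]
  -- the partition
  set T : Finset (Set Ω) :=
    ((Finset.range (n+1)).image piece).filter (fun C => C.Nonempty) with hT
  have hTmem : ∀ C ∈ T, ∃ k ≤ n, C = piece k ∧ C.Nonempty := by
    intro C hC
    rw [hT, Finset.mem_filter, Finset.mem_image] at hC
    obtain ⟨⟨k, hk, rfl⟩, hne⟩ := hC
    exact ⟨k, Nat.lt_succ_iff.mp (Finset.mem_range.1 hk), rfl, hne⟩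
  have hTfin : IsFinPart 𝒜L T := by
    refine ⟨?_, ?_, ?_, ?_⟩
    · intro C hC
      obtain ⟨k, _, rfl, _⟩ := hTmem C hC
      exact hpmem k
    · intro C hC
      exact (hTmem C hC).choose_spec.2.2
    · intro C hC D hD hCD
      obtain ⟨k, hk, rfl, _⟩ := hTmem C hC
      obtain ⟨j, hj, rfl, _⟩ := hTmem D hD
      rcases lt_trichotomy k j with h | h | h
      · exact hpdisj k j h hj
      · exact absurd (by rw [h]) hCD
      · exact (hpdisj j k h hk).symm
    · apply Set.eq_univ_of_univ_subset
      intro x _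
      have hx : x ∈ ⋃ k ∈ Finset.range (n+1), piece k := hcover ▸ Set.mem_univ x
      obtain ⟨k, hk, hxk⟩ := Set.mem_iUnion₂.1 hx
      refine Set.mem_sUnion.2 ⟨piece k, ?_, hxk⟩
      rw [hT]
      simp only [Finset.coe_filter, Set.mem_setOf_eq, Finset.mem_image]
      exact ⟨⟨k, hk, rfl⟩, ⟨x, hxk⟩⟩
  -- oscillation bound
  have hosc : ∀ C ∈ T, sSup (vals H X C) ≤ sInf (vals H X C) + 2 * δ := by
    intro C hC
    obtain ⟨k, hkn, rfl, hne⟩ := hTmem C hC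
    have hvne : (vals H X (piece k)).Nonempty := vals_nonempty hL (hpmem k) hne
    have hpt : ∀ z ∈ vals H X (piece k), ∀ y ∈ vals H X (piece k), z ≤ y + 2 * δ := by
      rintro z ⟨i', hi', rfl⟩ y ⟨i, hi, rfl⟩
      have hylow : (k : ℝ) * δ - δ ≤ X i := hlow k i (hi.trans (hpsub k))
      by_cases hkeq : k = n
      · subst hkeq
        have : X i' ≤ 1 := (hX i').2
        have h1 : (1:ℝ) ≤ (n:ℝ) * δ := hnδ
        linarith
      · -- X i' < k δ + δ
        have hup : X i' < (k : ℝ) * δ + δ := by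
          by_contra hcon
          push_neg at hcon
          have hsub1 : H i' ⊆ ⋃ j ∈ {j | (k : ℝ) * δ + δ ≤ X j}, H j :=
            Set.subset_biUnion_of_mem (by exact hcon)
          have hsub2 : H i' ⊆ A k := hsub1.trans (hA1 k)
          have hsub3 : H i' ⊆ B k := hi'.trans (hpsub k)
          have hsub4 : H i' ⊆ B (k+1) := by
            rw [hBsucc]; exact Set.subset_inter hsub3 hsub2
          have hdiff : H i' ⊆ B k \ B (k+1) := by
            have := hi'; rwa [hpiece, if_neg hkeq] at this
          obtain ⟨x, hx⟩ := hH.1 i'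
          exact (hdiff hx).2 (hsub4 hx)
        linarith
    refine csSup_le hvne fun z hz => ?_
    have h2 : ∀ y ∈ vals H X (piece k), z - 2 * δ ≤ y := fun y hy => by
      have := hpt z hz y hy; linarith
    have h3 : z - 2 * δ ≤ sInf (vals H X (piece k)) := le_csInf hvne h2
    linarith
  -- put it together
  have hsum : upSum H X μ T ≤ lowSum H X μ T + 2 * δ := by
    have : upSum H X μ T ≤ ∑ C ∈ T, (sInf (vals H X C) + 2 * δ) * μ C := by
      refine Finset.sum_le_sum fun C hC => ?_
      exact mul_le_mul_of_nonneg_right (hosc C hC) (finpart_μ_nonneg hL hμ hTfin hC)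
    calc upSum H X μ T ≤ ∑ C ∈ T, (sInf (vals H X C) + 2 * δ) * μ C := this
      _ = lowSum H X μ T + 2 * δ * ∑ C ∈ T, μ C := by
          rw [lowSum, Finset.mul_sum, ← Finset.sum_add_distrib]
          exact Finset.sum_congr rfl fun C _ => by ring
      _ = lowSum H X μ T + 2 * δ := by rw [finpart_sum_one hL hμ hTfin, mul_one]
  calc upperSInt H 𝒜L X μ ≤ upSum H X μ T := upperSInt_le_upSum hL hX hμ hTfin
    _ ≤ lowSum H X μ T + 2 * δ := hsum
    _ ≤ lowerSInt H 𝒜L X μ + ε := by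
        have := lowSum_le_lowerSInt hL hX hμ hTfin
        rw [hδdef]; linarith

end SInt
end St16
namespace St16
section Special

variable {Ω : Type*} {ι : Type*}
variable [Nonempty Ω] {H : ι → Set Ω} {𝒜L : Set (Set Ω)} {X X' Y Z : ι → ℝ} {μ μ' : Set Ω → ℝ}
variable (hH : IsPartition H) (hL : IsFieldOver H 𝒜L)
variable (hX : ∀ i, 0 ≤ X i ∧ X i ≤ 1) (hX' : ∀ i, 0 ≤ X' i ∧ X' i ≤ 1)
variable (hY : ∀ i, 0 ≤ Y i ∧ Y i ≤ 1) (hZ : ∀ i, 0 ≤ Z i ∧ Z i ≤ 1)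
variable (hμ : IsFAP 𝒜L μ) (hμ' : IsFAP 𝒜L μ')

set_option linter.unusedSectionVars false

include hL in
lemma vals_const_eq {C : Set Ω} (hC : C ∈ 𝒜L) (hne : C.Nonempty) {c : ℝ}
    (h : ∀ i, H i ⊆ C → X i = c) : vals H X C = {c} := by
  ext y
  constructor
  · rintro ⟨i, hi, rfl⟩; exact h i hi
  · rintro rfl
    obtain ⟨i, hi⟩ := exists_atom_subset hL hC hne
    exact ⟨i, hi, (h i hi).symm⟩

lemma sInf_vals_nonneg (A : Set Ω) (hX : ∀ i, 0 ≤ X i ∧ X i ≤ 1) :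
    0 ≤ sInf (vals H X A) :=
  Real.sInf_nonneg fun y ⟨i, _, hy⟩ => hy ▸ (hX i).1

lemma lowerSInt_congr (h : ∀ A ∈ 𝒜L, μ A = μ' A) :
    lowerSInt H 𝒜L X μ = lowerSInt H 𝒜L X μ' := by
  rw [lowerSInt_eq, lowerSInt_eq]
  congr 1
  ext x
  constructor <;> rintro ⟨T, hT, rfl⟩ <;> refine ⟨T, hT, Finset.sum_congr rfl fun A hA => ?_⟩
  · rw [h A (hT.1 hA)]
  · rw [h A (hT.1 hA)]

include hL hμ in
lemma lowerSInt_const {c : ℝ} (hc : 0 ≤ c) (hc1 : c ≤ 1) :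
    lowerSInt H 𝒜L (fun _ => c) μ = c := by
  have hset : {x | ∃ T, IsFinPart 𝒜L T ∧ x = lowSum H (fun _ => c) μ T} = {c} := by
    ext x
    simp only [Set.mem_setOf_eq, Set.mem_singleton_iff]
    constructor
    · rintro ⟨T, hT, rfl⟩
      rw [lowSum, Finset.sum_congr (rfl : T = T) (fun A hA => by
        rw [vals_const_eq hL (hT.1 hA) (hT.2.1 A hA) (fun _ _ => rfl), csInf_singleton]),
        ← Finset.mul_sum, finpart_sum_one hL hμ hT, mul_one]
    · rintro rfl
      exact ⟨{Set.univ}, finpart_univ hL, by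
        rw [lowSum, Finset.sum_singleton,
          vals_const_eq hL hL.1.1 Set.univ_nonempty (fun _ _ => rfl), csInf_singleton,
          hμ.2.1, mul_one]⟩
  rw [lowerSInt_eq, hset, csSup_singleton]

include hH hL hμ in
/-- The Stieltjes integral of (a function agreeing on atoms with) the indicator of `B`. -/
lemma lowerSInt_indicator {B : Set Ω} (hB : B ∈ 𝒜L)
    (hX : ∀ i, 0 ≤ X i ∧ X i ≤ 1)
    (h1 : ∀ i, H i ⊆ B → X i = 1) (h0 : ∀ i, Disjoint (H i) B → X i = 0) :
    lowerSInt H 𝒜L X μ = μ B := by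
  classical
  rcases Set.eq_empty_or_nonempty B with rfl | hBne
  · rw [FAP.empty hL.1 hμ]
    refine le_antisymm (lowerSInt_le hL hX hμ 0 fun T hT => ?_) (lowerSInt_nonneg hL hX hμ)
    refine le_of_eq (Finset.sum_eq_zero fun A hA => ?_)
    have : vals H X A = {0} :=
      vals_const_eq hL (hT.1 hA) (hT.2.1 A hA) fun i _ => h0 i (by simp)
    rw [this, csInf_singleton, zero_mul]
  · refine le_antisymm (lowerSInt_le hL hX hμ (μ B) fun T hT => ?_) ?_
    · -- lowSum ≤ μ B
      have key : ∀ A ∈ T, sInf (vals H X A) * μ A ≤ μ (A ∩ B) := by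
        intro A hA
        have hAL := hT.1 hA
        by_cases hsub : ∀ i, H i ⊆ A → H i ⊆ B
        · have hAB : A ⊆ B := subset_of_atoms_subset hL hAL hsub
          rw [Set.inter_eq_self_of_subset_left hAB]
          have := sInf_vals_mem hL hX hAL (hT.2.1 A hA)
          nlinarith [FAP.nonneg hμ hAL]
        · push_neg at hsub
          obtain ⟨i, hiA, hiB⟩ := hsub
          have hd : Disjoint (H i) B := by
            rcases atom_subset_or_disjoint hH hL hB i with h | h
            · exact absurd h hiB
            · exact h
          have h0' : (0:ℝ) ∈ vals H X A := ⟨i, hiA, (h0 i hd).symm⟩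
          have : sInf (vals H X A) ≤ 0 := csInf_le (vals_bddBelow hX) h0'
          have h2 : 0 ≤ μ (A ∩ B) := FAP.nonneg hμ (SF.inter hL.1 hAL hB)
          nlinarith [FAP.nonneg hμ hAL]
      calc lowSum H X μ T ≤ ∑ A ∈ T, μ (A ∩ B) := Finset.sum_le_sum key
        _ = μ B := by
            rw [fap_sum_inter hL hμ hB (finpart_toCover hT)]
            exact Finset.sum_congr rfl fun A _ => by rw [Set.inter_comm]
    · -- μ B ≤ lowerSInt
      set T : Finset (Set Ω) := ({B, Bᶜ} : Finset (Set Ω)).filter (fun C => C.Nonempty)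
        with hTdef
      have hBmem : B ∈ T := by
        rw [hTdef]; exact Finset.mem_filter.2 ⟨Finset.mem_insert_self _ _, hBne⟩
      have hT : IsFinPart 𝒜L T := by
        refine ⟨?_, ?_, ?_, ?_⟩
        · intro C hC
          rw [hTdef] at hC
          simp only [Finset.coe_filter, Set.mem_setOf_eq, Finset.mem_insert,
            Finset.mem_singleton] at hC
          rcases hC.1 with rfl | rfl
          · exact hB
          · exact hL.1.2.1 _ hB
        · intro C hC; rw [hTdef] at hC; exact (Finset.mem_filter.1 hC).2
        · intro C hC D hD hCD
          rw [hTdef] at hC hD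
          have hC' := (Finset.mem_filter.1 hC).1
          have hD' := (Finset.mem_filter.1 hD).1
          simp only [Finset.mem_insert, Finset.mem_singleton] at hC' hD'
          rcases hC' with rfl | rfl <;> rcases hD' with rfl | rfl
          · exact absurd rfl hCD
          · exact disjoint_compl_right
          · exact disjoint_compl_left
          · exact absurd rfl hCD
        · apply Set.eq_univ_of_univ_subset
          intro x _
          by_cases hx : x ∈ B
          · exact Set.mem_sUnion.2 ⟨B, hBmem, hx⟩
          · refine Set.mem_sUnion.2 ⟨Bᶜ, ?_, hx⟩
            rw [hTdef]
            exact Finset.mem_filter.2 ⟨Finset.mem_insert_of_mem (Finset.mem_singleton_self _),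
              ⟨x, hx⟩⟩
      refine le_trans ?_ (lowSum_le_lowerSInt hL hX hμ hT)
      have hBval : sInf (vals H X B) * μ B = μ B := by
        rw [vals_const_eq hL hB hBne h1, csInf_singleton, one_mul]
      calc μ B = sInf (vals H X B) * μ B := hBval.symm
        _ ≤ lowSum H X μ T := by
            refine Finset.single_le_sum (f := fun C => sInf (vals H X C) * μ C) ?_ hBmem
            intro C hC
            exact mul_nonneg (sInf_vals_nonneg C hX) (finpart_μ_nonneg hL hμ hT hC)

end Special
end St16
namespace St16
section Special2

variable {Ω : Type*} {ι : Type*}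
variable [Nonempty Ω] {H : ι → Set Ω} {𝒜L : Set (Set Ω)} {X X' Y Z : ι → ℝ} {μ μ' : Set Ω → ℝ}
variable (hH : IsPartition H) (hL : IsFieldOver H 𝒜L)
variable (hX : ∀ i, 0 ≤ X i ∧ X i ≤ 1) (hX' : ∀ i, 0 ≤ X' i ∧ X' i ≤ 1)
variable (hY : ∀ i, 0 ≤ Y i ∧ Y i ≤ 1) (hZ : ∀ i, 0 ≤ Z i ∧ Z i ≤ 1)
variable (hμ : IsFAP 𝒜L μ) (hμ' : IsFAP 𝒜L μ')

set_option linter.unusedSectionVars false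

include hL in
lemma pair_cover {B : Set Ω} (hB : B ∈ 𝒜L) :
    IsFinCover 𝒜L ({B, Bᶜ} : Finset (Set Ω)) := by
  refine ⟨?_, ?_, ?_⟩
  · intro C hC
    simp only [Finset.coe_insert, Finset.coe_singleton, Set.mem_insert_iff,
      Set.mem_singleton_iff] at hC
    rcases hC with rfl | rfl
    · exact hB
    · exact hL.1.2.1 _ hB
  · intro C hC D hD hCD
    simp only [Finset.mem_insert, Finset.mem_singleton] at hC hD
    rcases hC with rfl | rfl <;> rcases hD with rfl | rfl
    · exact absurd rfl hCD
    · exact disjoint_compl_right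
    · exact disjoint_compl_left
    · exact absurd rfl hCD
  · simp only [Finset.coe_insert, Finset.coe_singleton, Set.sUnion_insert,
      Set.sUnion_singleton, Set.union_compl_self]

lemma mem_refine_iff {T T' : Finset (Set Ω)} {C : Set Ω} :
    C ∈ refine T T' ↔ ∃ A ∈ T, ∃ B ∈ T', A ∩ B = C ∧ C.Nonempty := by
  classical
  simp only [refine, Finset.mem_image, Finset.mem_filter, Finset.mem_product]
  constructor
  · rintro ⟨p, ⟨⟨h1, h2⟩, hne⟩, rfl⟩
    exact ⟨p.1, h1, p.2, h2, rfl, hne⟩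
  · rintro ⟨A, hA, B, hB, rfl, hne⟩
    exact ⟨(A, B), ⟨⟨hA, hB⟩, hne⟩, rfl⟩

lemma refine_comm (T T' : Finset (Set Ω)) : refine T T' = refine T' T := by
  ext C
  rw [mem_refine_iff, mem_refine_iff]
  constructor
  · rintro ⟨A, hA, B, hB, h, hne⟩
    exact ⟨B, hB, A, hA, by rw [Set.inter_comm]; exact h, hne⟩
  · rintro ⟨A, hA, B, hB, h, hne⟩
    exact ⟨B, hB, A, hA, by rw [Set.inter_comm]; exact h, hne⟩

include hL hμ in
lemma lowSum_refine_pair {T : Finset (Set Ω)} (hT : IsFinPart 𝒜L T) {B : Set Ω}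
    (hB : B ∈ 𝒜L) (hBne : B ≠ Bᶜ) :
    lowSum H X μ (refine T {B, Bᶜ})
      = ∑ A ∈ T, (sInf (vals H X (A ∩ B)) * μ (A ∩ B)
          + sInf (vals H X (A ∩ Bᶜ)) * μ (A ∩ Bᶜ)) := by
  classical
  rw [lowSum, refine_sum (finpart_toCover hT) (pair_cover hL hB)
    (g := fun C => sInf (vals H X C) * μ C)]
  rw [Finset.sum_filter_of_ne (p := fun p : Set Ω × Set Ω => (p.1 ∩ p.2).Nonempty)
    (f := fun p : Set Ω × Set Ω => sInf (vals H X (p.1 ∩ p.2)) * μ (p.1 ∩ p.2)) ?_]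
  · rw [Finset.sum_product]
    exact Finset.sum_congr rfl fun A _ => Finset.sum_pair hBne
  · intro p hp hne
    by_contra hc
    rw [Set.not_nonempty_iff_eq_empty] at hc
    exact hne (by simp only [hc, FAP.empty hL.1 hμ, mul_zero])

include hL hμ in
lemma piece_compl_zero {K : Set Ω} (hK : K ∈ 𝒜L) (hμK : μ K = 1) {A : Set Ω} (hA : A ∈ 𝒜L) :
    μ (A ∩ Kᶜ) = 0 := by
  have h1 : μ Kᶜ = 0 := by rw [FAP.compl hL.1 hμ hK, hμK]; ring
  have h2 : μ (A ∩ Kᶜ) ≤ μ Kᶜ :=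
    FAP.mono hL.1 hμ (SF.inter hL.1 hA (hL.1.2.1 _ hK)) (hL.1.2.1 _ hK) Set.inter_subset_right
  have h3 : 0 ≤ μ (A ∩ Kᶜ) := FAP.nonneg hμ (SF.inter hL.1 hA (hL.1.2.1 _ hK))
  linarith

lemma vals_eq_of_eq_on {C B : Set Ω} (hCB : C ⊆ B) (heq : ∀ i, H i ⊆ B → X i = X' i) :
    vals H X C = vals H X' C := by
  ext y
  constructor
  · rintro ⟨i, hi, rfl⟩; exact ⟨i, hi, heq i (hi.trans hCB)⟩
  · rintro ⟨i, hi, rfl⟩; exact ⟨i, hi, (heq i (hi.trans hCB)).symm⟩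

include hH hL hX hX' hμ in
lemma lowerSInt_eq_on_le {K : Set Ω} (hK : K ∈ 𝒜L) (hμK : μ K = 1)
    (heq : ∀ i, H i ⊆ K → X i = X' i) :
    lowerSInt H 𝒜L X μ ≤ lowerSInt H 𝒜L X' μ := by
  classical
  have hKne : K.Nonempty := by
    rcases Set.eq_empty_or_nonempty K with rfl | h
    · rw [FAP.empty hL.1 hμ] at hμK; norm_num at hμK
    · exact h
  have hKc : K ≠ Kᶜ := by
    intro h
    obtain ⟨x, hx⟩ := hKne
    exact (h ▸ hx) hx
  refine lowerSInt_le hL hX hμ _ fun T hT => ?_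
  have hR : IsFinPart 𝒜L (refine T ({K, Kᶜ} : Finset (Set Ω))) :=
    refine_finpart hL (finpart_toCover hT) (pair_cover hL hK)
  calc lowSum H X μ T ≤ lowSum H X μ (refine T {K, Kᶜ}) :=
        lowSum_le_refine hL hX hμ (finpart_toCover hT) (pair_cover hL hK)
    _ = lowSum H X' μ (refine T {K, Kᶜ}) := by
        rw [lowSum_refine_pair hL hμ hT hK hKc, lowSum_refine_pair hL hμ hT hK hKc]
        refine Finset.sum_congr rfl fun A hA => ?_
        have hz := piece_compl_zero hL hμ hK hμK (hT.1 hA)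
        rw [hz, vals_eq_of_eq_on Set.inter_subset_right heq, mul_zero, mul_zero]
    _ ≤ lowerSInt H 𝒜L X' μ := lowSum_le_lowerSInt hL hX' hμ hR

include hH hL hX hX' hμ in
/-- Functions agreeing on the atoms of a full-measure set have equal lower integrals. -/
lemma lowerSInt_eq_on {K : Set Ω} (hK : K ∈ 𝒜L) (hμK : μ K = 1)
    (heq : ∀ i, H i ⊆ K → X i = X' i) :
    lowerSInt H 𝒜L X μ = lowerSInt H 𝒜L X' μ :=
  le_antisymm (lowerSInt_eq_on_le hH hL hX hX' hμ hK hμK heq)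
    (lowerSInt_eq_on_le hH hL hX' hX hμ hK hμK fun i hi => (heq i hi).symm)

end Special2
end St16
namespace St16
section Special3

variable {Ω : Type*} {ι : Type*}
variable [Nonempty Ω] {H : ι → Set Ω} {𝒜L : Set (Set Ω)} {X X' Y Z : ι → ℝ} {μ μ' : Set Ω → ℝ}
variable (hH : IsPartition H) (hL : IsFieldOver H 𝒜L)
variable (hX : ∀ i, 0 ≤ X i ∧ X i ≤ 1) (hX' : ∀ i, 0 ≤ X' i ∧ X' i ≤ 1)
variable (hY : ∀ i, 0 ≤ Y i ∧ Y i ≤ 1) (hZ : ∀ i, 0 ≤ Z i ∧ Z i ≤ 1)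
variable (hμ : IsFAP 𝒜L μ) (hμ' : IsFAP 𝒜L μ')

set_option linter.unusedSectionVars false

include hH hL hX hY hZ hμ in
/-- Additivity of the lower Stieltjes integral for `𝒜L`-continuous integrands. -/
lemma lowerSInt_add (hadd : ∀ i, Z i = X i + Y i)
    (hcX : ALContinuous H 𝒜L X) (hcY : ALContinuous H 𝒜L Y) (hcZ : ALContinuous H 𝒜L Z) :
    lowerSInt H 𝒜L Z μ = lowerSInt H 𝒜L X μ + lowerSInt H 𝒜L Y μ := by
  classical
  -- step 1 : joint lower bound
  have step1 : ∀ T1 T2, IsFinPart 𝒜L T1 → IsFinPart 𝒜L T2 →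
      lowSum H X μ T1 + lowSum H Y μ T2 ≤ lowerSInt H 𝒜L Z μ := by
    intro T1 T2 hT1 hT2
    set R := refine T1 T2 with hR
    have hRfin : IsFinPart 𝒜L R :=
      refine_finpart hL (finpart_toCover hT1) (finpart_toCover hT2)
    have h1 : lowSum H X μ T1 ≤ lowSum H X μ R :=
      lowSum_le_refine hL hX hμ (finpart_toCover hT1) (finpart_toCover hT2)
    have h2 : lowSum H Y μ T2 ≤ lowSum H Y μ R := by
      rw [hR, refine_comm]
      exact lowSum_le_refine hL hY hμ (finpart_toCover hT2) (finpart_toCover hT1)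
    have h3 : lowSum H X μ R + lowSum H Y μ R ≤ lowSum H Z μ R := by
      rw [lowSum, lowSum, lowSum, ← Finset.sum_add_distrib]
      refine Finset.sum_le_sum fun C hC => ?_
      rw [← add_mul]
      refine mul_le_mul_of_nonneg_right ?_ (finpart_μ_nonneg hL hμ hRfin hC)
      refine le_csInf (vals_nonempty hL (hRfin.1 hC) (hRfin.2.1 C hC)) ?_
      rintro z ⟨i, hi, rfl⟩
      have e1 : sInf (vals H X C) ≤ X i := csInf_le (vals_bddBelow hX) ⟨i, hi, rfl⟩
      have e2 : sInf (vals H Y C) ≤ Y i := csInf_le (vals_bddBelow hY) ⟨i, hi, rfl⟩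
      rw [hadd i]; linarith
    have h4 : lowSum H Z μ R ≤ lowerSInt H 𝒜L Z μ := lowSum_le_lowerSInt hL hZ hμ hRfin
    linarith
  have step2 : lowerSInt H 𝒜L X μ + lowerSInt H 𝒜L Y μ ≤ lowerSInt H 𝒜L Z μ := by
    have hXle : lowerSInt H 𝒜L X μ ≤ lowerSInt H 𝒜L Z μ - lowerSInt H 𝒜L Y μ := by
      refine lowerSInt_le hL hX hμ _ fun T1 hT1 => ?_
      have : lowerSInt H 𝒜L Y μ ≤ lowerSInt H 𝒜L Z μ - lowSum H X μ T1 := by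
        refine lowerSInt_le hL hY hμ _ fun T2 hT2 => ?_
        have := step1 T1 T2 hT1 hT2; linarith
      linarith
    linarith
  -- step 3 : joint upper bound
  have step3 : ∀ T1 T2, IsFinPart 𝒜L T1 → IsFinPart 𝒜L T2 →
      upperSInt H 𝒜L Z μ ≤ upSum H X μ T1 + upSum H Y μ T2 := by
    intro T1 T2 hT1 hT2
    set R := refine T1 T2 with hR
    have hRfin : IsFinPart 𝒜L R :=
      refine_finpart hL (finpart_toCover hT1) (finpart_toCover hT2)
    have h1 : upSum H X μ R ≤ upSum H X μ T1 := by
      rw [hR, refine_comm]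
      exact refine_le_upSum hL hX hμ (finpart_toCover hT2) (finpart_toCover hT1)
    have h2 : upSum H Y μ R ≤ upSum H Y μ T2 :=
      refine_le_upSum hL hY hμ (finpart_toCover hT1) (finpart_toCover hT2)
    have h3 : upSum H Z μ R ≤ upSum H X μ R + upSum H Y μ R := by
      rw [upSum, upSum, upSum, ← Finset.sum_add_distrib]
      refine Finset.sum_le_sum fun C hC => ?_
      rw [← add_mul]
      refine mul_le_mul_of_nonneg_right ?_ (finpart_μ_nonneg hL hμ hRfin hC)
      refine csSup_le (vals_nonempty hL (hRfin.1 hC) (hRfin.2.1 C hC)) ?_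
      rintro z ⟨i, hi, rfl⟩
      have e1 : X i ≤ sSup (vals H X C) := le_csSup (vals_bddAbove hX) ⟨i, hi, rfl⟩
      have e2 : Y i ≤ sSup (vals H Y C) := le_csSup (vals_bddAbove hY) ⟨i, hi, rfl⟩
      rw [hadd i]; linarith
    have h4 : upperSInt H 𝒜L Z μ ≤ upSum H Z μ R := upperSInt_le_upSum hL hZ hμ hRfin
    linarith
  have step4 : upperSInt H 𝒜L Z μ ≤ upperSInt H 𝒜L X μ + upperSInt H 𝒜L Y μ := by
    have h2 : ∀ T1, IsFinPart 𝒜L T1 →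
        upperSInt H 𝒜L Z μ - upSum H X μ T1 ≤ upperSInt H 𝒜L Y μ := by
      intro T1 hT1
      refine le_upperSInt hL hY hμ _ fun T2 hT2 => ?_
      have := step3 T1 T2 hT1 hT2; linarith
    have h3 : upperSInt H 𝒜L Z μ - upperSInt H 𝒜L Y μ ≤ upperSInt H 𝒜L X μ := by
      refine le_upperSInt hL hX hμ _ fun T1 hT1 => ?_
      have := h2 T1 hT1; linarith
    linarith
  have e1 := sintegrable hH hL hX hμ hcX
  have e2 := sintegrable hH hL hY hμ hcY
  have e3 := sintegrable hH hL hZ hμ hcZ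
  rw [← e3]
  rw [← e1, ← e2] at step2
  linarith
  
end Special3
end St16
namespace St16
section Special4

variable {Ω : Type*} {ι : Type*}
variable [Nonempty Ω] {H : ι → Set Ω} {𝒜L : Set (Set Ω)} {X X' : ι → ℝ} {μ μ' : Set Ω → ℝ}
variable (hH : IsPartition H) (hL : IsFieldOver H 𝒜L)
variable (hX : ∀ i, 0 ≤ X i ∧ X i ≤ 1) (hX' : ∀ i, 0 ≤ X' i ∧ X' i ≤ 1)
variable (hμ : IsFAP 𝒜L μ) (hμ' : IsFAP 𝒜L μ')

set_option linter.unusedSectionVars false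

include hH hL hX hX' hμ hμ' in
/-- Conditioning identity: if `X'` vanishes outside `B`, agrees with `X` on `B`, and
`μ (· ∩ B) = μ B * μ' ·` on `𝒜L`, then `∫ X' dμ = μ B * ∫ X dμ'`. -/
lemma lowerSInt_restrict {B : Set Ω} (hB : B ∈ 𝒜L) (hBne : B.Nonempty)
    (hzero : ∀ i, Disjoint (H i) B → X' i = 0) (heq : ∀ i, H i ⊆ B → X' i = X i)
    (hfac : ∀ A ∈ 𝒜L, μ (A ∩ B) = μ B * μ' A) :
    lowerSInt H 𝒜L X' μ = μ B * lowerSInt H 𝒜L X μ' := by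
  classical
  have hBc : Bᶜ ∈ 𝒜L := hL.1.2.1 _ hB
  have hBneq : B ≠ Bᶜ := by
    intro h
    obtain ⟨x, hx⟩ := hBne
    exact (h ▸ hx) hx
  have hμBnn : 0 ≤ μ B := FAP.nonneg hμ hB
  have hcompl_zero : ∀ i, H i ⊆ Bᶜ → X' i = 0 := by
    intro i hi
    exact hzero i (Set.disjoint_left.2 fun a ha hb => (hi ha) hb)
  refine le_antisymm ?_ ?_
  · -- ≤ : lowSum X' μ T ≤ μ B * lowerSInt X μ'
    refine lowerSInt_le hL hX' hμ _ fun T hT => ?_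
    set R := refine T ({B, Bᶜ} : Finset (Set Ω)) with hRdef
    have hRfin : IsFinPart 𝒜L R :=
      refine_finpart hL (finpart_toCover hT) (pair_cover hL hB)
    have h1 : lowSum H X' μ T ≤ lowSum H X' μ R :=
      lowSum_le_refine hL hX' hμ (finpart_toCover hT) (pair_cover hL hB)
    -- split R
    set S₁ := R.filter (fun C => C ⊆ B) with hS₁
    have hsub_cases : ∀ C ∈ R, C ⊆ B ∨ (C ⊆ Bᶜ ∧ C.Nonempty) := by
      intro C hC
      rw [hRdef, mem_refine_iff] at hC
      obtain ⟨A, hA, b, hb, rfl, hne⟩ := hC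
      simp only [Finset.mem_insert, Finset.mem_singleton] at hb
      rcases hb with rfl | rfl
      · exact Or.inl Set.inter_subset_right
      · exact Or.inr ⟨Set.inter_subset_right, hne⟩
    have hsplit : lowSum H X' μ R = ∑ C ∈ S₁, sInf (vals H X' C) * μ C := by
      rw [lowSum, ← Finset.sum_filter_add_sum_filter_not R (fun C => C ⊆ B)
        (fun C => sInf (vals H X' C) * μ C), hS₁]
      have : ∑ C ∈ R.filter (fun C => ¬ C ⊆ B), sInf (vals H X' C) * μ C = 0 := by
        refine Finset.sum_eq_zero fun C hC => ?_
        rw [Finset.mem_filter] at hC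
        obtain ⟨hCR, hnsub⟩ := hC
        rcases hsub_cases C hCR with h | ⟨hsubc, hne⟩
        · exact absurd h hnsub
        · rw [vals_const_eq hL (hRfin.1 hCR) hne
            (fun i hi => hcompl_zero i (hi.trans hsubc)), csInf_singleton, zero_mul]
      rw [this, add_zero]
    have hfirst : ∑ C ∈ S₁, sInf (vals H X' C) * μ C
        = μ B * ∑ C ∈ S₁, sInf (vals H X C) * μ' C := by
      rw [Finset.mul_sum]
      refine Finset.sum_congr rfl fun C hC => ?_
      rw [hS₁, Finset.mem_filter] at hC
      obtain ⟨hCR, hsubB⟩ := hC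
      have hCL : C ∈ 𝒜L := hRfin.1 hCR
      have hCne : C.Nonempty := hRfin.2.1 C hCR
      have e1 : vals H X' C = vals H X C :=
        vals_eq_of_eq_on hsubB (fun i hi => heq i hi)
      have e2 : μ C = μ B * μ' C := by
        conv_lhs => rw [← Set.inter_eq_self_of_subset_left hsubB]
        exact hfac C hCL
      rw [e1, e2]; ring
    -- build a partition for μ'
    have hQ : ∃ Q, IsFinPart 𝒜L Q ∧
        ∑ C ∈ S₁, sInf (vals H X C) * μ' C ≤ lowSum H X μ' Q := by
      have hS₁mem : ∀ C ∈ S₁, C ∈ 𝒜L ∧ C.Nonempty ∧ C ⊆ B := by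
        intro C hC
        rw [hS₁, Finset.mem_filter] at hC
        exact ⟨hRfin.1 hC.1, hRfin.2.1 C hC.1, hC.2⟩
      have hS₁disj : ∀ C ∈ S₁, ∀ D ∈ S₁, C ≠ D → Disjoint C D := by
        intro C hC D hD h
        rw [hS₁, Finset.mem_filter] at hC hD
        exact hRfin.2.2.1 C hC.1 D hD.1 h
      have hcoverB : ∀ x ∈ B, ∃ C ∈ S₁, x ∈ C := by
        intro x hx
        have : x ∈ ⋃₀ (↑R : Set (Set Ω)) := hRfin.2.2.2 ▸ Set.mem_univ x
        obtain ⟨C, hCR, hxC⟩ := this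
        rcases hsub_cases C hCR with h | ⟨hsubc, _⟩
        · exact ⟨C, by rw [hS₁]; exact Finset.mem_filter.2 ⟨hCR, h⟩, hxC⟩
        · exact absurd hx (hsubc hxC)
      rcases Set.eq_empty_or_nonempty Bᶜ with hBce | hBcne
      · -- B = univ
        have hBuniv : B = Set.univ := by
          rw [← Set.compl_empty_iff]; exact hBce
        refine ⟨S₁, ⟨?_, ?_, hS₁disj, ?_⟩, le_refl _⟩
        · intro C hC; exact (hS₁mem C hC).1
        · intro C hC; exact (hS₁mem C hC).2.1
        · apply Set.eq_univ_of_univ_subset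
          intro x _
          obtain ⟨C, hC, hxC⟩ := hcoverB x (hBuniv ▸ Set.mem_univ x)
          exact Set.mem_sUnion.2 ⟨C, hC, hxC⟩
      · -- adjoin Bᶜ
        have hBcnotin : Bᶜ ∉ S₁ := by
          intro hmem
          obtain ⟨_, hne, hsub⟩ := hS₁mem _ hmem
          obtain ⟨x, hx⟩ := hne
          exact hx (hsub hx)
        refine ⟨insert Bᶜ S₁, ⟨?_, ?_, ?_, ?_⟩, ?_⟩
        · intro C hC
          rcases Finset.mem_insert.1 (by exact_mod_cast hC) with rfl | h
          · exact hBc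
          · exact (hS₁mem C h).1
        · intro C hC
          rcases Finset.mem_insert.1 hC with rfl | h
          · exact hBcne
          · exact (hS₁mem C h).2.1
        · intro C hC D hD hCD
          rcases Finset.mem_insert.1 hC with rfl | h1 <;>
            rcases Finset.mem_insert.1 hD with rfl | h2
          · exact absurd rfl hCD
          · refine Disjoint.symm (Set.disjoint_left.2 ?_)
            intro a ha hb
            rw [Set.mem_compl_iff] at hb
            exact hb ((hS₁mem D h2).2.2 ha)
          · refine Set.disjoint_left.2 ?_
            intro a ha hb
            rw [Set.mem_compl_iff] at hb
            exact hb ((hS₁mem C h1).2.2 ha)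
          · exact hS₁disj C h1 D h2 hCD
        · apply Set.eq_univ_of_univ_subset
          intro x _
          by_cases hx : x ∈ B
          · obtain ⟨C, hC, hxC⟩ := hcoverB x hx
            exact Set.mem_sUnion.2 ⟨C, by exact_mod_cast Finset.mem_insert_of_mem hC, hxC⟩
          · exact Set.mem_sUnion.2 ⟨Bᶜ, by exact_mod_cast Finset.mem_insert_self _ _, hx⟩
        · rw [lowSum, Finset.sum_insert hBcnotin]
          have : 0 ≤ sInf (vals H X Bᶜ) * μ' Bᶜ :=
            mul_nonneg (sInf_vals_nonneg _ hX) (FAP.nonneg hμ' hBc)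
          linarith
    obtain ⟨Q, hQfin, hSQ⟩ := hQ
    have hfin : lowSum H X μ' Q ≤ lowerSInt H 𝒜L X μ' := lowSum_le_lowerSInt hL hX hμ' hQfin
    calc lowSum H X' μ T ≤ lowSum H X' μ R := h1
      _ = μ B * ∑ C ∈ S₁, sInf (vals H X C) * μ' C := by rw [hsplit, hfirst]
      _ ≤ μ B * lowerSInt H 𝒜L X μ' := by
          refine mul_le_mul_of_nonneg_left (le_trans hSQ hfin) hμBnn
  · -- ≥ : μ B * lowSum X μ' Q ≤ lowerSInt X' μ
    have key : ∀ Q, IsFinPart 𝒜L Q → μ B * lowSum H X μ' Q ≤ lowerSInt H 𝒜L X' μ := by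
      intro Q hQ
      set R := refine Q ({B, Bᶜ} : Finset (Set Ω)) with hRdef
      have hRfin : IsFinPart 𝒜L R :=
        refine_finpart hL (finpart_toCover hQ) (pair_cover hL hB)
      have hpair := lowSum_refine_pair hL hμ hQ hB hBneq (X := X')
      have h2 : μ B * lowSum H X μ' Q ≤ lowSum H X' μ R := by
        rw [hRdef, hpair, lowSum, Finset.mul_sum]
        refine Finset.sum_le_sum fun A hA => ?_
        have hAL : A ∈ 𝒜L := hQ.1 hA
        have hABL : A ∩ B ∈ 𝒜L := SF.inter hL.1 hAL hB
        have hterm2 : 0 ≤ sInf (vals H X' (A ∩ Bᶜ)) * μ (A ∩ Bᶜ) :=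
          mul_nonneg (sInf_vals_nonneg _ hX') (FAP.nonneg hμ (SF.inter hL.1 hAL hBc))
        have hterm1 : μ B * (sInf (vals H X A) * μ' A)
            ≤ sInf (vals H X' (A ∩ B)) * μ (A ∩ B) := by
          rcases Set.eq_empty_or_nonempty (A ∩ B) with hABe | hABne
          · have h0 : μ B * μ' A = 0 := by
              rw [← hfac A hAL, hABe, FAP.empty hL.1 hμ]
            have : μ (A ∩ B) = 0 := by rw [hABe, FAP.empty hL.1 hμ]
            rw [this, mul_zero]
            nlinarith [sInf_vals_nonneg (H := H) A hX]
          · have e1 : vals H X' (A ∩ B) = vals H X (A ∩ B) :=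
              vals_eq_of_eq_on Set.inter_subset_right (fun i hi => heq i hi)
            have e2 : sInf (vals H X A) ≤ sInf (vals H X (A ∩ B)) :=
              csInf_le_csInf (vals_bddBelow hX) (vals_nonempty hL hABL hABne)
                (vals_mono Set.inter_subset_left)
            have e3 : 0 ≤ μ (A ∩ B) := FAP.nonneg hμ hABL
            have e4 : 0 ≤ μ' A := FAP.nonneg hμ' hAL
            rw [e1, hfac A hAL]
            nlinarith [mul_le_mul_of_nonneg_right e2 (mul_nonneg hμBnn e4)]
        linarith
      exact le_trans h2 (lowSum_le_lowerSInt hL hX' hμ hRfin)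
    rcases eq_or_lt_of_le hμBnn with h0 | hpos
    · rw [← h0, zero_mul]
      exact lowerSInt_nonneg hL hX' hμ
    · have : lowerSInt H 𝒜L X μ' ≤ lowerSInt H 𝒜L X' μ / μ B := by
        refine lowerSInt_le hL hX hμ' _ fun Q hQ => ?_
        rw [le_div_iff₀ hpos]
        have := key Q hQ; linarith [mul_comm (lowSum H X μ' Q) (μ B)]
      rw [div_eq_mul_inv] at this
      calc μ B * lowerSInt H 𝒜L X μ' ≤ μ B * (lowerSInt H 𝒜L X' μ * (μ B)⁻¹) :=
            mul_le_mul_of_nonneg_left this hμBnn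
        _ = lowerSInt H 𝒜L X' μ := by field_simp

end Special4
end St16
namespace St16
section Nu

variable {Ω : Type*} {ι : Type*}

/-- Minimal atom index inside `K` for a fixed well-ordering of `ι`. -/
noncomputable def sel (H : ι → Set Ω) (K : Set Ω) (h : ∃ i, H i ⊆ K) : ι :=
  (IsWellFounded.wf (r := WellOrderingRel (α := ι))).min {i | H i ⊆ K} h

lemma sel_mem {H : ι → Set Ω} {K : Set Ω} (h : ∃ i, H i ⊆ K) : H (sel H K h) ⊆ K :=
  (IsWellFounded.wf (r := WellOrderingRel (α := ι))).min_mem {i | H i ⊆ K} h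

lemma sel_not_lt {H : ι → Set Ω} {K : Set Ω} (h : ∃ i, H i ⊆ K) {i : ι} (hi : H i ⊆ K) :
    ¬ WellOrderingRel i (sel H K h) :=
  (IsWellFounded.wf (r := WellOrderingRel (α := ι))).not_lt_min {i | H i ⊆ K} hi

lemma sel_eq {H : ι → Set Ω} {K B : Set Ω} (hK : ∃ i, H i ⊆ K) (hB : ∃ i, H i ⊆ B)
    (hBK : B ⊆ K) (hsel : H (sel H K hK) ⊆ B) : sel H B hB = sel H K hK := by
  have h1 : ¬ WellOrderingRel (sel H B hB) (sel H K hK) :=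
    sel_not_lt hK ((sel_mem hB).trans hBK)
  have h2 : ¬ WellOrderingRel (sel H K hK) (sel H B hB) := sel_not_lt hB hsel
  rcases trichotomous_of (WellOrderingRel (α := ι)) (sel H B hB) (sel H K hK) with h | h | h
  · exact absurd h h1
  · exact h
  · exact absurd h h2

/-- A full conditional probability on `𝒜L` extending `π`. -/
noncomputable def nu (H : ι → Set Ω) (π : Set Ω → ℝ) (A K : Set Ω) : ℝ :=
  if 0 < π K then π (A ∩ K) / π K
  else if h : ∃ i, H i ⊆ K then (if H (sel H K h) ⊆ A ∩ K then 1 else 0) else 0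

variable [Nonempty Ω] {H : ι → Set Ω} {𝒜L : Set (Set Ω)} {π : Set Ω → ℝ}
variable (hH : IsPartition H) (hL : IsFieldOver H 𝒜L) (hπ : IsFAP 𝒜L π)

set_option linter.unusedSectionVars false

include hH hL hπ in
lemma nu_fap {K : Set Ω} (hK : K ∈ 𝒜L) (hKne : K.Nonempty) :
    IsFAP 𝒜L (fun A => nu H π A K) := by
  classical
  have hex : ∃ i, H i ⊆ K := exists_atom_subset hL hK hKne
  by_cases hpos : 0 < π K
  · refine ⟨?_, ?_, ?_⟩
    · intro A hA
      have h1 : 0 ≤ π (A ∩ K) := FAP.nonneg hπ (SF.inter hL.1 hA hK)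
      have h2 : π (A ∩ K) ≤ π K :=
        FAP.mono hL.1 hπ (SF.inter hL.1 hA hK) hK Set.inter_subset_right
      simp only [nu, if_pos hpos]
      constructor
      · positivity
      · rw [div_le_one hpos]; exact h2
    · simp only [nu, if_pos hpos, Set.univ_inter]
      rw [div_self hpos.ne']
    · intro A hA B hB hAB
      simp only [nu, if_pos hpos]
      rw [Set.union_inter_distrib_right, hπ.2.2 _ (SF.inter hL.1 hA hK) _
        (SF.inter hL.1 hB hK) (hAB.mono Set.inter_subset_left Set.inter_subset_left),
        add_div]
  · refine ⟨?_, ?_, ?_⟩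
    · intro A hA
      simp only [nu, if_neg hpos, dif_pos hex]
      by_cases h : H (sel H K hex) ⊆ A ∩ K <;> simp [h]
    · simp only [nu, if_neg hpos, dif_pos hex, Set.univ_inter, if_pos (sel_mem hex)]
    · intro A hA B hB hAB
      simp only [nu, if_neg hpos, dif_pos hex]
      have hAK : A ∩ K ∈ 𝒜L := SF.inter hL.1 hA hK
      have hBK : B ∩ K ∈ 𝒜L := SF.inter hL.1 hB hK
      have hdist : (A ∪ B) ∩ K = (A ∩ K) ∪ (B ∩ K) := Set.union_inter_distrib_right A B K
      set s := sel H K hex with hs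
      have hC : ¬ (H s ⊆ A ∩ K ∧ H s ⊆ B ∩ K) := by
        rintro ⟨h1, h2⟩
        have hd : Disjoint (A ∩ K) (B ∩ K) :=
          hAB.mono Set.inter_subset_left Set.inter_subset_left
        obtain ⟨x, hx⟩ := hH.1 s
        exact Set.disjoint_left.1 hd (h1 hx) (h2 hx)
      by_cases h1 : H s ⊆ A ∩ K
      · have h2 : ¬ H s ⊆ B ∩ K := fun h => hC ⟨h1, h⟩
        have h3 : H s ⊆ (A ∪ B) ∩ K := h1.trans (hdist ▸ Set.subset_union_left)
        rw [if_pos h3, if_pos h1, if_neg h2]; ring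
      · by_cases h2 : H s ⊆ B ∩ K
        · have h3 : H s ⊆ (A ∪ B) ∩ K := h2.trans (hdist ▸ Set.subset_union_right)
          rw [if_pos h3, if_pos h2, if_neg h1]; ring
        · have h3 : ¬ H s ⊆ (A ∪ B) ∩ K := by
            intro h
            rcases atom_subset_or_disjoint hH hL hAK s with hsub | hdisj
            · exact h1 hsub
            · refine h2 fun x hx => ?_
              have hx' := h hx
              rw [hdist] at hx'
              rcases hx' with hx' | hx'
              · exact absurd hx' (Set.disjoint_left.1 hdisj hx)
              · exact hx'
          rw [if_neg h3, if_neg h1, if_neg h2]; ring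

end Nu
end St16
namespace St16
section Nu2

variable {Ω : Type*} {ι : Type*}
variable [Nonempty Ω] {H : ι → Set Ω} {𝒜L : Set (Set Ω)} {π : Set Ω → ℝ}
variable (hH : IsPartition H) (hL : IsFieldOver H 𝒜L) (hπ : IsFAP 𝒜L π)

set_option linter.unusedSectionVars false

include hL in
lemma nu_self {K : Set Ω} (hK : K ∈ 𝒜L) (hKne : K.Nonempty) : nu H π K K = 1 := by
  classical
  have hex : ∃ i, H i ⊆ K := exists_atom_subset hL hK hKne
  by_cases hpos : 0 < π K
  · simp only [nu, if_pos hpos, Set.inter_self]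
    rw [div_self hpos.ne']
  · simp only [nu, if_neg hpos, dif_pos hex, Set.inter_self, if_pos (sel_mem hex)]

lemma nu_inter (A K : Set Ω) : nu H π A K = nu H π (A ∩ K) K := by
  classical
  by_cases hpos : 0 < π K
  · simp only [nu, if_pos hpos, Set.inter_assoc, Set.inter_self]
  · simp only [nu, if_neg hpos, Set.inter_assoc, Set.inter_self]

lemma nu_univ (hπu : π Set.univ = 1) (A : Set Ω) : nu H π A Set.univ = π A := by
  have hpos : 0 < π Set.univ := by rw [hπu]; norm_num
  simp only [nu, if_pos hpos, Set.inter_univ, hπu, div_one]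
  rw [if_pos one_pos]

include hH hL hπ in
/-- The chain rule for `nu`. -/
lemma nu_chain {A B K : Set Ω} (hA : A ∈ 𝒜L) (hB : B ∈ 𝒜L) (hK : K ∈ 𝒜L)
    (hBK : B ⊆ K) (hBne : B.Nonempty) (hKne : K.Nonempty) :
    nu H π (A ∩ B) K = nu H π B K * nu H π A B := by
  classical
  have hexK : ∃ i, H i ⊆ K := exists_atom_subset hL hK hKne
  have hexB : ∃ i, H i ⊆ B := exists_atom_subset hL hB hBne
  have hπB : 0 ≤ π B := FAP.nonneg hπ hB
  have hABK : A ∩ B ∩ K = A ∩ B := by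
    rw [Set.inter_assoc, Set.inter_eq_self_of_subset_left hBK]
  have hBKe : B ∩ K = B := Set.inter_eq_self_of_subset_left hBK
  by_cases hposK : 0 < π K
  · by_cases hposB : 0 < π B
    · simp only [nu, if_pos hposK, if_pos hposB, hABK, hBKe]
      field_simp
    · have hB0 : π B = 0 := le_antisymm (by linarith [not_lt.1 hposB]) hπB
      have hAB0 : π (A ∩ B) = 0 := by
        have h1 : π (A ∩ B) ≤ π B :=
          FAP.mono hL.1 hπ (SF.inter hL.1 hA hB) hB Set.inter_subset_right
        have h2 : 0 ≤ π (A ∩ B) := FAP.nonneg hπ (SF.inter hL.1 hA hB)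
        linarith
      simp only [nu, if_pos hposK, hABK, hBKe, hAB0, hB0, zero_div, zero_mul]
  · have hK0 : π K = 0 := le_antisymm (not_lt.1 hposK) (FAP.nonneg hπ hK)
    have hB0 : π B = 0 := by
      have := FAP.mono hL.1 hπ hB hK hBK
      linarith
    have hposB : ¬ 0 < π B := by rw [hB0]; exact lt_irrefl 0
    simp only [nu, if_neg hposK, if_neg hposB, dif_pos hexK, dif_pos hexB]
    set s := sel H K hexK with hs
    have hsK : H s ⊆ K := sel_mem hexK
    by_cases hsB : H s ⊆ B ∩ K
    · have hsB' : H s ⊆ B := hsB.trans Set.inter_subset_left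
      have hsel : sel H B hexB = s := sel_eq hexK hexB hBK hsB'
      rw [if_pos hsB, one_mul, hsel]
      have h1 : H s ⊆ A ∩ B ∩ K ↔ H s ⊆ A ∩ B := by
        rw [hABK]
      have h2 : H s ⊆ A ∩ B ↔ H s ⊆ A ∩ B := Iff.rfl
      by_cases hfinal : H s ⊆ A ∩ B
      · rw [if_pos (h1.2 hfinal), if_pos hfinal]
      · rw [if_neg (fun h => hfinal (h1.1 h)), if_neg hfinal]
    · rw [if_neg hsB, zero_mul, if_neg]
      intro h
      rw [hABK] at h
      exact hsB (Set.subset_inter (h.trans Set.inter_subset_right) hsK)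

end Nu2
end St16
namespace St16
section Pcan

variable {Ω : Type*} {ι : Type*}

/-- The canonical fully disintegrable conditional probability built from `π`, `σ`. -/
noncomputable def Pcan (H : ι → Set Ω) (𝒜L : Set (Set Ω)) (π : Set Ω → ℝ)
    (σ : Set Ω → ι → ℝ) (F K : Set Ω) : ℝ :=
  lowerSInt H 𝒜L (fun i => σ F i) (fun B => nu H π B K)

variable [Nonempty Ω] {H : ι → Set Ω} {𝒜L 𝒜 : Set (Set Ω)} {π : Set Ω → ℝ}
  {σ : Set Ω → ι → ℝ}
variable (hH : IsPartition H) (hL : IsFieldOver H 𝒜L) (hπ : IsFAP 𝒜L π)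
variable (h𝒜 : IsSetField 𝒜) (hsub : 𝒜L ⊆ 𝒜) (hσ : IsStrategy 𝒜 H σ)
variable (hcont : ∀ F ∈ 𝒜, ALContinuous H 𝒜L fun i => σ F i)

set_option linter.unusedSectionVars false

include hσ in
lemma sigma_bdd {F : Set Ω} (hF : F ∈ 𝒜) : ∀ i, 0 ≤ σ F i ∧ σ F i ≤ 1 :=
  fun i => (hσ i).1.1 F hF

include h𝒜 hσ in
lemma sigma_disj_zero {F : Set Ω} (hF : F ∈ 𝒜) {i : ι} (hd : Disjoint (H i) F) :
    σ F i = 0 := by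
  have h1 : H i ⊆ Fᶜ := fun x hx => Set.disjoint_left.1 hd hx
  have h2 : σ Fᶜ i = 1 := (hσ i).2 Fᶜ (h𝒜.2.1 F hF) h1
  have h3 := FAP.compl h𝒜 (hσ i).1 hF
  linarith

include h𝒜 hσ in
lemma sigma_inter_eq {E K : Set Ω} (hE : E ∈ 𝒜) (hK : K ∈ 𝒜) {i : ι} (hi : H i ⊆ K) :
    σ (E ∩ K) i = σ E i := by
  have hEK : E ∩ K ∈ 𝒜 := SF.inter h𝒜 hE hK
  have hEKc : E ∩ Kᶜ ∈ 𝒜 := SF.inter h𝒜 hE (h𝒜.2.1 K hK)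
  have hd : Disjoint (E ∩ K) (E ∩ Kᶜ) :=
    Set.disjoint_of_subset Set.inter_subset_right Set.inter_subset_right
      disjoint_compl_right
  have hu : (E ∩ K) ∪ (E ∩ Kᶜ) = E := by
    rw [← Set.inter_union_distrib_left, Set.union_compl_self, Set.inter_univ]
  have hadd := (hσ i).1.2.2 _ hEK _ hEKc hd
  rw [hu] at hadd
  have hz : σ (E ∩ Kᶜ) i = 0 := by
    refine sigma_disj_zero h𝒜 hσ hEKc ?_
    exact Set.disjoint_left.2 fun x hx hmem => hmem.2 (hi hx)
  simp only at hadd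
  linarith

include hH in
lemma atom_disj_of_inter {E K : Set Ω} {i : ι} (hi : H i ⊆ K)
    (hd : Disjoint (H i) (E ∩ K)) : Disjoint (H i) E :=
  Set.disjoint_left.2 fun x hx hmem => Set.disjoint_left.1 hd hx ⟨hmem, hi hx⟩

include hH hL hπ h𝒜 hsub hσ in
/-- `Pcan` agrees with `nu` on events whose trace on `K` is in `𝒜L`. -/
lemma Pcan_eq_nu {E K : Set Ω} (hE : E ∈ 𝒜) (hK : K ∈ 𝒜L) (hKne : K.Nonempty)
    (hEK : E ∩ K ∈ 𝒜L) : Pcan H 𝒜L π σ E K = nu H π (E ∩ K) K := by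
  classical
  have hν : IsFAP 𝒜L (fun B => nu H π B K) := nu_fap hH hL hπ hK hKne
  have hνK : nu H π K K = 1 := nu_self hL hK hKne
  set X' : ι → ℝ := fun i => if H i ⊆ E ∩ K then 1 else 0 with hX'def
  have hX'b : ∀ i, 0 ≤ X' i ∧ X' i ≤ 1 := by
    intro i; rw [hX'def]; by_cases h : H i ⊆ E ∩ K <;> simp [h]
  have heq : ∀ i, H i ⊆ K → σ E i = X' i := by
    intro i hi
    rcases atom_subset_or_disjoint hH hL hEK i with hsube | hdisj
    · rw [hX'def]
      simp only [if_pos hsube]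
      exact (hσ i).2 E hE (hsube.trans Set.inter_subset_left)
    · have hd : Disjoint (H i) E := atom_disj_of_inter hH hi hdisj
      have h0 : σ E i = 0 := sigma_disj_zero h𝒜 hσ hE hd
      have hns : ¬ H i ⊆ E ∩ K := by
        intro hc
        obtain ⟨x, hx⟩ := hH.1 i
        exact Set.disjoint_left.1 hdisj hx (hc hx)
      rw [hX'def, h0]
      simp only [if_neg hns]
  have e1 : Pcan H 𝒜L π σ E K = lowerSInt H 𝒜L X' (fun B => nu H π B K) :=
    lowerSInt_eq_on hH hL (sigma_bdd hσ hE) hX'b hν hK hνK heq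
  rw [e1]
  refine lowerSInt_indicator hH hL hν hEK hX'b ?_ ?_
  · intro i hi; rw [hX'def]; simp only [if_pos hi]
  · intro i hd
    have hns : ¬ H i ⊆ E ∩ K := by
      intro hc
      obtain ⟨x, hx⟩ := hH.1 i
      exact Set.disjoint_left.1 hd hx (hc hx)
    rw [hX'def]; simp only [if_neg hns]

include hH hL hπ h𝒜 hsub hσ hcont in
theorem Pcan_mem : Pcan H 𝒜L π σ ∈ PfdSet 𝒜 𝒜L H π σ := by
  classical
  have hνfap : ∀ K ∈ 𝒜L, K.Nonempty → IsFAP 𝒜L (fun B => nu H π B K) :=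
    fun K hK hKne => nu_fap hH hL hπ hK hKne
  refine ⟨?_, ?_, ?_, ?_, ?_, ?_⟩
  · -- (1) conditioning
    intro E hE K hK hKne
    have hν := hνfap K hK hKne
    exact lowerSInt_eq_on hH hL (sigma_bdd hσ hE) (sigma_bdd hσ (SF.inter h𝒜 hE (hsub hK)))
      hν hK (nu_self hL hK hKne) fun i hi => (sigma_inter_eq h𝒜 hσ hE (hsub hK) hi).symm
  · -- (2) FAP in the first argument
    intro K hK hKne
    have hν := hνfap K hK hKne
    refine ⟨?_, ?_, ?_⟩
    · intro E hE
      exact ⟨lowerSInt_nonneg hL (sigma_bdd hσ hE) hν,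
        lowerSInt_le_one hL (sigma_bdd hσ hE) hν⟩
    · have huniv : (fun i => σ Set.univ i) = fun _ => (1:ℝ) :=
        funext fun i => (hσ i).1.2.1
      show lowerSInt H 𝒜L (fun i => σ Set.univ i) (fun B => nu H π B K) = 1
      rw [huniv]
      exact lowerSInt_const hL hν zero_le_one le_rfl
    · intro E hE F hF hd
      exact lowerSInt_add hH hL (sigma_bdd hσ hE) (sigma_bdd hσ hF)
        (sigma_bdd hσ (h𝒜.2.2 E hE F hF)) hν
        (fun i => by
          have := (hσ i).1.2.2 E hE F hF hd
          simpa using this)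
        (hcont E hE) (hcont F hF) (hcont (E ∪ F) (h𝒜.2.2 E hE F hF))
  · -- (3) chain rule
    intro E hE F hF K hK hKne hEKL hEKne
    set B := E ∩ K with hBdef
    have hBK : B ⊆ K := Set.inter_subset_right
    have hν := hνfap K hK hKne
    have hνB := hνfap B hEKL hEKne
    set X'' : ι → ℝ := fun i => if H i ⊆ B then σ F i else 0 with hX''def
    have hX''b : ∀ i, 0 ≤ X'' i ∧ X'' i ≤ 1 := by
      intro i; rw [hX''def]
      by_cases h : H i ⊆ B
      · simpa [h] using sigma_bdd hσ hF i
      · simp [h]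
    have hEF : E ∩ F ∈ 𝒜 := SF.inter h𝒜 hE hF
    -- replace σ (E∩F) by X'' over K
    have heq : ∀ i, H i ⊆ K → σ (E ∩ F) i = X'' i := by
      intro i hi
      rcases atom_subset_or_disjoint hH hL hEKL i with hsube | hdisj
      · have hiE : H i ⊆ E := hsube.trans Set.inter_subset_left
        have h1 : σ (F ∩ E) i = σ F i := sigma_inter_eq h𝒜 hσ hF hE hiE
        rw [hX''def]
        simp only [if_pos hsube]
        rw [← h1, Set.inter_comm]
      · have hdE : Disjoint (H i) E := atom_disj_of_inter hH hi hdisj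
        have hdEF : Disjoint (H i) (E ∩ F) := hdE.mono_right Set.inter_subset_left
        have hns : ¬ H i ⊆ B := by
          intro hc
          obtain ⟨x, hx⟩ := hH.1 i
          exact Set.disjoint_left.1 hdisj hx (hc hx)
        rw [hX''def, sigma_disj_zero h𝒜 hσ hEF hdEF]
        simp only [if_neg hns]
    have e1 : Pcan H 𝒜L π σ (E ∩ F) K = lowerSInt H 𝒜L X'' (fun B' => nu H π B' K) :=
      lowerSInt_eq_on hH hL (sigma_bdd hσ hEF) hX''b hν hK (nu_self hL hK hKne) heq
    have e2 : lowerSInt H 𝒜L X'' (fun B' => nu H π B' K)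
        = nu H π B K * lowerSInt H 𝒜L (fun i => σ F i) (fun B' => nu H π B' B) := by
      refine lowerSInt_restrict hH hL (sigma_bdd hσ hF) hX''b hν hνB hEKL hEKne ?_ ?_ ?_
      · intro i hd
        have hns : ¬ H i ⊆ B := by
          intro hc
          obtain ⟨x, hx⟩ := hH.1 i
          exact Set.disjoint_left.1 hd hx (hc hx)
        rw [hX''def]; simp only [if_neg hns]
      · intro i hi; rw [hX''def]; simp only [if_pos hi]
      · intro A hA
        exact nu_chain hH hL hπ hA hEKL hK hBK hEKne hKne
    have e3 : Pcan H 𝒜L π σ E K = nu H π B K :=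
      Pcan_eq_nu hH hL hπ h𝒜 hsub hσ hE hK hKne hEKL
    rw [e1, e2, e3]
    rfl
  · -- (4) extends the prior
    intro B hB
    have huniv𝒜L : Set.univ ∈ 𝒜L := hL.1.1
    have h1 : Pcan H 𝒜L π σ B Set.univ = nu H π (B ∩ Set.univ) Set.univ :=
      Pcan_eq_nu hH hL hπ h𝒜 hsub hσ (hsub hB) huniv𝒜L Set.univ_nonempty
        (by rwa [Set.inter_univ])
    rw [h1, Set.inter_univ, nu_univ hπ.2.1]
  · -- (5) extends the strategy
    intro F hF i
    have hHi : H i ∈ 𝒜L := hL.2.1 i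
    have hHine : (H i).Nonempty := hH.1 i
    have hν := hνfap (H i) hHi hHine
    have heq : ∀ j, H j ⊆ H i → σ F j = σ F i := by
      intro j hj
      rcases eq_or_ne j i with rfl | hne
      · rfl
      · obtain ⟨x, hx⟩ := hH.1 j
        exact absurd (Set.disjoint_left.1 (hH.2.1 hne) hx (hj hx)) (fun h => h)
    have e1 : Pcan H 𝒜L π σ F (H i)
        = lowerSInt H 𝒜L (fun _ => σ F i) (fun B => nu H π B (H i)) :=
      lowerSInt_eq_on hH hL (sigma_bdd hσ hF) (fun _ => sigma_bdd hσ hF i) hν hHi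
        (nu_self hL hHi hHine) heq
    rw [e1]
    exact lowerSInt_const hL hν (sigma_bdd hσ hF i).1 (sigma_bdd hσ hF i).2
  · -- (6) full disintegrability
    intro F hF K hK hKne
    have hagree : ∀ A ∈ 𝒜L, nu H π A K = Pcan H 𝒜L π σ A K := by
      intro A hA
      have h1 := Pcan_eq_nu hH hL hπ h𝒜 hsub hσ (hsub hA) hK hKne (SF.inter hL.1 hA hK)
      rw [h1, ← nu_inter]
    show lowerSInt H 𝒜L (fun i => σ F i) (fun B => nu H π B K)
      = lowerSInt H 𝒜L (fun i => σ F i) (fun B => Pcan H 𝒜L π σ B K)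
    exact lowerSInt_congr hagree

end Pcan
end St16
namespace St16

lemma FAP.restrict {Ω : Type*} {𝒜 𝒜L : Set (Set Ω)} {μ : Set Ω → ℝ}
    (hsub : 𝒜L ⊆ 𝒜) (h : IsFAP 𝒜 μ) : IsFAP 𝒜L μ :=
  ⟨fun A hA => h.1 A (hsub hA), h.2.1, fun A hA B hB => h.2.2 A (hsub hA) B (hsub hB)⟩

end St16
open St16 in
/-- `𝒫^fd` is a nonempty compact subset of `[0,1]^(𝒜 × 𝒜L⁰)` with the
product topology of pointwise convergence. -/
theorem statement16 {Ω ι κ : Type*} [Nonempty Ω] (H : ι → Set Ω) (E : κ → Set Ω)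
    (𝒜L 𝒜E 𝒜 : Set (Set Ω))
    (hH : IsPartition H) (hE : IsPartition E)
    (h𝒜L : IsFieldOver H 𝒜L) (h𝒜E : IsFieldOver E 𝒜E)
    (h𝒜 : IsJointField H E 𝒜L 𝒜E 𝒜)
    (π : Set Ω → ℝ) (hπ : IsFAP 𝒜L π)
    (σ : Set Ω → ι → ℝ) (hσ : IsStrategy 𝒜 H σ)
    (hcont : ∀ F ∈ 𝒜, ALContinuous H 𝒜L fun i => σ F i) :
    (restrictPairs 𝒜 𝒜L '' PfdSet 𝒜 𝒜L H π σ).Nonempty ∧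
    IsCompact (restrictPairs 𝒜 𝒜L '' PfdSet 𝒜 𝒜L H π σ) := by
  classical
  have hfield : IsSetField 𝒜 := h𝒜.1
  have hsub : 𝒜L ⊆ 𝒜 := h𝒜.2.1
  have hL : IsFieldOver H 𝒜L := h𝒜L
  constructor
  · exact ⟨restrictPairs 𝒜 𝒜L (Pcan H 𝒜L π σ),
      Set.mem_image_of_mem _ (Pcan_mem hH hL hπ hfield hsub hσ hcont)⟩
  · set S := restrictPairs 𝒜 𝒜L '' PfdSet 𝒜 𝒜L H π σ with hSdef
    have hsubset : S ⊆ Set.pi Set.univ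
        (fun _ : {p : Set Ω × Set Ω // p.1 ∈ 𝒜 ∧ p.2 ∈ 𝒜L ∧ p.2.Nonempty} =>
          Set.Icc (0:ℝ) 1) := by
      rintro y ⟨P', hP', rfl⟩
      intro q _
      obtain ⟨h1, h2, h3⟩ := q.prop
      exact (hP'.2.1 q.val.2 h2 h3).1 q.val.1 h1
    have hclosed : IsClosed S := by
      rw [← closure_subset_iff_isClosed]
      intro x hx
      have hext : ∀ (C : Set ({p : Set Ω × Set Ω // p.1 ∈ 𝒜 ∧ p.2 ∈ 𝒜L ∧ p.2.Nonempty} → ℝ)),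
          IsClosed C → (∀ P' ∈ PfdSet 𝒜 𝒜L H π σ, restrictPairs 𝒜 𝒜L P' ∈ C) → x ∈ C := by
        intro C hC hSC
        refine closure_minimal ?_ hC hx
        rintro y ⟨P', hP', rfl⟩
        exact hSC P' hP'
      set P : Set Ω → Set Ω → ℝ := fun F K =>
        if h : F ∈ 𝒜 ∧ K ∈ 𝒜L ∧ K.Nonempty then x ⟨(F, K), h⟩ else 0 with hPdef
      have hPcoord : ∀ (F K : Set Ω) (h : F ∈ 𝒜 ∧ K ∈ 𝒜L ∧ K.Nonempty),
          P F K = x ⟨(F, K), h⟩ := by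
        intro F K h; rw [hPdef]; exact dif_pos h
      -- condition (1)
      have hc1 : ∀ E' ∈ 𝒜, ∀ K ∈ 𝒜L, K.Nonempty → P E' K = P (E' ∩ K) K := by
        intro E' hE' K hK hKne
        have h1 : E' ∩ K ∈ 𝒜 := SF.inter hfield hE' (hsub hK)
        have key := hext {y | y ⟨(E', K), hE', hK, hKne⟩ = y ⟨(E' ∩ K, K), h1, hK, hKne⟩}
          (isClosed_eq (continuous_apply _) (continuous_apply _))
          (fun P' hP' => hP'.1 E' hE' K hK hKne)
        rw [hPcoord E' K ⟨hE', hK, hKne⟩, hPcoord (E' ∩ K) K ⟨h1, hK, hKne⟩]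
        exact key
      -- condition (2)
      have hc2 : ∀ K ∈ 𝒜L, K.Nonempty → IsFAP 𝒜 fun E' => P E' K := by
        intro K hK hKne
        refine ⟨?_, ?_, ?_⟩
        · intro A hA
          have key1 := hext {y | 0 ≤ y ⟨(A, K), hA, hK, hKne⟩}
            (isClosed_le continuous_const (continuous_apply _))
            (fun P' hP' => ((hP'.2.1 K hK hKne).1 A hA).1)
          have key2 := hext {y | y ⟨(A, K), hA, hK, hKne⟩ ≤ 1}
            (isClosed_le (continuous_apply _) continuous_const)
            (fun P' hP' => ((hP'.2.1 K hK hKne).1 A hA).2)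
          show 0 ≤ P A K ∧ P A K ≤ 1
          rw [hPcoord A K ⟨hA, hK, hKne⟩]
          exact ⟨key1, key2⟩
        · have key := hext {y | y ⟨(Set.univ, K), hfield.1, hK, hKne⟩ = 1}
            (isClosed_eq (continuous_apply _) continuous_const)
            (fun P' hP' => (hP'.2.1 K hK hKne).2.1)
          show P Set.univ K = 1
          rw [hPcoord Set.univ K ⟨hfield.1, hK, hKne⟩]
          exact key
        · intro A hA B hB hd
          have hAB : A ∪ B ∈ 𝒜 := hfield.2.2 A hA B hB
          have key := hext {y | y ⟨(A ∪ B, K), hAB, hK, hKne⟩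
              = y ⟨(A, K), hA, hK, hKne⟩ + y ⟨(B, K), hB, hK, hKne⟩}
            (isClosed_eq (continuous_apply _)
              ((continuous_apply (⟨(A, K), hA, hK, hKne⟩ :
                  {p : Set Ω × Set Ω // p.1 ∈ 𝒜 ∧ p.2 ∈ 𝒜L ∧ p.2.Nonempty})).add
                (continuous_apply (⟨(B, K), hB, hK, hKne⟩ : {p : Set Ω × Set Ω // p.1 ∈ 𝒜 ∧ p.2 ∈ 𝒜L ∧ p.2.Nonempty}))))
            (fun P' hP' => (hP'.2.1 K hK hKne).2.2 A hA B hB hd)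
          show P (A ∪ B) K = P A K + P B K
          rw [hPcoord (A ∪ B) K ⟨hAB, hK, hKne⟩, hPcoord A K ⟨hA, hK, hKne⟩,
            hPcoord B K ⟨hB, hK, hKne⟩]
          exact key
      -- condition (3)
      have hc3 : ∀ E' ∈ 𝒜, ∀ F ∈ 𝒜, ∀ K ∈ 𝒜L, K.Nonempty → E' ∩ K ∈ 𝒜L →
          (E' ∩ K).Nonempty → P (E' ∩ F) K = P E' K * P F (E' ∩ K) := by
        intro E' hE' F hF K hK hKne hEKL hEKne
        have h1 : E' ∩ F ∈ 𝒜 := SF.inter hfield hE' hF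
        have key := hext {y | y ⟨(E' ∩ F, K), h1, hK, hKne⟩
            = y ⟨(E', K), hE', hK, hKne⟩ * y ⟨(F, E' ∩ K), hF, hEKL, hEKne⟩}
          (isClosed_eq (continuous_apply _)
            ((continuous_apply (⟨(E', K), hE', hK, hKne⟩ :
                {p : Set Ω × Set Ω // p.1 ∈ 𝒜 ∧ p.2 ∈ 𝒜L ∧ p.2.Nonempty})).mul
              (continuous_apply (⟨(F, E' ∩ K), hF, hEKL, hEKne⟩ : {p : Set Ω × Set Ω // p.1 ∈ 𝒜 ∧ p.2 ∈ 𝒜L ∧ p.2.Nonempty}))))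
          (fun P' hP' => hP'.2.2.1 E' hE' F hF K hK hKne hEKL hEKne)
        rw [hPcoord (E' ∩ F) K ⟨h1, hK, hKne⟩, hPcoord E' K ⟨hE', hK, hKne⟩,
          hPcoord F (E' ∩ K) ⟨hF, hEKL, hEKne⟩]
        exact key
      -- condition (4)
      have hc4 : ∀ B ∈ 𝒜L, P B Set.univ = π B := by
        intro B hB
        have hu : Set.univ ∈ 𝒜L := hL.1.1
        have key := hext {y | y ⟨(B, Set.univ), hsub hB, hu, Set.univ_nonempty⟩ = π B}
          (isClosed_eq (continuous_apply _) continuous_const)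
          (fun P' hP' => hP'.2.2.2.1 B hB)
        rw [hPcoord B Set.univ ⟨hsub hB, hu, Set.univ_nonempty⟩]
        exact key
      -- condition (5)
      have hc5 : ∀ F ∈ 𝒜, ∀ i, P F (H i) = σ F i := by
        intro F hF i
        have key := hext {y | y ⟨(F, H i), hF, hL.2.1 i, hH.1 i⟩ = σ F i}
          (isClosed_eq (continuous_apply _) continuous_const)
          (fun P' hP' => hP'.2.2.2.2.1 F hF i)
        rw [hPcoord F (H i) ⟨hF, hL.2.1 i, hH.1 i⟩]
        exact key
      -- condition (6)
      have hc6 : ∀ F ∈ 𝒜, ∀ K ∈ 𝒜L, K.Nonempty →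
          P F K = lowerSInt H 𝒜L (fun i => σ F i) fun B => P B K := by
        intro F hF K hK hKne
        have hσFb := sigma_bdd hσ hF
        have hμx : IsFAP 𝒜L (fun B => P B K) := FAP.restrict hsub (hc2 K hK hKne)
        have hlow : ∀ T : Finset (Set Ω), IsFinPart 𝒜L T →
            lowSum H (fun i => σ F i) (fun B => P B K) T ≤ P F K := by
          intro T hT
          have key := hext {y | (∑ A ∈ T.attach,
              sInf (vals H (fun i => σ F i) A.val)
                * y ⟨(A.val, K), hsub (hT.1 A.prop), hK, hKne⟩) ≤ y ⟨(F, K), hF, hK, hKne⟩}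
            (isClosed_le (by
              refine continuous_finset_sum _ fun A _ => ?_
              exact continuous_const.mul (continuous_apply _)) (continuous_apply _))
            (fun P' hP' => by
              have hμ' : IsFAP 𝒜L (fun B => P' B K) := FAP.restrict hsub (hP'.2.1 K hK hKne)
              have h1 : lowSum H (fun i => σ F i) (fun B => P' B K) T
                  ≤ lowerSInt H 𝒜L (fun i => σ F i) (fun B => P' B K) :=
                lowSum_le_lowerSInt hL hσFb hμ' hT
              have h2 := hP'.2.2.2.2.2 F hF K hK hKne
              show (∑ A ∈ T.attach, sInf (vals H (fun i => σ F i) A.val)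
                  * P' A.val K) ≤ P' F K
              rw [Finset.sum_attach T
                (fun B => sInf (vals H (fun i => σ F i) B) * P' B K)]
              rw [h2]
              exact h1)
          have e : ∀ A : {A // A ∈ T}, x ⟨(A.val, K), hsub (hT.1 A.prop), hK, hKne⟩
              = P A.val K := fun A => (hPcoord A.val K _).symm
          rw [lowSum, ← Finset.sum_attach T
            (fun B => sInf (vals H (fun i => σ F i) B) * P B K),
            hPcoord F K ⟨hF, hK, hKne⟩]
          calc ∑ A ∈ T.attach, sInf (vals H (fun i => σ F i) A.val) * P A.val K
              = ∑ A ∈ T.attach, sInf (vals H (fun i => σ F i) A.val)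
                  * x ⟨(A.val, K), hsub (hT.1 A.prop), hK, hKne⟩ :=
                Finset.sum_congr rfl fun A _ => by rw [e A]
            _ ≤ x ⟨(F, K), hF, hK, hKne⟩ := key
        have hup : ∀ T : Finset (Set Ω), IsFinPart 𝒜L T →
            P F K ≤ upSum H (fun i => σ F i) (fun B => P B K) T := by
          intro T hT
          have key := hext {y | y ⟨(F, K), hF, hK, hKne⟩ ≤ ∑ A ∈ T.attach,
              sSup (vals H (fun i => σ F i) A.val)
                * y ⟨(A.val, K), hsub (hT.1 A.prop), hK, hKne⟩}
            (isClosed_le (continuous_apply _) (by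
              refine continuous_finset_sum _ fun A _ => ?_
              exact continuous_const.mul (continuous_apply _)))
            (fun P' hP' => by
              have hμ' : IsFAP 𝒜L (fun B => P' B K) := FAP.restrict hsub (hP'.2.1 K hK hKne)
              have h1 : lowerSInt H 𝒜L (fun i => σ F i) (fun B => P' B K)
                  ≤ upSum H (fun i => σ F i) (fun B => P' B K) T :=
                lowerSInt_le hL hσFb hμ' _ fun T' hT' =>
                  lowSum_le_upSum_cross hL hσFb hμ' hT' hT
              have h2 := hP'.2.2.2.2.2 F hF K hK hKne
              show P' F K ≤ ∑ A ∈ T.attach, sSup (vals H (fun i => σ F i) A.val)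
                  * P' A.val K
              rw [Finset.sum_attach T
                (fun B => sSup (vals H (fun i => σ F i) B) * P' B K), h2]
              exact h1)
          have e : ∀ A : {A // A ∈ T}, x ⟨(A.val, K), hsub (hT.1 A.prop), hK, hKne⟩
              = P A.val K := fun A => (hPcoord A.val K _).symm
          rw [upSum, ← Finset.sum_attach T
            (fun B => sSup (vals H (fun i => σ F i) B) * P B K),
            hPcoord F K ⟨hF, hK, hKne⟩]
          calc x ⟨(F, K), hF, hK, hKne⟩
              ≤ ∑ A ∈ T.attach, sSup (vals H (fun i => σ F i) A.val)
                  * x ⟨(A.val, K), hsub (hT.1 A.prop), hK, hKne⟩ := key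
            _ = ∑ A ∈ T.attach, sSup (vals H (fun i => σ F i) A.val) * P A.val K :=
                Finset.sum_congr rfl fun A _ => by rw [e A]
        refine le_antisymm ?_ ?_
        · have h1 : P F K ≤ upperSInt H 𝒜L (fun i => σ F i) (fun B => P B K) :=
            le_upperSInt hL hσFb hμx _ hup
          rwa [sintegrable hH hL hσFb hμx (hcont F hF)] at h1
        · exact lowerSInt_le hL hσFb hμx _ hlow
      refine ⟨P, ⟨hc1, hc2, hc3, hc4, hc5, hc6⟩, ?_⟩
      funext q
      obtain ⟨q, hq⟩ := q
      show P q.1 q.2 = x ⟨q, hq⟩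
      rw [hPcoord q.1 q.2 hq]
    exact IsCompact.of_isClosed_subset (isCompact_univ_pi fun _ => isCompact_Icc)
      hclosed hsubset
end

section
/- Let Ω be a nonempty set, 𝒜 a field of sets on Ω, and P a full conditional probability on 𝒜. Let ⟨𝒜⟩* be the field of all unions of 𝒜-atoms, where the 𝒜-atoms are the equivalence classes of the relation 'x ~ y iff x and y belong to exactly the same members of 𝒜' (so 𝒜 ⊆ ⟨𝒜⟩*). Let 𝒫 be the set of conditional probabilities P̃ on ⟨𝒜⟩* × 𝒜⁰ (maps satisfying (C1), (C2) with P̃(·|H) a finitely additive probability on ⟨𝒜⟩*, and (C3) for events in ⟨𝒜⟩* and conditioning events in 𝒜⁰) extending P. Then 𝒫 is nonempty and, for every K ∈ 𝒜⁰ and every F ∈ ⟨𝒜⟩*, inf{P̃(F|K) : P̃ ∈ 𝒫} = sup{P(B|K) : B ∈ 𝒜, B ⊆ F}; in particular, for each K ∈ 𝒜⁰ the map F ↦ inf{P̃(F|K) : P̃ ∈ 𝒫} is the inner measure induced by P(·|K) and is a totally monotone capacity on ⟨𝒜⟩*. -/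
open Set

open scoped Classical

variable {Ω : Type*}

/-- `⟨𝒜⟩*`: the field of all unions of `𝒜`-atoms, i.e. the sets saturated for the
relation "belonging to exactly the same members of `𝒜`". -/
def atomUnions {Ω : Type*} (𝒜 : Set (Set Ω)) : Set (Set Ω) :=
  {F | ∀ x ∈ F, ∀ y, (∀ A ∈ 𝒜, (x ∈ A ↔ y ∈ A)) → y ∈ F}

/-- The set of conditional probabilities on `⟨𝒜⟩* × 𝒜⁰` extending a full conditional
probability `P` on `𝒜`. -/
def condExtSet {Ω : Type*} (𝒜 : Set (Set Ω)) (P : Set Ω → Set Ω → ℝ) :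
    Set (Set Ω → Set Ω → ℝ) :=
  {Q | (∀ F ∈ atomUnions 𝒜, ∀ K ∈ 𝒜, K.Nonempty → Q F K = Q (F ∩ K) K) ∧
    (∀ K ∈ 𝒜, K.Nonempty → IsFAP (atomUnions 𝒜) fun F => Q F K) ∧
    (∀ F ∈ atomUnions 𝒜, ∀ G ∈ atomUnions 𝒜, ∀ K ∈ 𝒜, K.Nonempty →
      F ∩ K ∈ 𝒜 → (F ∩ K).Nonempty → Q (F ∩ G) K = Q F K * Q G (F ∩ K)) ∧
    ∀ F ∈ 𝒜, ∀ K ∈ 𝒜, K.Nonempty → Q F K = P F K}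

namespace St18

theorem sf_empty {𝒜 : Set (Set Ω)} (h : IsSetField 𝒜) : (∅ : Set Ω) ∈ 𝒜 := by
  have := h.2.1 _ h.1; simpa using this

theorem sf_inter {𝒜 : Set (Set Ω)} (h : IsSetField 𝒜) {A B : Set Ω}
    (hA : A ∈ 𝒜) (hB : B ∈ 𝒜) : A ∩ B ∈ 𝒜 := by
  have := h.2.1 _ (h.2.2 _ (h.2.1 _ hA) _ (h.2.1 _ hB))
  rwa [Set.compl_union, compl_compl, compl_compl] at this

theorem sf_diff {𝒜 : Set (Set Ω)} (h : IsSetField 𝒜) {A B : Set Ω}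
    (hA : A ∈ 𝒜) (hB : B ∈ 𝒜) : A \ B ∈ 𝒜 := by
  have := sf_inter h hA (h.2.1 _ hB); simpa [Set.diff_eq] using this

theorem sf_biUnion {𝒜 : Set (Set Ω)} (h : IsSetField 𝒜) {β : Type*} (T : Finset β)
    (f : β → Set Ω) (hf : ∀ b ∈ T, f b ∈ 𝒜) : (⋃ b ∈ T, f b) ∈ 𝒜 := by
  classical
  induction T using Finset.induction_on with
  | empty => simpa using sf_empty h
  | @insert a T' ha ih =>
    rw [Finset.set_biUnion_insert]
    exact h.2.2 _ (hf a (Finset.mem_insert_self a T'))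
      _ (ih fun b hbT => hf b (Finset.mem_insert_of_mem hbT))

theorem sf_biInter {𝒜 : Set (Set Ω)} (h : IsSetField 𝒜) {β : Type*} (T : Finset β)
    (f : β → Set Ω) (hf : ∀ b ∈ T, f b ∈ 𝒜) : (⋂ b ∈ T, f b) ∈ 𝒜 := by
  have : (⋂ b ∈ T, f b) = (⋃ b ∈ T, (f b)ᶜ)ᶜ := by
    simp [Set.compl_iUnion]
  rw [this]
  exact h.2.1 _ (sf_biUnion h T _ fun b hb => h.2.1 _ (hf b hb))

theorem fap_nonneg {𝒜 : Set (Set Ω)} {μ : Set Ω → ℝ} (hμ : IsFAP 𝒜 μ) {A : Set Ω}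
    (hA : A ∈ 𝒜) : 0 ≤ μ A := (hμ.1 A hA).1

theorem fap_le_one {𝒜 : Set (Set Ω)} {μ : Set Ω → ℝ} (hμ : IsFAP 𝒜 μ) {A : Set Ω}
    (hA : A ∈ 𝒜) : μ A ≤ 1 := (hμ.1 A hA).2

theorem fap_empty {𝒜 : Set (Set Ω)} (h : IsSetField 𝒜) {μ : Set Ω → ℝ} (hμ : IsFAP 𝒜 μ) :
    μ ∅ = 0 := by
  have := hμ.2.2 ∅ (sf_empty h) ∅ (sf_empty h) (by simp)
  simp at this; linarith

theorem fap_diff {𝒜 : Set (Set Ω)} (h : IsSetField 𝒜) {μ : Set Ω → ℝ} (hμ : IsFAP 𝒜 μ)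
    {A B : Set Ω} (hA : A ∈ 𝒜) (hB : B ∈ 𝒜) (hAB : A ⊆ B) : μ (B \ A) = μ B - μ A := by
  have hd : Disjoint A (B \ A) := Set.disjoint_sdiff_right.mono_left le_rfl
  have := hμ.2.2 A hA (B \ A) (sf_diff h hB hA) hd
  rw [Set.union_diff_cancel hAB] at this
  linarith

theorem fap_mono {𝒜 : Set (Set Ω)} (h : IsSetField 𝒜) {μ : Set Ω → ℝ} (hμ : IsFAP 𝒜 μ)
    {A B : Set Ω} (hA : A ∈ 𝒜) (hB : B ∈ 𝒜) (hAB : A ⊆ B) : μ A ≤ μ B := by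
  have h1 := fap_diff h hμ hA hB hAB
  have h2 := fap_nonneg hμ (sf_diff h hB hA)
  linarith

theorem fap_biUnion_sum {𝒜 : Set (Set Ω)} (h : IsSetField 𝒜) {μ : Set Ω → ℝ}
    (hμ : IsFAP 𝒜 μ) {β : Type*} (T : Finset β) (f : β → Set Ω)
    (hf : ∀ b ∈ T, f b ∈ 𝒜)
    (hd : ∀ a ∈ T, ∀ b ∈ T, a ≠ b → Disjoint (f a) (f b)) :
    μ (⋃ b ∈ T, f b) = ∑ b ∈ T, μ (f b) := by
  classical
  induction T using Finset.induction_on with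
  | empty => simpa using fap_empty h hμ
  | @insert a T' ha ih =>
    rw [Finset.set_biUnion_insert, Finset.sum_insert ha]
    have h1 : Disjoint (f a) (⋃ b ∈ T', f b) := by
      rw [Set.disjoint_iUnion₂_right]
      intro b hbT
      exact hd a (Finset.mem_insert_self a T') b (Finset.mem_insert_of_mem hbT)
        (by rintro rfl; exact ha hbT)
    rw [hμ.2.2 _ (hf a (Finset.mem_insert_self a T')) _
      (sf_biUnion h T' f fun b hbT => hf b (Finset.mem_insert_of_mem hbT)) h1]
    rw [ih (fun b hbT => hf b (Finset.mem_insert_of_mem hbT))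
      (fun x hx y hy hxy => hd x (Finset.mem_insert_of_mem hx) y
        (Finset.mem_insert_of_mem hy) hxy)]


/-- Inclusion-exclusion for a finitely additive probability on a field. -/
theorem fap_inclusion_exclusion {𝒜 : Set (Set Ω)} (h : IsSetField 𝒜) {μ : Set Ω → ℝ}
    (hμ : IsFAP 𝒜 μ) {n : ℕ} (g : Fin n → Set Ω) (hg : ∀ i, g i ∈ 𝒜) :
    ∑ s ∈ Finset.univ.powerset.filter (fun s : Finset (Fin n) => s.Nonempty),
      (-1 : ℝ) ^ (s.card - 1) * μ (⋂ i ∈ s, g i) = μ (⋃ i, g i) := by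
  classical
  set pat : Ω → Finset (Fin n) := fun x => Finset.univ.filter (fun i => x ∈ g i) with hpat
  set cell : Finset (Fin n) → Set Ω := fun S => {x | pat x = S} with hcell
  have hcellmem : ∀ S, cell S ∈ 𝒜 := by
    intro S
    have : cell S = (⋂ i ∈ S, g i) ∩ (⋂ i ∈ Sᶜ, (g i)ᶜ) := by
      ext x
      simp only [hcell, Set.mem_setOf_eq, Set.mem_inter_iff, Set.mem_iInter, Set.mem_compl_iff]
      constructor
      · rintro rfl
        constructor
        · intro i hi; simpa [hpat] using hi
        · intro i hi hx
          exact (Finset.mem_compl.1 hi) (by simp [hpat, hx])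
      · rintro ⟨h1, h2⟩
        ext i
        simp only [hpat, Finset.mem_filter, Finset.mem_univ, true_and]
        constructor
        · intro hx
          by_contra hiS
          exact h2 i (Finset.mem_compl.2 hiS) hx
        · intro hi; exact h1 i hi
    rw [this]
    exact sf_inter h (sf_biInter h _ _ fun i _ => hg i)
      (sf_biInter h _ _ fun i _ => h.2.1 _ (hg i))
  have hiInter : ∀ s : Finset (Fin n),
      (⋂ i ∈ s, g i) = ⋃ S ∈ Finset.univ.powerset.filter (fun S => s ⊆ S), cell S := by
    intro s
    ext x
    simp only [Set.mem_iInter, Set.mem_iUnion, Finset.mem_filter, Finset.mem_powerset,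
      exists_prop]
    constructor
    · intro hx
      refine ⟨pat x, ⟨Finset.subset_univ _, ?_⟩, rfl⟩
      intro i hi
      simp [hpat, hx i hi]
    · rintro ⟨S, ⟨-, hsS⟩, hxS⟩
      intro i hi
      have : i ∈ pat x := by rw [show pat x = S from hxS]; exact hsS hi
      simpa [hpat] using this
  have hdisj : ∀ S T : Finset (Fin n), S ≠ T → Disjoint (cell S) (cell T) := by
    intro S T hST
    rw [Set.disjoint_left]
    rintro x hxS hxT
    exact hST (hxS.symm.trans hxT)
  have hmu : ∀ s : Finset (Fin n), μ (⋂ i ∈ s, g i) =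
      ∑ S ∈ Finset.univ.powerset.filter (fun S => s ⊆ S), μ (cell S) := by
    intro s
    rw [hiInter s]
    exact fap_biUnion_sum h hμ _ _ (fun S _ => hcellmem S)
      (fun a _ b _ hab => hdisj a b hab)
  have hunion : (⋃ i, g i) =
      ⋃ S ∈ Finset.univ.powerset.filter (fun S : Finset (Fin n) => S.Nonempty), cell S := by
    ext x
    simp only [Set.mem_iUnion, Finset.mem_filter, Finset.mem_powerset, exists_prop]
    constructor
    · rintro ⟨i, hi⟩
      exact ⟨pat x, ⟨Finset.subset_univ _, ⟨i, by simp [hpat, hi]⟩⟩, rfl⟩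
    · rintro ⟨S, ⟨-, ⟨i, hiS⟩⟩, hxS⟩
      have : i ∈ pat x := by rw [show pat x = S from hxS]; exact hiS
      exact ⟨i, by simpa [hpat] using this⟩
  have hmuU : μ (⋃ i, g i) =
      ∑ S ∈ Finset.univ.powerset.filter (fun S : Finset (Fin n) => S.Nonempty), μ (cell S) := by
    rw [hunion]
    exact fap_biUnion_sum h hμ _ _ (fun S _ => hcellmem S) (fun a _ b _ hab => hdisj a b hab)
  calc ∑ s ∈ Finset.univ.powerset.filter (fun s : Finset (Fin n) => s.Nonempty),
      (-1 : ℝ) ^ (s.card - 1) * μ (⋂ i ∈ s, g i)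
      = ∑ s ∈ Finset.univ.powerset.filter (fun s : Finset (Fin n) => s.Nonempty),
          ∑ S ∈ Finset.univ.powerset.filter (fun S => s ⊆ S),
            (-1 : ℝ) ^ (s.card - 1) * μ (cell S) := by
        refine Finset.sum_congr rfl fun s _ => ?_
        rw [hmu s, Finset.mul_sum]
    _ = ∑ S ∈ (Finset.univ.powerset : Finset (Finset (Fin n))),
          ∑ s ∈ (Finset.univ.powerset.filter
              (fun s : Finset (Fin n) => s.Nonempty)).filter (fun s => s ⊆ S),
            (-1 : ℝ) ^ (s.card - 1) * μ (cell S) := by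
        refine Finset.sum_comm' ?_
        intro s S
        simp only [Finset.mem_filter, Finset.mem_powerset]
        tauto
    _ = ∑ S ∈ (Finset.univ.powerset : Finset (Finset (Fin n))),
          (∑ s ∈ S.powerset.filter (fun s => s.Nonempty), (-1 : ℝ) ^ (s.card - 1)) *
            μ (cell S) := by
        refine Finset.sum_congr rfl fun S _ => ?_
        rw [Finset.sum_mul]
        refine Finset.sum_congr ?_ fun s _ => rfl
        ext s
        simp only [Finset.mem_filter, Finset.mem_powerset, Finset.subset_univ, true_and]
        tauto
    _ = ∑ S ∈ (Finset.univ.powerset : Finset (Finset (Fin n))),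
          (if S.Nonempty then (1 : ℝ) else 0) * μ (cell S) := by
        refine Finset.sum_congr rfl fun S _ => ?_
        congr 1
        by_cases hS : S.Nonempty
        · rw [if_pos hS]
          have key : (∑ m ∈ S.powerset, (-1 : ℝ) ^ m.card) = 0 := by
            have := Finset.sum_powerset_neg_one_pow_card (x := S)
            rw [if_neg (Finset.nonempty_iff_ne_empty.1 hS)] at this
            have := congrArg (fun z : ℤ => (z : ℝ)) this
            push_cast at this
            simpa using this
          have hsplit : (∑ m ∈ S.powerset, (-1 : ℝ) ^ m.card) =
              (∑ m ∈ S.powerset.filter (fun s => s.Nonempty), (-1 : ℝ) ^ m.card) + 1 := by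
            rw [← Finset.sum_filter_add_sum_filter_not S.powerset (fun s => s.Nonempty)]
            congr 1
            have : S.powerset.filter (fun s => ¬s.Nonempty) = {∅} := by
              ext m
              simp only [Finset.mem_filter, Finset.mem_powerset,
                Finset.not_nonempty_iff_eq_empty, Finset.mem_singleton]
              constructor
              · rintro ⟨-, rfl⟩; rfl
              · rintro rfl; exact ⟨Finset.empty_subset S, rfl⟩
            rw [this]; simp
          have hterm : ∀ s ∈ S.powerset.filter (fun s : Finset (Fin n) => s.Nonempty),
              (-1 : ℝ) ^ (s.card - 1) = -((-1 : ℝ) ^ s.card) := by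
            intro s hs
            have hpos : 0 < s.card := Finset.card_pos.2 (Finset.mem_filter.1 hs).2
            have : s.card - 1 + 1 = s.card := Nat.succ_pred_eq_of_pos hpos
            conv_rhs => rw [← this]
            rw [pow_succ]; ring
          rw [Finset.sum_congr rfl hterm, Finset.sum_neg_distrib]
          have : (∑ m ∈ S.powerset.filter (fun s => s.Nonempty), (-1 : ℝ) ^ m.card) = -1 := by
            linarith [hsplit, key]
          rw [this]; norm_num
        · rw [if_neg hS]
          rw [Finset.not_nonempty_iff_eq_empty] at hS
          subst hS
          simp [Finset.powerset_empty, Finset.filter_singleton]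
    _ = ∑ S ∈ Finset.univ.powerset.filter (fun S : Finset (Fin n) => S.Nonempty),
          μ (cell S) := by
        rw [Finset.sum_filter]
        refine Finset.sum_congr rfl fun S _ => ?_
        by_cases hS : S.Nonempty <;> simp [hS]
    _ = μ (⋃ i, g i) := hmuU.symm


/-- The inner measure induced by a finitely additive probability is totally monotone. -/
theorem innM_TM {𝒜 : Set (Set Ω)} (h𝒜 : IsSetField 𝒜) {μ : Set Ω → ℝ} (hμ : IsFAP 𝒜 μ)
    (n : ℕ) (A : Fin n → Set Ω) :
    ∑ s ∈ Finset.univ.powerset.filter (fun s : Finset (Fin n) => s.Nonempty),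
        (-1 : ℝ) ^ (s.card - 1) * sSup {x | ∃ B ∈ 𝒜, B ⊆ (⋂ i ∈ s, A i) ∧ x = μ B}
      ≤ sSup {x | ∃ B ∈ 𝒜, B ⊆ (⋃ i, A i) ∧ x = μ B} := by
  classical
  set ψ : Set Ω → ℝ := fun G => sSup {x | ∃ B ∈ 𝒜, B ⊆ G ∧ x = μ B} with hψ
  have hsetne : ∀ G : Set Ω, {x | ∃ B ∈ 𝒜, B ⊆ G ∧ x = μ B}.Nonempty :=
    fun G => ⟨μ ∅, ∅, sf_empty h𝒜, Set.empty_subset G, rfl⟩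
  have hbdd : ∀ G : Set Ω, BddAbove {x | ∃ B ∈ 𝒜, B ⊆ G ∧ x = μ B} := by
    intro G; refine ⟨1, ?_⟩; rintro x ⟨B, hB, -, rfl⟩; exact fap_le_one hμ hB
  have hle : ∀ (B : Set Ω), B ∈ 𝒜 → ∀ G : Set Ω, B ⊆ G → μ B ≤ ψ G := fun B hB G hBG =>
    le_csSup (hbdd G) ⟨B, hB, hBG, rfl⟩
  show ∑ s ∈ Finset.univ.powerset.filter (fun s : Finset (Fin n) => s.Nonempty),
        (-1 : ℝ) ^ (s.card - 1) * ψ (⋂ i ∈ s, A i) ≤ ψ (⋃ i, A i)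
  refine le_of_forall_pos_le_add ?_
  intro ε hε
  set m := (Finset.univ.powerset.filter (fun s : Finset (Fin n) => s.Nonempty)).card with hm
  set δ := ε / (m + 1) with hδ
  have hδpos : 0 < δ := by positivity
  have hch : ∀ s : Finset (Fin n), ∃ B, B ∈ 𝒜 ∧ B ⊆ (⋂ i ∈ s, A i) ∧
      ψ (⋂ i ∈ s, A i) - δ < μ B := by
    intro s
    obtain ⟨x, hx, hlt⟩ := exists_lt_of_lt_csSup (hsetne (⋂ i ∈ s, A i))
      (show ψ (⋂ i ∈ s, A i) - δ < ψ (⋂ i ∈ s, A i) by linarith)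
    obtain ⟨B, hB, hBsub, rfl⟩ := hx
    exact ⟨B, hB, hBsub, hlt⟩
  choose D hD1 hD2 hD3 using hch
  set Et : Fin n → Set Ω :=
    fun i => ⋃ s ∈ Finset.univ.filter (fun s : Finset (Fin n) => i ∈ s), D s with hEt
  have hEtmem : ∀ i, Et i ∈ 𝒜 := fun i => sf_biUnion h𝒜 _ _ (fun s _ => hD1 s)
  have hEtsub : ∀ i, Et i ⊆ A i := by
    intro i
    refine Set.iUnion₂_subset ?_
    intro s hs
    have his : i ∈ s := (Finset.mem_filter.1 hs).2
    exact (hD2 s).trans (Set.biInter_subset_of_mem his)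
  have hDE : ∀ s : Finset (Fin n), D s ⊆ ⋂ i ∈ s, Et i := by
    intro s
    refine Set.subset_iInter₂ ?_
    intro i hi
    exact Set.subset_biUnion_of_mem (Finset.mem_filter.2 ⟨Finset.mem_univ _, hi⟩)
  have hEmem : ∀ s : Finset (Fin n), (⋂ i ∈ s, Et i) ∈ 𝒜 :=
    fun s => sf_biInter h𝒜 _ _ fun i _ => hEtmem i
  have hEsubA : ∀ s : Finset (Fin n), (⋂ i ∈ s, Et i) ⊆ ⋂ i ∈ s, A i := fun s =>
    Set.iInter₂_mono fun i _ => hEtsub i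
  have hterm : ∀ s ∈ Finset.univ.powerset.filter (fun s : Finset (Fin n) => s.Nonempty),
      (-1 : ℝ) ^ (s.card - 1) * ψ (⋂ i ∈ s, A i)
        ≤ (-1 : ℝ) ^ (s.card - 1) * μ (⋂ i ∈ s, Et i) + δ := by
    intro s _
    rcases Nat.even_or_odd (s.card - 1) with hpar | hpar
    · rw [hpar.neg_one_pow]
      simp only [one_mul]
      have h1 : ψ (⋂ i ∈ s, A i) - δ < μ (D s) := hD3 s
      have h2 : μ (D s) ≤ μ (⋂ i ∈ s, Et i) := fap_mono h𝒜 hμ (hD1 s) (hEmem s) (hDE s)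
      linarith
    · rw [hpar.neg_one_pow]
      have h2 : μ (⋂ i ∈ s, Et i) ≤ ψ (⋂ i ∈ s, A i) := hle _ (hEmem s) _ (hEsubA s)
      have h3 : (0:ℝ) ≤ δ := le_of_lt hδpos
      nlinarith
  have hUmem : (⋃ i, Et i) ∈ 𝒜 := by
    have : (⋃ i, Et i) = ⋃ i ∈ (Finset.univ : Finset (Fin n)), Et i := by simp
    rw [this]
    exact sf_biUnion h𝒜 _ _ fun i _ => hEtmem i
  have hUsub : (⋃ i, Et i) ⊆ ⋃ i, A i := Set.iUnion_mono hEtsub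
  have hmδ : (m : ℝ) * δ ≤ ε := by
    have h1 : ((m : ℝ) + 1) * δ = ε := by
      rw [hδ]; field_simp
    linarith
  calc ∑ s ∈ Finset.univ.powerset.filter (fun s : Finset (Fin n) => s.Nonempty),
        (-1 : ℝ) ^ (s.card - 1) * ψ (⋂ i ∈ s, A i)
      ≤ ∑ s ∈ Finset.univ.powerset.filter (fun s : Finset (Fin n) => s.Nonempty),
        ((-1 : ℝ) ^ (s.card - 1) * μ (⋂ i ∈ s, Et i) + δ) := Finset.sum_le_sum hterm
    _ = (∑ s ∈ Finset.univ.powerset.filter (fun s : Finset (Fin n) => s.Nonempty),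
        (-1 : ℝ) ^ (s.card - 1) * μ (⋂ i ∈ s, Et i)) + (m : ℝ) * δ := by
        rw [Finset.sum_add_distrib, Finset.sum_const, nsmul_eq_mul, hm]
    _ = μ (⋃ i, Et i) + (m : ℝ) * δ := by rw [fap_inclusion_exclusion h𝒜 hμ Et hEtmem]
    _ ≤ ψ (⋃ i, A i) + (m : ℝ) * δ := by
        have := hle _ hUmem _ hUsub
        linarith
    _ ≤ ψ (⋃ i, A i) + ε := by linarith


/-- atomUnions is closed under complement, arbitrary unions and intersections. -/
theorem au_compl {𝒜 : Set (Set Ω)} {A : Set Ω} (hA : A ∈ atomUnions 𝒜) :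
    Aᶜ ∈ atomUnions 𝒜 := by
  intro x hx y hxy
  intro hyA
  exact hx (hA y hyA x (fun B hB => (hxy B hB).symm))

theorem au_union {𝒜 : Set (Set Ω)} {A B : Set Ω} (hA : A ∈ atomUnions 𝒜)
    (hB : B ∈ atomUnions 𝒜) : A ∪ B ∈ atomUnions 𝒜 := by
  rintro x (hx | hx) y hxy
  · exact Or.inl (hA x hx y hxy)
  · exact Or.inr (hB x hx y hxy)

theorem au_inter {𝒜 : Set (Set Ω)} {A B : Set Ω} (hA : A ∈ atomUnions 𝒜)
    (hB : B ∈ atomUnions 𝒜) : A ∩ B ∈ atomUnions 𝒜 := by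
  rintro x ⟨hx1, hx2⟩ y hxy
  exact ⟨hA x hx1 y hxy, hB x hx2 y hxy⟩

theorem au_univ {𝒜 : Set (Set Ω)} : (Set.univ : Set Ω) ∈ atomUnions 𝒜 := by
  intro x _ y _; trivial

theorem au_field (𝒜 : Set (Set Ω)) : IsSetField (atomUnions 𝒜) :=
  ⟨au_univ, fun _ hA => au_compl hA, fun _ hA _ hB => au_union hA hB⟩

theorem au_superset {𝒜 : Set (Set Ω)} : 𝒜 ⊆ atomUnions 𝒜 := by
  intro A hA x hx y hxy
  exact (hxy A hA).1 hx

/-- A partial extension of the full conditional probability `P` on `𝒜`. -/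
def PartExt (𝒜 : Set (Set Ω)) (P : Set Ω → Set Ω → ℝ) (ℬ : Set (Set Ω))
    (Q : Set Ω → Set Ω → ℝ) : Prop :=
  IsSetField ℬ ∧ 𝒜 ⊆ ℬ ∧ ℬ ⊆ atomUnions 𝒜 ∧
  (∀ E ∈ ℬ, ∀ K ∈ 𝒜, K.Nonempty → Q E K = Q (E ∩ K) K) ∧
  (∀ K ∈ 𝒜, K.Nonempty → IsFAP ℬ (fun E => Q E K)) ∧
  (∀ E ∈ ℬ, ∀ G ∈ ℬ, ∀ K ∈ 𝒜, K.Nonempty → E ∩ K ∈ 𝒜 → (E ∩ K).Nonempty →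
      Q (E ∩ G) K = Q E K * Q G (E ∩ K)) ∧
  (∀ E ∈ 𝒜, ∀ K ∈ 𝒜, K.Nonempty → Q E K = P E K)

noncomputable def innE (ℬ : Set (Set Ω)) (Q : Set Ω → Set Ω → ℝ) (K S : Set Ω) : ℝ :=
  sSup {x | ∃ C ∈ ℬ, C ⊆ S ∧ x = Q C K}

noncomputable def outE (ℬ : Set (Set Ω)) (Q : Set Ω → Set Ω → ℝ) (K S : Set Ω) : ℝ :=
  sInf {x | ∃ C ∈ ℬ, S ⊆ C ∧ x = Q C K}

noncomputable def ext1 (ℬ : Set (Set Ω)) (Q : Set Ω → Set Ω → ℝ) (F : Set Ω) :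
    Set Ω → Set Ω → ℝ :=
  fun E K => innE ℬ Q K (E ∩ F ∩ K) + outE ℬ Q K (E ∩ Fᶜ ∩ K)

def genF (ℬ : Set (Set Ω)) (F : Set Ω) : Set (Set Ω) :=
  {E | ∃ B₁ ∈ ℬ, ∃ B₂ ∈ ℬ, E = (B₁ ∩ F) ∪ (B₂ ∩ Fᶜ)}

section OneStep
variable {𝒜 ℬ : Set (Set Ω)} {P Q : Set Ω → Set Ω → ℝ} {F : Set Ω}

theorem genF_superset : ℬ ⊆ genF ℬ F := by
  intro B hB
  refine ⟨B, hB, B, hB, ?_⟩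
  ext x; by_cases hx : x ∈ F <;> simp [hx]

theorem genF_memF (h : IsSetField ℬ) : F ∈ genF ℬ F := by
  refine ⟨Set.univ, h.1, ∅, sf_empty h, ?_⟩
  simp

theorem genF_field (h : IsSetField ℬ) : IsSetField (genF ℬ F) := by
  refine ⟨genF_superset h.1, ?_, ?_⟩
  · rintro A ⟨B₁, hB₁, B₂, hB₂, rfl⟩
    refine ⟨B₁ᶜ, h.2.1 _ hB₁, B₂ᶜ, h.2.1 _ hB₂, ?_⟩
    ext x
    by_cases hx : x ∈ F <;> simp [hx]
  · rintro A ⟨B₁, hB₁, B₂, hB₂, rfl⟩ A' ⟨C₁, hC₁, C₂, hC₂, rfl⟩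
    refine ⟨B₁ ∪ C₁, h.2.2 _ hB₁ _ hC₁, B₂ ∪ C₂, h.2.2 _ hB₂ _ hC₂, ?_⟩
    ext x
    by_cases hx : x ∈ F <;> simp [hx] <;> tauto

theorem genF_sub_au (hB : ℬ ⊆ atomUnions 𝒜) (hF : F ∈ atomUnions 𝒜) :
    genF ℬ F ⊆ atomUnions 𝒜 := by
  rintro A ⟨B₁, hB₁, B₂, hB₂, rfl⟩
  exact au_union (au_inter (hB hB₁) hF) (au_inter (hB hB₂) (au_compl hF))

theorem genF_partF {E : Set Ω} (hE : E ∈ genF ℬ F) : ∃ B ∈ ℬ, E ∩ F = B ∩ F := by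
  obtain ⟨B₁, hB₁, B₂, hB₂, rfl⟩ := hE
  refine ⟨B₁, hB₁, ?_⟩
  ext x; by_cases hx : x ∈ F <;> simp [hx]

theorem genF_partFc {E : Set Ω} (hE : E ∈ genF ℬ F) : ∃ B ∈ ℬ, E ∩ Fᶜ = B ∩ Fᶜ := by
  obtain ⟨B₁, hB₁, B₂, hB₂, rfl⟩ := hE
  refine ⟨B₂, hB₂, ?_⟩
  ext x; by_cases hx : x ∈ F <;> simp [hx]

theorem innE_setne (hB : IsSetField ℬ) (K S : Set Ω) :
    {x | ∃ C ∈ ℬ, C ⊆ S ∧ x = Q C K}.Nonempty :=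
  ⟨Q ∅ K, ∅, sf_empty hB, Set.empty_subset S, rfl⟩

theorem innE_bdd (hfap : IsFAP ℬ (fun E => Q E K)) (S : Set Ω) :
    BddAbove {x | ∃ C ∈ ℬ, C ⊆ S ∧ x = Q C K} := by
  refine ⟨1, ?_⟩; rintro x ⟨C, hC, -, rfl⟩; exact fap_le_one hfap hC

theorem innE_le {K S C : Set Ω} (hfap : IsFAP ℬ (fun E => Q E K)) (hC : C ∈ ℬ)
    (hCS : C ⊆ S) : Q C K ≤ innE ℬ Q K S :=
  le_csSup (innE_bdd hfap S) ⟨C, hC, hCS, rfl⟩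

theorem innE_nonneg (hB : IsSetField ℬ) (hfap : IsFAP ℬ (fun E => Q E K)) (S : Set Ω) :
    0 ≤ innE ℬ Q K S := by
  have := innE_le (S := S) hfap (sf_empty hB) (Set.empty_subset S)
  have h0 : Q ∅ K = 0 := fap_empty hB hfap
  linarith

theorem innE_le_one (hB : IsSetField ℬ) (hfap : IsFAP ℬ (fun E => Q E K)) (S : Set Ω) :
    innE ℬ Q K S ≤ 1 := by
  refine csSup_le (innE_setne hB K S) ?_
  rintro x ⟨C, hC, -, rfl⟩; exact fap_le_one hfap hC

theorem innE_mono (hB : IsSetField ℬ) (hfap : IsFAP ℬ (fun E => Q E K)) {S T : Set Ω}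
    (hST : S ⊆ T) : innE ℬ Q K S ≤ innE ℬ Q K T := by
  refine csSup_le (innE_setne hB K S) ?_
  rintro x ⟨C, hC, hCS, rfl⟩; exact innE_le hfap hC (hCS.trans hST)

theorem innE_add (hB : IsSetField ℬ) (hfap : IsFAP ℬ (fun E => Q E K))
    {B₁ B₂ : Set Ω} (hB₁ : B₁ ∈ ℬ) (hB₂ : B₂ ∈ ℬ)
    (hd : (B₁ ∩ F ∩ K) ∩ (B₂ ∩ F ∩ K) = ∅) :
    innE ℬ Q K ((B₁ ∩ F ∩ K) ∪ (B₂ ∩ F ∩ K)) =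
      innE ℬ Q K (B₁ ∩ F ∩ K) + innE ℬ Q K (B₂ ∩ F ∩ K) := by
  set S₁ := B₁ ∩ F ∩ K
  set S₂ := B₂ ∩ F ∩ K
  have key : ∀ C₁ ∈ ℬ, C₁ ⊆ S₁ → ∀ C₂ ∈ ℬ, C₂ ⊆ S₂ →
      Q C₁ K + Q C₂ K ≤ innE ℬ Q K (S₁ ∪ S₂) := by
    intro C₁ hC₁ hC₁S C₂ hC₂ hC₂S
    have hdisj : Disjoint C₁ C₂ := by
      rw [Set.disjoint_left]
      intro x hx1 hx2
      have : x ∈ S₁ ∩ S₂ := ⟨hC₁S hx1, hC₂S hx2⟩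
      rw [hd] at this; exact this
    have hadd := hfap.2.2 C₁ hC₁ C₂ hC₂ hdisj
    have hmem : Q (C₁ ∪ C₂) K ≤ innE ℬ Q K (S₁ ∪ S₂) :=
      innE_le hfap (hB.2.2 _ hC₁ _ hC₂) (Set.union_subset_union hC₁S hC₂S)
    simp only at hadd
    linarith
  refine le_antisymm ?_ ?_
  · refine csSup_le (innE_setne hB K _) ?_
    rintro x ⟨C, hC, hCS, rfl⟩
    have h1 : C ∩ B₁ ∈ ℬ := sf_inter hB hC hB₁
    have h2 : C \ B₁ ∈ ℬ := sf_diff hB hC hB₁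
    have hsub1 : C ∩ B₁ ⊆ S₁ := by
      rintro x ⟨hxC, hxB⟩
      rcases hCS hxC with h | h
      · exact h
      · exact ⟨⟨hxB, h.1.2⟩, h.2⟩
    have hsub2 : C \ B₁ ⊆ S₂ := by
      rintro x ⟨hxC, hxB⟩
      rcases hCS hxC with h | h
      · exact absurd h.1.1 hxB
      · exact h
    have hdisj : Disjoint (C ∩ B₁) (C \ B₁) := by
      rw [Set.disjoint_left]; rintro x ⟨-, hx⟩ ⟨-, hx'⟩; exact hx' hx
    have hadd := hfap.2.2 _ h1 _ h2 hdisj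
    simp only at hadd
    have hC' : (C ∩ B₁) ∪ (C \ B₁) = C := by
      ext x; by_cases hx : x ∈ B₁ <;> simp [hx]
    rw [hC'] at hadd
    rw [hadd]
    exact add_le_add (innE_le hfap h1 hsub1) (innE_le hfap h2 hsub2)
  · have h1 : innE ℬ Q K S₁ ≤ innE ℬ Q K (S₁ ∪ S₂) - innE ℬ Q K S₂ := by
      refine csSup_le (innE_setne hB K S₁) ?_
      rintro x ⟨C₁, hC₁, hC₁S, rfl⟩
      have h2 : innE ℬ Q K S₂ ≤ innE ℬ Q K (S₁ ∪ S₂) - Q C₁ K := by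
        refine csSup_le (innE_setne hB K S₂) ?_
        rintro y ⟨C₂, hC₂, hC₂S, rfl⟩
        have := key C₁ hC₁ hC₁S C₂ hC₂ hC₂S
        linarith
      linarith
    linarith

theorem outE_nonneg (hB : IsSetField ℬ) (hfap : IsFAP ℬ (fun E => Q E K)) (S : Set Ω) :
    0 ≤ outE ℬ Q K S := by
  refine le_csInf ⟨Q Set.univ K, Set.univ, hB.1, Set.subset_univ S, rfl⟩ ?_
  rintro x ⟨C, hC, -, rfl⟩; exact fap_nonneg hfap hC

theorem outE_bddBelow (hfap : IsFAP ℬ (fun E => Q E K)) (S : Set Ω) :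
    BddBelow {x | ∃ C ∈ ℬ, S ⊆ C ∧ x = Q C K} := by
  refine ⟨0, ?_⟩; rintro x ⟨C, hC, -, rfl⟩; exact fap_nonneg hfap hC

theorem outE_empty (hB : IsSetField ℬ) (hfap : IsFAP ℬ (fun E => Q E K)) :
    outE ℬ Q K (∅ : Set Ω) = 0 := by
  refine le_antisymm ?_ (outE_nonneg hB hfap ∅)
  have h0 : Q ∅ K = 0 := fap_empty hB hfap
  have := csInf_le (outE_bddBelow hfap ∅) (⟨∅, sf_empty hB, Set.Subset.rfl, rfl⟩ :
    Q ∅ K ∈ {x | ∃ C ∈ ℬ, (∅ : Set Ω) ⊆ C ∧ x = Q C K})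
  unfold outE
  linarith

/-- Key representation of the outer value on a trace of the complement of `F`. -/
theorem outE_rep (h : PartExt 𝒜 P ℬ Q) {K : Set Ω} (hK : K ∈ 𝒜) (hKne : K.Nonempty)
    {B : Set Ω} (hBm : B ∈ ℬ) :
    outE ℬ Q K (B ∩ Fᶜ ∩ K) = Q B K - innE ℬ Q K (B ∩ F ∩ K) := by
  obtain ⟨hBf, hAB, -, hC1, hC2, -, -⟩ := h
  have hfap : IsFAP ℬ (fun E => Q E K) := hC2 K hK hKne
  refine le_antisymm ?_ ?_
  · have hA : ∀ C' ∈ ℬ, C' ⊆ B ∩ F ∩ K → outE ℬ Q K (B ∩ Fᶜ ∩ K) ≤ Q B K - Q C' K := by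
      intro C' hC' hsub
      have hsub2 : C' ⊆ B := fun x hx => ((hsub hx).1).1
      have hdiffmem : B \ C' ∈ ℬ := sf_diff hBf hBm hC'
      have hval : Q (B \ C') K = Q B K - Q C' K := fap_diff hBf hfap hC' hBm hsub2
      have hsup : B ∩ Fᶜ ∩ K ⊆ B \ C' := by
        rintro x ⟨⟨hxB, hxFc⟩, -⟩
        exact ⟨hxB, fun hxC => hxFc ((hsub hxC).1).2⟩
      calc outE ℬ Q K (B ∩ Fᶜ ∩ K) ≤ Q (B \ C') K :=
            csInf_le (outE_bddBelow hfap _) ⟨B \ C', hdiffmem, hsup, rfl⟩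
        _ = Q B K - Q C' K := hval
    have h2 : innE ℬ Q K (B ∩ F ∩ K) ≤ Q B K - outE ℬ Q K (B ∩ Fᶜ ∩ K) := by
      refine csSup_le (innE_setne hBf K _) ?_
      rintro x ⟨C', hC', hsub, rfl⟩
      have := hA C' hC' hsub
      linarith
    linarith
  · refine le_csInf ⟨Q Set.univ K, Set.univ, hBf.1, Set.subset_univ _, rfl⟩ ?_
    rintro x ⟨C, hC, hsup, rfl⟩
    set C' := (B ∩ K) \ C with hC'def
    have hC'mem : C' ∈ ℬ := sf_diff hBf (sf_inter hBf hBm (hAB hK)) hC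
    have hC'sub : C' ⊆ B ∩ F ∩ K := by
      rintro x ⟨⟨hxB, hxK⟩, hxC⟩
      by_cases hxF : x ∈ F
      · exact ⟨⟨hxB, hxF⟩, hxK⟩
      · exact absurd (hsup ⟨⟨hxB, hxF⟩, hxK⟩) hxC
    have hinn : Q C' K ≤ innE ℬ Q K (B ∩ F ∩ K) := innE_le hfap hC'mem hC'sub
    have hsplit : Q (B ∩ K) K = Q (C ∩ (B ∩ K)) K + Q C' K := by
      have hdisj : Disjoint (C ∩ (B ∩ K)) C' := by
        rw [Set.disjoint_left]; rintro x ⟨hxC, -⟩ ⟨-, hxC'⟩; exact hxC' hxC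
      have hu : (C ∩ (B ∩ K)) ∪ C' = B ∩ K := by
        ext x; by_cases hx : x ∈ C <;> simp [hC'def, hx] <;> tauto
      have := hfap.2.2 _ (sf_inter hBf hC (sf_inter hBf hBm (hAB hK))) _ hC'mem hdisj
      simp only at this
      rw [hu] at this
      exact this
    have hmono : Q (C ∩ (B ∩ K)) K ≤ Q C K :=
      fap_mono hBf hfap (sf_inter hBf hC (sf_inter hBf hBm (hAB hK))) hC
        (Set.inter_subset_left)
    have hBK : Q B K = Q (B ∩ K) K := hC1 B hBm K hK hKne
    linarith

theorem ext1_eq_on (h : PartExt 𝒜 P ℬ Q) {K : Set Ω} (hK : K ∈ 𝒜) (hKne : K.Nonempty)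
    {B : Set Ω} (hBm : B ∈ ℬ) : ext1 ℬ Q F B K = Q B K := by
  unfold ext1
  rw [outE_rep h hK hKne hBm]
  ring

theorem ext1_inter_K {E K : Set Ω} : ext1 ℬ Q F E K = ext1 ℬ Q F (E ∩ K) K := by
  unfold ext1
  have h1 : E ∩ K ∩ F ∩ K = E ∩ F ∩ K := by ext x; simp; tauto
  have h2 : E ∩ K ∩ Fᶜ ∩ K = E ∩ Fᶜ ∩ K := by ext x; simp; tauto
  rw [h1, h2]

theorem ext1_add (h : PartExt 𝒜 P ℬ Q) {K : Set Ω} (hK : K ∈ 𝒜) (hKne : K.Nonempty)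
    {E₁ E₂ : Set Ω} (hE₁ : E₁ ∈ genF ℬ F) (hE₂ : E₂ ∈ genF ℬ F)
    (hd : Disjoint E₁ E₂) :
    ext1 ℬ Q F (E₁ ∪ E₂) K = ext1 ℬ Q F E₁ K + ext1 ℬ Q F E₂ K := by
  obtain ⟨hBf, hAB, hau, hC1, hC2, hC3x, hextx⟩ := h
  have h' : PartExt 𝒜 P ℬ Q := ⟨hBf, hAB, hau, hC1, hC2, hC3x, hextx⟩
  have hfap : IsFAP ℬ (fun E => Q E K) := hC2 K hK hKne
  have hdis : E₁ ∩ E₂ = ∅ := Set.disjoint_iff_inter_eq_empty.1 hd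
  obtain ⟨B₁, hB₁, hBe₁⟩ := genF_partF hE₁
  obtain ⟨B₂, hB₂, hBe₂⟩ := genF_partF hE₂
  obtain ⟨D₁, hD₁, hDe₁⟩ := genF_partFc hE₁
  obtain ⟨D₂, hD₂, hDe₂⟩ := genF_partFc hE₂
  set D₂' : Set Ω := D₂ \ D₁ with hD₂'def
  have hD₂' : D₂' ∈ ℬ := sf_diff hBf hD₂ hD₁
  have he2 : E₂ ∩ Fᶜ = D₂' ∩ Fᶜ := by
    ext x
    constructor
    · rintro ⟨hxE, hxF⟩
      have hx2 : x ∈ D₂ := by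
        have := (Set.ext_iff.1 hDe₂ x).1 ⟨hxE, hxF⟩; exact this.1
      have hx1 : x ∉ D₁ := by
        intro hxD₁
        have : x ∈ E₁ := ((Set.ext_iff.1 hDe₁ x).2 ⟨hxD₁, hxF⟩).1
        have : x ∈ E₁ ∩ E₂ := ⟨this, hxE⟩
        rw [hdis] at this; exact this
      exact ⟨⟨hx2, hx1⟩, hxF⟩
    · rintro ⟨⟨hxD2, hxD1⟩, hxF⟩
      exact ⟨((Set.ext_iff.1 hDe₂ x).2 ⟨hxD2, hxF⟩).1, hxF⟩
  have he1 : E₁ ∩ Fᶜ = D₁ ∩ Fᶜ := hDe₁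
  -- inner part
  have hsi : (E₁ ∪ E₂) ∩ F ∩ K = (B₁ ∩ F ∩ K) ∪ (B₂ ∩ F ∩ K) := by
    have p1 := Set.ext_iff.1 hBe₁
    have p2 := Set.ext_iff.1 hBe₂
    ext x
    have q1 := p1 x; have q2 := p2 x
    simp only [Set.mem_inter_iff, Set.mem_union] at *
    tauto
  have hs1 : E₁ ∩ F ∩ K = B₁ ∩ F ∩ K := by
    have p1 := Set.ext_iff.1 hBe₁
    ext x; have q1 := p1 x
    simp only [Set.mem_inter_iff] at *
    tauto
  have hs2 : E₂ ∩ F ∩ K = B₂ ∩ F ∩ K := by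
    have p2 := Set.ext_iff.1 hBe₂
    ext x; have q2 := p2 x
    simp only [Set.mem_inter_iff] at *
    tauto
  have hdisjB : (B₁ ∩ F ∩ K) ∩ (B₂ ∩ F ∩ K) = ∅ := by
    rw [← hs1, ← hs2]
    rw [Set.eq_empty_iff_forall_notMem]
    rintro x ⟨⟨⟨h1, -⟩, -⟩, ⟨⟨h2, -⟩, -⟩⟩
    have : x ∈ E₁ ∩ E₂ := ⟨h1, h2⟩
    rw [hdis] at this; exact this
  have hinn : innE ℬ Q K ((E₁ ∪ E₂) ∩ F ∩ K) =
      innE ℬ Q K (E₁ ∩ F ∩ K) + innE ℬ Q K (E₂ ∩ F ∩ K) := by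
    rw [hsi, hs1, hs2]
    exact innE_add hBf hfap hB₁ hB₂ hdisjB
  -- outer part
  have hso : (E₁ ∪ E₂) ∩ Fᶜ ∩ K = (D₁ ∪ D₂') ∩ Fᶜ ∩ K := by
    have p1 := Set.ext_iff.1 he1
    have p2 := Set.ext_iff.1 he2
    ext x
    have q1 := p1 x; have q2 := p2 x
    simp only [Set.mem_inter_iff, Set.mem_union, Set.mem_compl_iff] at *
    tauto
  have ho1 : E₁ ∩ Fᶜ ∩ K = D₁ ∩ Fᶜ ∩ K := by
    have p1 := Set.ext_iff.1 he1
    ext x; have q1 := p1 x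
    simp only [Set.mem_inter_iff] at *
    tauto
  have ho2 : E₂ ∩ Fᶜ ∩ K = D₂' ∩ Fᶜ ∩ K := by
    have p2 := Set.ext_iff.1 he2
    ext x; have q2 := p2 x
    simp only [Set.mem_inter_iff] at *
    tauto
  have hdisjD : Disjoint D₁ D₂' := by
    rw [Set.disjoint_left]; rintro x hx ⟨-, hx'⟩; exact hx' hx
  have hQadd : Q (D₁ ∪ D₂') K = Q D₁ K + Q D₂' K := hfap.2.2 _ hD₁ _ hD₂' hdisjD
  have hdisjDF : (D₁ ∩ F ∩ K) ∩ (D₂' ∩ F ∩ K) = ∅ := by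
    rw [Set.eq_empty_iff_forall_notMem]
    rintro x ⟨⟨⟨h1, -⟩, -⟩, ⟨⟨-, h2⟩, -⟩, -⟩
    exact h2 h1
  have hiDD : innE ℬ Q K ((D₁ ∪ D₂') ∩ F ∩ K) =
      innE ℬ Q K (D₁ ∩ F ∩ K) + innE ℬ Q K (D₂' ∩ F ∩ K) := by
    have hu : (D₁ ∪ D₂') ∩ F ∩ K = (D₁ ∩ F ∩ K) ∪ (D₂' ∩ F ∩ K) := by
      ext x; simp only [Set.mem_inter_iff, Set.mem_union]; tauto
    rw [hu]
    exact innE_add hBf hfap hD₁ hD₂' hdisjDF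
  have hout : outE ℬ Q K ((E₁ ∪ E₂) ∩ Fᶜ ∩ K) =
      outE ℬ Q K (E₁ ∩ Fᶜ ∩ K) + outE ℬ Q K (E₂ ∩ Fᶜ ∩ K) := by
    rw [hso, ho1, ho2]
    rw [outE_rep h' hK hKne (hBf.2.2 _ hD₁ _ hD₂'), outE_rep h' hK hKne hD₁,
      outE_rep h' hK hKne hD₂', hQadd, hiDD]
    ring
  unfold ext1
  rw [hinn, hout]
  ring

theorem ext1_nonneg (hBf : IsSetField ℬ) (hfap : IsFAP ℬ (fun E => Q E K)) (E : Set Ω) :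
    0 ≤ ext1 ℬ Q F E K := by
  have h1 := innE_nonneg hBf hfap (E ∩ F ∩ K)
  have h2 := outE_nonneg hBf hfap (E ∩ Fᶜ ∩ K)
  unfold ext1; linarith

theorem ext1_univ (h : PartExt 𝒜 P ℬ Q) {K : Set Ω} (hK : K ∈ 𝒜) (hKne : K.Nonempty) :
    ext1 ℬ Q F Set.univ K = 1 := by
  rw [ext1_eq_on h hK hKne h.1.1]
  exact (h.2.2.2.2.1 K hK hKne).2.1

theorem ext1_le_one (h : PartExt 𝒜 P ℬ Q) {K : Set Ω} (hK : K ∈ 𝒜) (hKne : K.Nonempty)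
    {E : Set Ω} (hE : E ∈ genF ℬ F) : ext1 ℬ Q F E K ≤ 1 := by
  have hEc : Eᶜ ∈ genF ℬ F := (genF_field h.1).2.1 E hE
  have hd : Disjoint E Eᶜ := disjoint_compl_right
  have hadd := ext1_add h hK hKne hE hEc hd
  rw [Set.union_compl_self] at hadd
  rw [ext1_univ h hK hKne] at hadd
  have := ext1_nonneg (F := F) (E := Eᶜ) h.1 (h.2.2.2.2.1 K hK hKne)
  linarith

/-- Conditional scaling of the inner value. -/
theorem innE_scale (h : PartExt 𝒜 P ℬ Q) {K : Set Ω} (hK : K ∈ 𝒜) (hKne : K.Nonempty)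
    {D : Set Ω} (hD : D ∈ 𝒜) (hDne : D.Nonempty) (hDK : D ⊆ K) {S : Set Ω} (hS : S ⊆ D) :
    innE ℬ Q K S = Q D K * innE ℬ Q D S := by
  obtain ⟨hBf, hAB, -, hC1, hC2, hC3, -⟩ := h
  have hfapK : IsFAP ℬ (fun E => Q E K) := hC2 K hK hKne
  have hfapD : IsFAP ℬ (fun E => Q E D) := hC2 D hD hDne
  have hDB : D ∈ ℬ := hAB hD
  have hDKD : D ∩ K = D := Set.inter_eq_self_of_subset_left hDK
  have hQC : ∀ C ∈ ℬ, C ⊆ S → Q C K = Q D K * Q C D := by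
    intro C hC hCS
    have h3 := hC3 D hDB C hC K hK hKne (by rw [hDKD]; exact hD) (by rw [hDKD]; exact hDne)
    rw [hDKD] at h3
    have hDC : D ∩ C = C := Set.inter_eq_self_of_subset_right (hCS.trans hS)
    rw [hDC] at h3
    exact h3
  have hQDnn : 0 ≤ Q D K := fap_nonneg hfapK hDB
  refine le_antisymm ?_ ?_
  · refine csSup_le (innE_setne hBf K S) ?_
    rintro x ⟨C, hC, hCS, rfl⟩
    rw [hQC C hC hCS]
    exact mul_le_mul_of_nonneg_left (innE_le hfapD hC hCS) hQDnn
  · rcases eq_or_lt_of_le hQDnn with hz | hpos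
    · rw [← hz, zero_mul]
      exact innE_nonneg hBf hfapK S
    · have hdiv : innE ℬ Q D S ≤ innE ℬ Q K S / Q D K := by
        refine csSup_le (innE_setne hBf D S) ?_
        rintro x ⟨C, hC, hCS, rfl⟩
        rw [le_div_iff₀ hpos, mul_comm]
        rw [← hQC C hC hCS]
        exact innE_le hfapK hC hCS
      calc Q D K * innE ℬ Q D S ≤ Q D K * (innE ℬ Q K S / Q D K) :=
            mul_le_mul_of_nonneg_left hdiv hQDnn
        _ = innE ℬ Q K S := by field_simp

theorem outE_scale (h : PartExt 𝒜 P ℬ Q) {K : Set Ω} (hK : K ∈ 𝒜) (hKne : K.Nonempty)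
    {D : Set Ω} (hD : D ∈ 𝒜) (hDne : D.Nonempty) (hDK : D ⊆ K) {C₂ : Set Ω} (hC₂ : C₂ ∈ ℬ) :
    outE ℬ Q K (D ∩ C₂ ∩ Fᶜ) = Q D K * outE ℬ Q D (D ∩ C₂ ∩ Fᶜ) := by
  obtain ⟨hBf, hAB, hau, hC1, hC2x, hC3, hex⟩ := h
  have h' : PartExt 𝒜 P ℬ Q := ⟨hBf, hAB, hau, hC1, hC2x, hC3, hex⟩
  have hDB : D ∈ ℬ := hAB hD
  have hDC₂ : D ∩ C₂ ∈ ℬ := sf_inter hBf hDB hC₂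
  have hDKD : D ∩ K = D := Set.inter_eq_self_of_subset_left hDK
  have e1 : (D ∩ C₂) ∩ Fᶜ ∩ K = D ∩ C₂ ∩ Fᶜ := by
    ext x; simp only [Set.mem_inter_iff, Set.mem_compl_iff]
    constructor
    · rintro ⟨a, -⟩; exact a
    · rintro ⟨⟨hxD, hxC⟩, hxF⟩; exact ⟨⟨⟨hxD, hxC⟩, hxF⟩, hDK hxD⟩
  have e2 : (D ∩ C₂) ∩ Fᶜ ∩ D = D ∩ C₂ ∩ Fᶜ := by
    ext x; simp only [Set.mem_inter_iff, Set.mem_compl_iff]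
    tauto
  have e3 : (D ∩ C₂) ∩ F ∩ K = D ∩ C₂ ∩ F := by
    ext x; simp only [Set.mem_inter_iff]
    constructor
    · rintro ⟨a, -⟩; exact a
    · rintro ⟨⟨hxD, hxC⟩, hxF⟩; exact ⟨⟨⟨hxD, hxC⟩, hxF⟩, hDK hxD⟩
  have e4 : (D ∩ C₂) ∩ F ∩ D = D ∩ C₂ ∩ F := by
    ext x; simp only [Set.mem_inter_iff]
    tauto
  have r1 := outE_rep (F := F) h' hK hKne hDC₂
  rw [e1, e3] at r1
  have r2 := outE_rep (F := F) h' hD hDne hDC₂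
  rw [e2, e4] at r2
  have hmul : Q (D ∩ C₂) K = Q D K * Q (D ∩ C₂) D := by
    have h3 := hC3 D hDB C₂ hC₂ K hK hKne (by rw [hDKD]; exact hD) (by rw [hDKD]; exact hDne)
    rw [hDKD] at h3
    have hcc : Q C₂ D = Q (C₂ ∩ D) D := hC1 C₂ hC₂ D hD hDne
    have hcd : C₂ ∩ D = D ∩ C₂ := Set.inter_comm _ _
    rw [hcc, hcd] at h3
    exact h3
  have hscale : innE ℬ Q K (D ∩ C₂ ∩ F) = Q D K * innE ℬ Q D (D ∩ C₂ ∩ F) :=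
    innE_scale h' hK hKne hD hDne hDK
      (by rintro x ⟨⟨hxD, -⟩, -⟩; exact hxD)
  rw [r1, r2, hmul, hscale]
  ring

theorem ext1_C3 (h : PartExt 𝒜 P ℬ Q) {K : Set Ω} (hK : K ∈ 𝒜) (hKne : K.Nonempty)
    {E G : Set Ω} (hE : E ∈ genF ℬ F) (hG : G ∈ genF ℬ F)
    (hEK : E ∩ K ∈ 𝒜) (hEKne : (E ∩ K).Nonempty) :
    ext1 ℬ Q F (E ∩ G) K = ext1 ℬ Q F E K * ext1 ℬ Q F G (E ∩ K) := by
  set D := E ∩ K with hDdef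
  have hDK : D ⊆ K := Set.inter_subset_right
  obtain ⟨C₁, hC₁, hGF⟩ := genF_partF hG
  obtain ⟨C₂, hC₂, hGFc⟩ := genF_partFc hG
  have p1 := Set.ext_iff.1 hGF
  have p2 := Set.ext_iff.1 hGFc
  have s1 : (E ∩ G) ∩ F ∩ K = D ∩ C₁ ∩ F := by
    rw [hDdef]; ext x; have q1 := p1 x
    simp only [Set.mem_inter_iff] at *
    tauto
  have s2 : (E ∩ G) ∩ Fᶜ ∩ K = D ∩ C₂ ∩ Fᶜ := by
    rw [hDdef]; ext x; have q2 := p2 x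
    simp only [Set.mem_inter_iff, Set.mem_compl_iff] at *
    tauto
  have s3 : G ∩ F ∩ D = D ∩ C₁ ∩ F := by
    rw [hDdef]; ext x; have q1 := p1 x
    simp only [Set.mem_inter_iff] at *
    tauto
  have s4 : G ∩ Fᶜ ∩ D = D ∩ C₂ ∩ Fᶜ := by
    rw [hDdef]; ext x; have q2 := p2 x
    simp only [Set.mem_inter_iff, Set.mem_compl_iff] at *
    tauto
  have hEval : ext1 ℬ Q F E K = Q D K := by
    rw [ext1_inter_K (E := E)]
    exact ext1_eq_on h hK hKne (h.2.1 hEK)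
  have hinn : innE ℬ Q K (D ∩ C₁ ∩ F) = Q D K * innE ℬ Q D (D ∩ C₁ ∩ F) :=
    innE_scale h hK hKne hEK hEKne hDK (by rintro x ⟨⟨hxD, -⟩, -⟩; exact hxD)
  have hout : outE ℬ Q K (D ∩ C₂ ∩ Fᶜ) = Q D K * outE ℬ Q D (D ∩ C₂ ∩ Fᶜ) :=
    outE_scale h hK hKne hEK hEKne hDK hC₂
  show innE ℬ Q K ((E ∩ G) ∩ F ∩ K) + outE ℬ Q K ((E ∩ G) ∩ Fᶜ ∩ K) =
    ext1 ℬ Q F E K * (innE ℬ Q D (G ∩ F ∩ D) + outE ℬ Q D (G ∩ Fᶜ ∩ D))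
  rw [s1, s2, s3, s4, hEval, hinn, hout]
  ring

/-- The one-step extension is again a partial extension. -/
theorem ext1_partExt (h : PartExt 𝒜 P ℬ Q) (hF : F ∈ atomUnions 𝒜) :
    PartExt 𝒜 P (genF ℬ F) (ext1 ℬ Q F) := by
  obtain ⟨hBf, hAB, hau, hC1, hC2, hC3, hex⟩ := h
  have h' : PartExt 𝒜 P ℬ Q := ⟨hBf, hAB, hau, hC1, hC2, hC3, hex⟩
  refine ⟨genF_field hBf, fun A hA => genF_superset (hAB hA), genF_sub_au hau hF,
    ?_, ?_, ?_, ?_⟩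
  · intro E _ K hK hKne
    exact ext1_inter_K
  · intro K hK hKne
    have hfap := hC2 K hK hKne
    refine ⟨fun E hE => ⟨ext1_nonneg hBf hfap E, ext1_le_one h' hK hKne hE⟩,
      ext1_univ h' hK hKne, ?_⟩
    intro A hA B hB hd
    exact ext1_add h' hK hKne hA hB hd
  · intro E hE G hG K hK hKne hEK hEKne
    exact ext1_C3 h' hK hKne hE hG hEK hEKne
  · intro E hE K hK hKne
    rw [ext1_eq_on h' hK hKne (hAB hE)]
    exact hex E hE K hK hKne

theorem ext1_val (h : PartExt 𝒜 P ℬ Q) {K : Set Ω} (hK : K ∈ 𝒜) (hKne : K.Nonempty) :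
    ext1 ℬ Q F F K = innE ℬ Q K (F ∩ K) := by
  have hfap := h.2.2.2.2.1 K hK hKne
  have e1 : F ∩ F ∩ K = F ∩ K := by rw [Set.inter_self]
  have e2 : F ∩ Fᶜ ∩ K = ∅ := by rw [Set.inter_compl_self, Set.empty_inter]
  show innE ℬ Q K (F ∩ F ∩ K) + outE ℬ Q K (F ∩ Fᶜ ∩ K) = innE ℬ Q K (F ∩ K)
  rw [e1, e2, outE_empty h.1 hfap, add_zero]

end OneStep

section Zorn
variable [Nonempty Ω] {𝒜 : Set (Set Ω)} {P : Set Ω → Set Ω → ℝ}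

/-- The graph of a partial extension. -/
def graphOf (𝒜 ℬ : Set (Set Ω)) (Q : Set Ω → Set Ω → ℝ) : Set ((Set Ω × Set Ω) × ℝ) :=
  {p | p.1.1 ∈ ℬ ∧ p.1.2 ∈ 𝒜 ∧ p.1.2.Nonempty ∧ p.2 = Q p.1.1 p.1.2}

theorem zorn_ext (h𝒜 : IsSetField 𝒜) {ℬ₀ : Set (Set Ω)} {Q₀ : Set Ω → Set Ω → ℝ}
    (h₀ : PartExt 𝒜 P ℬ₀ Q₀) :
    ∃ Qs : Set Ω → Set Ω → ℝ, PartExt 𝒜 P (atomUnions 𝒜) Qs ∧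
      ∀ F ∈ ℬ₀, ∀ K ∈ 𝒜, K.Nonempty → Qs F K = Q₀ F K := by
  classical
  set S : Set (Set ((Set Ω × Set Ω) × ℝ)) :=
    {g | ∃ ℬ Q, PartExt 𝒜 P ℬ Q ∧ g = graphOf 𝒜 ℬ Q} with hS
  have hchainUB : ∀ c ⊆ S, IsChain (· ⊆ ·) c → c.Nonempty →
      ∃ ub ∈ S, ∀ g ∈ c, g ⊆ ub := by
    intro c hcS hchain hcne
    have hch : ∀ g, ∃ ℬ Q, g ∈ c → PartExt 𝒜 P ℬ Q ∧ g = graphOf 𝒜 ℬ Q := by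
      intro g
      by_cases hg : g ∈ c
      · obtain ⟨ℬ, Q, h1, h2⟩ := hcS hg
        exact ⟨ℬ, Q, fun _ => ⟨h1, h2⟩⟩
      · exact ⟨∅, fun _ _ => 0, fun h => absurd h hg⟩
    choose ℬf Qf hf using hch
    set ℬs : Set (Set Ω) := {E | ∃ g ∈ c, E ∈ ℬf g} with hℬs
    set Qs : Set Ω → Set Ω → ℝ :=
      fun E K => if h : ∃ g, g ∈ c ∧ E ∈ ℬf g then Qf h.choose E K else P E K with hQs
    have hmemg : ∀ g ∈ c, ∀ E ∈ ℬf g, ∀ K ∈ 𝒜, K.Nonempty →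
        ((E, K), Qf g E K) ∈ g := by
      intro g hg E hE K hK hKne
      have h2 := (hf g hg).2
      nth_rewrite 1 [h2]
      exact ⟨hE, hK, hKne, rfl⟩
    have hvalg : ∀ g ∈ c, ∀ p ∈ g, p.1.1 ∈ ℬf g ∧ p.1.2 ∈ 𝒜 ∧ p.1.2.Nonempty ∧
        p.2 = Qf g p.1.1 p.1.2 := by
      intro g hg p hp
      rw [(hf g hg).2] at hp
      exact hp
    have hagree2 : ∀ g ∈ c, ∀ g' ∈ c, ∀ E ∈ ℬf g, ∀ K ∈ 𝒜, K.Nonempty →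
        E ∈ ℬf g' → Qf g E K = Qf g' E K := by
      intro g hg g' hg' E hE K hK hKne hE'
      rcases eq_or_ne g g' with rfl | hne
      · rfl
      · rcases hchain hg hg' hne with hsub | hsub
        · exact (hvalg g' hg' _ (hsub (hmemg g hg E hE K hK hKne))).2.2.2
        · exact ((hvalg g hg _ (hsub (hmemg g' hg' E hE' K hK hKne))).2.2.2).symm
    have hagree : ∀ g ∈ c, ∀ E ∈ ℬf g, ∀ K ∈ 𝒜, K.Nonempty → Qs E K = Qf g E K := by
      intro g hg E hE K hK hKne
      have hex : ∃ g', g' ∈ c ∧ E ∈ ℬf g' := ⟨g, hg, hE⟩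
      rw [hQs]
      simp only
      rw [dif_pos hex]
      exact hagree2 hex.choose hex.choose_spec.1 g hg E hex.choose_spec.2 K hK hKne hE
    have hdom : ∀ g ∈ c, ∀ g' ∈ c, g ⊆ g' → ℬf g ⊆ ℬf g' := by
      intro g hg g' hg' hsub E hE
      have := hmemg g hg E hE Set.univ h𝒜.1 Set.univ_nonempty
      exact (hvalg g' hg' _ (hsub this)).1
    have hdir : ∀ g ∈ c, ∀ g' ∈ c, ∃ g'' ∈ c, ℬf g ⊆ ℬf g'' ∧ ℬf g' ⊆ ℬf g'' := by
      intro g hg g' hg'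
      rcases eq_or_ne g g' with rfl | hne
      · exact ⟨g, hg, subset_rfl, subset_rfl⟩
      · rcases hchain hg hg' hne with hsub | hsub
        · exact ⟨g', hg', hdom g hg g' hg' hsub, subset_rfl⟩
        · exact ⟨g, hg, subset_rfl, hdom g' hg' g hg hsub⟩
    obtain ⟨g₁, hg₁⟩ := hcne
    have hPE : ∀ g ∈ c, PartExt 𝒜 P (ℬf g) (Qf g) := fun g hg => (hf g hg).1
    have hPEs : PartExt 𝒜 P ℬs Qs := by
      refine ⟨⟨⟨g₁, hg₁, (hPE g₁ hg₁).1.1⟩, ?_, ?_⟩, ?_, ?_, ?_, ?_, ?_, ?_⟩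
      · rintro A ⟨g, hg, hA⟩
        exact ⟨g, hg, (hPE g hg).1.2.1 A hA⟩
      · rintro A ⟨g, hg, hA⟩ B ⟨g', hg', hB⟩
        obtain ⟨g'', hg'', hs1, hs2⟩ := hdir g hg g' hg'
        exact ⟨g'', hg'', (hPE g'' hg'').1.2.2 A (hs1 hA) B (hs2 hB)⟩
      · intro A hA
        exact ⟨g₁, hg₁, (hPE g₁ hg₁).2.1 hA⟩
      · rintro A ⟨g, hg, hA⟩
        exact (hPE g hg).2.2.1 hA
      · rintro E ⟨g, hg, hE⟩ K hK hKne
        rw [hagree g hg E hE K hK hKne,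
          hagree g hg (E ∩ K) (sf_inter (hPE g hg).1 hE ((hPE g hg).2.1 hK)) K hK hKne]
        exact (hPE g hg).2.2.2.1 E hE K hK hKne
      · intro K hK hKne
        refine ⟨?_, ?_, ?_⟩
        · rintro A ⟨g, hg, hA⟩
          show 0 ≤ Qs A K ∧ Qs A K ≤ 1
          rw [hagree g hg A hA K hK hKne]
          exact ((hPE g hg).2.2.2.2.1 K hK hKne).1 A hA
        · have huniv : Set.univ ∈ ℬf g₁ := (hPE g₁ hg₁).1.1
          have := hagree g₁ hg₁ Set.univ huniv K hK hKne
          simp only at this ⊢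
          rw [this]
          exact ((hPE g₁ hg₁).2.2.2.2.1 K hK hKne).2.1
        · rintro A ⟨g, hg, hA⟩ B ⟨g', hg', hB⟩ hd
          obtain ⟨g'', hg'', hs1, hs2⟩ := hdir g hg g' hg'
          have hA'' := hs1 hA
          have hB'' := hs2 hB
          have hU'' : A ∪ B ∈ ℬf g'' := (hPE g'' hg'').1.2.2 A hA'' B hB''
          simp only
          rw [hagree g'' hg'' A hA'' K hK hKne, hagree g'' hg'' B hB'' K hK hKne,
            hagree g'' hg'' (A ∪ B) hU'' K hK hKne]
          exact ((hPE g'' hg'').2.2.2.2.1 K hK hKne).2.2 A hA'' B hB'' hd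
      · rintro E ⟨g, hg, hE⟩ G ⟨g', hg', hG⟩ K hK hKne hEK hEKne
        obtain ⟨g'', hg'', hs1, hs2⟩ := hdir g hg g' hg'
        have hE'' := hs1 hE
        have hG'' := hs2 hG
        have hEG'' : E ∩ G ∈ ℬf g'' := sf_inter (hPE g'' hg'').1 hE'' hG''
        rw [hagree g'' hg'' (E ∩ G) hEG'' K hK hKne, hagree g'' hg'' E hE'' K hK hKne,
          hagree g'' hg'' G hG'' (E ∩ K) hEK hEKne]
        exact (hPE g'' hg'').2.2.2.2.2.1 E hE'' G hG'' K hK hKne hEK hEKne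
      · intro E hE K hK hKne
        have hEg : E ∈ ℬf g₁ := (hPE g₁ hg₁).2.1 hE
        rw [hagree g₁ hg₁ E hEg K hK hKne]
        exact (hPE g₁ hg₁).2.2.2.2.2.2 E hE K hK hKne
    refine ⟨graphOf 𝒜 ℬs Qs, ⟨ℬs, Qs, hPEs, rfl⟩, ?_⟩
    intro g hg p hp
    obtain ⟨h1, h2, h3, h4⟩ := hvalg g hg p hp
    refine ⟨⟨g, hg, h1⟩, h2, h3, ?_⟩
    rw [h4]
    exact (hagree g hg p.1.1 h1 p.1.2 h2 h3).symm
  obtain ⟨m, hm₀, hmax⟩ := zorn_subset_nonempty S hchainUB (graphOf 𝒜 ℬ₀ Q₀)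
    ⟨ℬ₀, Q₀, h₀, rfl⟩
  obtain ⟨ℬm, Qm, hPEm, rfl⟩ := hmax.1
  have hBm : ℬm = atomUnions 𝒜 := by
    refine subset_antisymm hPEm.2.2.1 ?_
    intro F hF
    by_contra hFm
    have hg' : graphOf 𝒜 (genF ℬm F) (ext1 ℬm Qm F) ∈ S :=
      ⟨_, _, ext1_partExt hPEm hF, rfl⟩
    have hsub : graphOf 𝒜 ℬm Qm ⊆ graphOf 𝒜 (genF ℬm F) (ext1 ℬm Qm F) := by
      rintro p ⟨h1, h2, h3, h4⟩
      refine ⟨genF_superset h1, h2, h3, ?_⟩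
      rw [h4, ext1_eq_on hPEm h2 h3 h1]
    have hred := hmax.2 hg' hsub
    have hmem : ((F, Set.univ), ext1 ℬm Qm F F Set.univ) ∈
        graphOf 𝒜 (genF ℬm F) (ext1 ℬm Qm F) :=
      ⟨genF_memF hPEm.1, h𝒜.1, Set.univ_nonempty, rfl⟩
    exact hFm (hred hmem).1
  rw [hBm] at hPEm
  refine ⟨Qm, hPEm, ?_⟩
  intro F hF K hK hKne
  have : ((F, K), Q₀ F K) ∈ graphOf 𝒜 ℬ₀ Q₀ := ⟨hF, hK, hKne, rfl⟩
  exact ((hm₀ this).2.2.2).symm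

end Zorn

theorem au_biInter_fin {𝒜 : Set (Set Ω)} {n : ℕ} (s : Finset (Fin n)) {A : Fin n → Set Ω}
    (h : ∀ i, A i ∈ atomUnions 𝒜) : (⋂ i ∈ s, A i) ∈ atomUnions 𝒜 := by
  intro x hx y hxy
  rw [Set.mem_iInter₂] at hx ⊢
  intro i hi
  exact h i x (hx i hi) y hxy

theorem au_iUnion_fin {𝒜 : Set (Set Ω)} {n : ℕ} {A : Fin n → Set Ω}
    (h : ∀ i, A i ∈ atomUnions 𝒜) : (⋃ i, A i) ∈ atomUnions 𝒜 := by
  intro x hx y hxy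
  rw [Set.mem_iUnion] at hx ⊢
  obtain ⟨i, hi⟩ := hx
  exact ⟨i, h i x hi y hxy⟩


theorem innE_def (ℬ : Set (Set Ω)) (Q : Set Ω → Set Ω → ℝ) (K S : Set Ω) :
    innE ℬ Q K S = sSup {x | ∃ C ∈ ℬ, C ⊆ S ∧ x = Q C K} := rfl

end St18

open St18 in
/-- the lower envelope of the extensions of a full conditional probability
`P` on `𝒜` to `⟨𝒜⟩* × 𝒜⁰` is, on each conditioning event, the inner measure induced by
`P(·|K)`, hence a totally monotone capacity on `⟨𝒜⟩*`. -/
theorem statement18 {Ω : Type*} [Nonempty Ω] (𝒜 : Set (Set Ω)) (h𝒜 : IsSetField 𝒜)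
    (P : Set Ω → Set Ω → ℝ) (hP : IsFCP 𝒜 P) :
    (condExtSet 𝒜 P).Nonempty ∧
    ∀ K ∈ 𝒜, K.Nonempty →
      (∀ F ∈ atomUnions 𝒜,
        sInf ((fun Q => Q F K) '' condExtSet 𝒜 P) =
          sSup {x | ∃ B ∈ 𝒜, B ⊆ F ∧ x = P B K}) ∧
      IsCapacity (atomUnions 𝒜) (fun F => sInf ((fun Q => Q F K) '' condExtSet 𝒜 P)) ∧
      TotallyMonotone (atomUnions 𝒜)
        (fun F => sInf ((fun Q => Q F K) '' condExtSet 𝒜 P)) := by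
  classical
  have hbase : PartExt 𝒜 P 𝒜 P := by
    refine ⟨h𝒜, subset_rfl, au_superset, hP.1, hP.2.1, ?_, ?_⟩
    · intro E hE G hG K hK hKne _ hEKne
      exact hP.2.2 E hE G hG K hK hKne hEKne
    · intro E _ K _ _; rfl
  have toCond : ∀ Q : Set Ω → Set Ω → ℝ, PartExt 𝒜 P (atomUnions 𝒜) Q →
      Q ∈ condExtSet 𝒜 P := by
    rintro Q ⟨-, -, -, c1, c2, c3, ce⟩
    exact ⟨c1, c2, c3, ce⟩
  obtain ⟨Q₀, hQ₀, -⟩ := zorn_ext h𝒜 hbase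
  have hne : (condExtSet 𝒜 P).Nonempty := ⟨Q₀, toCond Q₀ hQ₀⟩
  refine ⟨hne, ?_⟩
  intro K hK hKne
  have hPfapK : IsFAP 𝒜 (fun E => P E K) := hP.2.1 K hK hKne
  have hP0 : P ∅ K = 0 := fap_empty h𝒜 hPfapK
  have hs2ne : ∀ G : Set Ω, {x | ∃ B ∈ 𝒜, B ⊆ G ∧ x = P B K}.Nonempty :=
    fun G => ⟨P ∅ K, ∅, sf_empty h𝒜, Set.empty_subset G, rfl⟩
  have hs2bdd : ∀ G : Set Ω, BddAbove {x | ∃ B ∈ 𝒜, B ⊆ G ∧ x = P B K} := by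
    intro G; refine ⟨1, ?_⟩; rintro x ⟨B, hB, -, rfl⟩; exact fap_le_one hPfapK hB
  have himgne : ∀ G : Set Ω, ((fun Q => Q G K) '' condExtSet 𝒜 P).Nonempty :=
    fun G => hne.image _
  have himgbdd : ∀ G ∈ atomUnions 𝒜, BddBelow ((fun Q => Q G K) '' condExtSet 𝒜 P) := by
    intro G hG
    refine ⟨0, ?_⟩
    rintro y ⟨Q, hQ, rfl⟩
    exact fap_nonneg (hQ.2.1 K hK hKne) hG
  have hform : ∀ F ∈ atomUnions 𝒜,
      sInf ((fun Q => Q F K) '' condExtSet 𝒜 P) =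
        sSup {x | ∃ B ∈ 𝒜, B ⊆ F ∧ x = P B K} := by
    intro F hF
    have hgeq : sSup {x | ∃ B ∈ 𝒜, B ⊆ F ∧ x = P B K} ≤
        sInf ((fun Q => Q F K) '' condExtSet 𝒜 P) := by
      refine le_csInf (himgne F) ?_
      rintro y ⟨Q, hQ, rfl⟩
      refine csSup_le (hs2ne F) ?_
      rintro x ⟨B, hB, hBF, rfl⟩
      have hBQ : P B K = Q B K := (hQ.2.2.2 B hB K hK hKne).symm
      rw [hBQ]
      exact fap_mono (au_field 𝒜) (hQ.2.1 K hK hKne) (au_superset hB) hF hBF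
    have hone := ext1_partExt hbase hF
    obtain ⟨Qs, hQs, hQsval⟩ := zorn_ext h𝒜 hone
    have hval : Qs F K = innE 𝒜 P K (F ∩ K) := by
      rw [hQsval F (genF_memF h𝒜) K hK hKne]
      exact ext1_val hbase hK hKne
    have hinnval : innE 𝒜 P K (F ∩ K) = sSup {x | ∃ B ∈ 𝒜, B ⊆ F ∧ x = P B K} := by
      rw [innE_def]
      congr 1
      ext x
      constructor
      · rintro ⟨C, hC, hCs, rfl⟩
        exact ⟨C, hC, fun y hy => (hCs hy).1, rfl⟩
      · rintro ⟨B, hB, hBF, rfl⟩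
        exact ⟨B ∩ K, sf_inter h𝒜 hB hK, fun y hy => ⟨hBF hy.1, hy.2⟩,
          hP.1 B hB K hK hKne⟩
    have hmem : Qs F K ∈ (fun Q => Q F K) '' condExtSet 𝒜 P := ⟨Qs, toCond _ hQs, rfl⟩
    have hle : sInf ((fun Q => Q F K) '' condExtSet 𝒜 P) ≤
        sSup {x | ∃ B ∈ 𝒜, B ⊆ F ∧ x = P B K} := by
      calc sInf ((fun Q => Q F K) '' condExtSet 𝒜 P) ≤ Qs F K :=
            csInf_le (himgbdd F hF) hmem
        _ = _ := hval.trans hinnval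
    exact le_antisymm hle hgeq
  refine ⟨hform, ⟨?_, ?_, ?_, ?_⟩, ?_⟩
  · show sInf ((fun Q => Q ∅ K) '' condExtSet 𝒜 P) = 0
    have himg : ((fun Q => Q ∅ K) '' condExtSet 𝒜 P) = {0} := by
      apply subset_antisymm
      · rintro y ⟨Q, hQ, rfl⟩
        simp only [Set.mem_singleton_iff]
        exact fap_empty (au_field 𝒜) (hQ.2.1 K hK hKne)
      · rintro y rfl
        obtain ⟨Q, hQ⟩ := hne
        exact ⟨Q, hQ, fap_empty (au_field 𝒜) (hQ.2.1 K hK hKne)⟩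
    rw [himg, csInf_singleton]
  · show sInf ((fun Q => Q Set.univ K) '' condExtSet 𝒜 P) = 1
    have himg : ((fun Q => Q Set.univ K) '' condExtSet 𝒜 P) = {1} := by
      apply subset_antisymm
      · rintro y ⟨Q, hQ, rfl⟩
        simp only [Set.mem_singleton_iff]
        exact (hQ.2.1 K hK hKne).2.1
      · rintro y rfl
        obtain ⟨Q, hQ⟩ := hne
        exact ⟨Q, hQ, (hQ.2.1 K hK hKne).2.1⟩
    rw [himg, csInf_singleton]
  · intro A hA
    beta_reduce
    rw [hform A hA]
    constructor
    · exact le_csSup (hs2bdd A) ⟨∅, sf_empty h𝒜, Set.empty_subset A, hP0.symm⟩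
    · refine csSup_le (hs2ne A) ?_
      rintro x ⟨B, hB, -, rfl⟩
      exact fap_le_one hPfapK hB
  · intro A hA B hB hAB
    beta_reduce
    rw [hform A hA, hform B hB]
    refine csSup_le (hs2ne A) ?_
    rintro x ⟨C, hC, hCA, rfl⟩
    exact le_csSup (hs2bdd B) ⟨C, hC, hCA.trans hAB, rfl⟩
  · intro n _ A hA
    beta_reduce
    have hrw : ∀ s ∈ Finset.univ.powerset.filter (fun s : Finset (Fin n) => s.Nonempty),
        (-1 : ℝ) ^ (s.card - 1) * sInf ((fun Q => Q (⋂ i ∈ s, A i) K) '' condExtSet 𝒜 P)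
          = (-1 : ℝ) ^ (s.card - 1) *
              sSup {x | ∃ B ∈ 𝒜, B ⊆ (⋂ i ∈ s, A i) ∧ x = P B K} := by
      intro s _
      rw [hform _ (au_biInter_fin s hA)]
    calc ∑ s ∈ Finset.univ.powerset.filter (fun s : Finset (Fin n) => s.Nonempty),
          (-1 : ℝ) ^ (s.card - 1) * sInf ((fun Q => Q (⋂ i ∈ s, A i) K) '' condExtSet 𝒜 P)
        = ∑ s ∈ Finset.univ.powerset.filter (fun s : Finset (Fin n) => s.Nonempty),
          (-1 : ℝ) ^ (s.card - 1) *
            sSup {x | ∃ B ∈ 𝒜, B ⊆ (⋂ i ∈ s, A i) ∧ x = P B K} :=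
          Finset.sum_congr rfl hrw
      _ ≤ sSup {x | ∃ B ∈ 𝒜, B ⊆ (⋃ i, A i) ∧ x = P B K} := innM_TM h𝒜 hPfapK n A
      _ = sInf ((fun Q => Q (⋃ i, A i) K) '' condExtSet 𝒜 P) :=
          (hform _ (au_iUnion_fin hA)).symm
end
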